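/- arXiv:2209.14880 — 3 statements merged into one kernel-verified Lean document; each statement's English description precedes it below -/
import Mathlib

section
/- There exists ε₀ ∈ (0, π/6) such that for every ε ∈ (0, ε₀), every r₀ ∈ (1, √2), every pair of potentials v₂, v₃ satisfying assumptions (i₂)–(iii₂) and (i₃)–(iv₃), and every configuration C_n of n distinct points in ℝ² minimizing the energy F among all n-point configurations, the natural bond graph G_nat = (C_n, E_nat) of C_n is ε-regular, and moreover #N(x, E_nat) ≤ 4 for every x ∈ C_n. -/
open scoped Real

noncomputable section

abbrev Pt : Type := EuclideanSpace ℝ (Fin 2)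

/-- The clockwise angle in `[0, 2π)` between the vectors `u` and `v`. -/
noncomputable def cwAngle (u v : Pt) : ℝ :=
  let a := Complex.arg ((⟨u 0, u 1⟩ : ℂ) * (starRingEnd ℂ) (⟨v 0, v 1⟩ : ℂ))
  if a < 0 then a + 2 * π else a

/-- Assumptions (i₂)–(iii₂) on the two-body potential. -/
structure V2Hyp (ε r0 : ℝ) (v2 : ℝ → EReal) : Prop where
  eq_neg_one : v2 1 = -1
  ge_neg_one : ∀ r : ℝ, 0 ≤ r → -1 ≤ v2 r
  gt_neg_one : ∀ r : ℝ, 0 ≤ r → r ≠ 1 → -1 < v2 r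
  eq_zero : ∀ r : ℝ, r0 ≤ r → v2 r = 0
  repulsive : ∀ r : ℝ, 0 ≤ r → r ≤ 1 - ε → ((ε⁻¹ : ℝ) : EReal) < v2 r

/-- Assumptions (i₃)–(iv₃) on the three-body potential. -/
structure V3Hyp (ε : ℝ) (v3 : ℝ → ℝ) : Prop where
  symm : ∀ θ : ℝ, 0 ≤ θ → θ ≤ 2 * π → v3 θ = v3 (2 * π - θ)
  zero_pi_half : v3 (π / 2) = 0
  zero_pi : v3 π = 0
  zero_three_pi_half : v3 (3 * π / 2) = 0
  pos : ∀ θ : ℝ, 0 ≤ θ → θ ≤ 2 * π → θ ∉ ({π / 2, π, 3 * π / 2} : Set ℝ) → 0 < v3 θ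
  slope : ∀ θ ∈ Set.Icc (π - ε) (π + ε), 4 * (π / 6 - ε)⁻¹ * |θ - π| ≤ v3 θ
  slope_eq : ∀ θ ∈ Set.Icc (π - ε) (π + ε), v3 θ = 4 * (π / 6 - ε)⁻¹ * |θ - π| → θ = π
  large : ∀ θ : ℝ, 0 ≤ θ → θ ≤ 2 * π →
    θ ∉ Set.Icc (π / 2 - ε) (π / 2 + ε) ∪ Set.Icc (π - ε) (π + ε) ∪
        Set.Icc (3 * π / 2 - ε) (3 * π / 2 + ε) →
    4 / (1 - ε) ^ 2 * (Real.sqrt 2 + 1 / 2) ^ 2 < v3 θ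

/-- The configurational energy `F(C_n)`. -/
noncomputable def energy (r0 : ℝ) (v2 : ℝ → EReal) (v3 : ℝ → ℝ) {n : ℕ}
    (x : Fin n → Pt) : EReal :=
  ((1 / 2 : ℝ) : EReal) *
      ∑ i : Fin n, ∑ j : Fin n, (if j ≠ i then v2 (dist (x i) (x j)) else 0)
    + (((1 / 2 : ℝ) * ∑ i : Fin n, ∑ j : Fin n, ∑ k : Fin n,
        (if i ≠ j ∧ i ≠ k ∧ j ≠ k ∧ dist (x i) (x j) ≤ r0 ∧ dist (x i) (x k) ≤ r0
          then v3 (cwAngle (x j - x i) (x k - x i)) else 0) : ℝ) : EReal)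

/-- `x` is an `n`-point configuration of minimal energy. -/
def IsMinimizer (r0 : ℝ) (v2 : ℝ → EReal) (v3 : ℝ → ℝ) {n : ℕ} (x : Fin n → Pt) : Prop :=
  Function.Injective x ∧
    ∀ y : Fin n → Pt, Function.Injective y → energy r0 v2 v3 x ≤ energy r0 v2 v3 y


structure BondGraph where
  V : Set Pt
  finV : V.Finite
  E : Set (Sym2 Pt)
  not_diag : ∀ e ∈ E, ¬ e.IsDiag
  mem_V : ∀ e ∈ E, ∀ x ∈ e, x ∈ V

/-- The neighborhood `N(x, E)`. -/
def nbhd (G : BondGraph) (x : Pt) : Set Pt := {y | s(x, y) ∈ G.E}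

/-- The degree `#N(x, E)`. -/
noncomputable def deg (G : BondGraph) (x : Pt) : ℕ := (nbhd G x).ncard

/-- The bond energy `F_bond(G) = Σ_{x ∈ V} (4 − #N(x,E))`. -/
noncomputable def Fbond (G : BondGraph) : ℤ := ∑ᶠ x ∈ G.V, ((4 : ℤ) - (deg G x : ℤ))

def goodAngles (ε : ℝ) : Set ℝ :=
  Set.Icc (π / 2 - ε) (π / 2 + ε) ∪ Set.Icc (π - ε) (π + ε) ∪
    Set.Icc (3 * π / 2 - ε) (3 * π / 2 + ε)

/-- `ε`-regularity of a graph. -/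
def EpsRegular (ε : ℝ) (G : BondGraph) : Prop :=
  (∀ x y : Pt, s(x, y) ∈ G.E → 1 - ε ≤ dist x y) ∧
  (∀ x y z : Pt, s(x, y) ∈ G.E → s(z, y) ∈ G.E → x ≠ z →
    cwAngle (x - y) (z - y) ∈ goodAngles ε)

/-- The natural bond graph of a configuration. -/
noncomputable def natGraph {n : ℕ} (r0 : ℝ) (x : Fin n → Pt)
    (hx : Function.Injective x) : BondGraph where
  V := Set.range x
  finV := Set.finite_range x
  E := {e | ∃ i j : Fin n, i ≠ j ∧ dist (x i) (x j) ≤ r0 ∧ e = s(x i, x j)}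
  not_diag := by
    rintro e ⟨i, j, hij, -, rfl⟩
    rw [Sym2.mk_isDiag_iff]
    exact fun h => hij (hx h)
  mem_V := by
    rintro e ⟨i, j, -, -, rfl⟩ y hy
    rw [Sym2.mem_iff] at hy
    rcases hy with rfl | rfl
    · exact Set.mem_range_self i
    · exact Set.mem_range_self j

namespace Aux


def cx (u : Pt) : ℂ := ⟨u 0, u 1⟩

lemma cx_ne_zero {u : Pt} (h : u ≠ 0) : cx u ≠ 0 := by
  intro h0
  apply h
  have h1 : u 0 = 0 := congrArg Complex.re h0
  have h2 : u 1 = 0 := congrArg Complex.im h0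
  ext t
  fin_cases t <;> simpa

def argN (u : Pt) : ℝ := if (cx u).arg < 0 then (cx u).arg + 2 * π else (cx u).arg

lemma argN_mem (u : Pt) : argN u ∈ Set.Ico 0 (2 * π) := by
  have h1 := Complex.arg_mem_Ioc (cx u)
  have hπ := Real.pi_pos
  obtain ⟨ha, hb⟩ := h1
  unfold argN
  split <;> constructor <;> linarith

lemma cwAngle_def (u v : Pt) :
    cwAngle u v = if (cx u * (starRingEnd ℂ) (cx v)).arg < 0
      then (cx u * (starRingEnd ℂ) (cx v)).arg + 2 * π
      else (cx u * (starRingEnd ℂ) (cx v)).arg := rfl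

lemma cwAngle_mem (u v : Pt) : cwAngle u v ∈ Set.Ico 0 (2 * π) := by
  have h1 := Complex.arg_mem_Ioc (cx u * (starRingEnd ℂ) (cx v))
  have hπ := Real.pi_pos
  obtain ⟨ha, hb⟩ := h1
  rw [cwAngle_def]
  split <;> constructor <;> linarith

lemma cwAngle_sub_key {u v : Pt} (hu : cx u ≠ 0) (hv : cx v ≠ 0) :
    ∃ k : ℤ, cwAngle u v - (argN u - argN v) = 2 * π * k := by
  have hv' : (starRingEnd ℂ) (cx v) ≠ 0 := by simpa using hv
  have h1 : ((cx u * (starRingEnd ℂ) (cx v)).arg : Real.Angle)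
      = ((cx u).arg - (cx v).arg : ℝ) := by
    rw [Complex.arg_mul_coe_angle hu hv', Complex.arg_conj_coe_angle,
      Real.Angle.coe_sub, sub_eq_add_neg]
  obtain ⟨k0, hk0⟩ := Real.Angle.angle_eq_iff_two_pi_dvd_sub.mp h1
  -- adjustments
  have h2 : ∃ k1 : ℤ, cwAngle u v - (cx u * (starRingEnd ℂ) (cx v)).arg = 2 * π * k1 := by
    rw [cwAngle_def]
    split
    · exact ⟨1, by push_cast; ring⟩
    · exact ⟨0, by push_cast; ring⟩
  have h3 : ∃ k2 : ℤ, argN u - (cx u).arg = 2 * π * k2 := by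
    unfold argN; split
    · exact ⟨1, by push_cast; ring⟩
    · exact ⟨0, by push_cast; ring⟩
  have h4 : ∃ k3 : ℤ, argN v - (cx v).arg = 2 * π * k3 := by
    unfold argN; split
    · exact ⟨1, by push_cast; ring⟩
    · exact ⟨0, by push_cast; ring⟩
  obtain ⟨k1, hk1⟩ := h2
  obtain ⟨k2, hk2⟩ := h3
  obtain ⟨k3, hk3⟩ := h4
  exact ⟨k0 + k1 - k2 + k3, by push_cast; linarith⟩

lemma int_eq_zero_of_abs_lt {k : ℤ} (h1 : -(2*π) < 2 * π * k) (h2 : 2 * π * k < 2*π) : k = 0 := by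
  have hπ := Real.pi_pos
  have ha : (-1 : ℝ) < k := by nlinarith
  have hb : (k : ℝ) < 1 := by nlinarith
  have ha' : (-1 : ℤ) < k := by exact_mod_cast ha
  have hb' : (k : ℤ) < 1 := by exact_mod_cast hb
  omega

lemma cwAngle_eq_of_le {u v : Pt} (hu : cx u ≠ 0) (hv : cx v ≠ 0)
    (h : argN v ≤ argN u) : cwAngle u v = argN u - argN v := by
  obtain ⟨k, hk⟩ := cwAngle_sub_key hu hv
  obtain ⟨hc0, hc2⟩ := cwAngle_mem u v
  obtain ⟨hu0, hu2⟩ := argN_mem u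
  obtain ⟨hv0, hv2⟩ := argN_mem v
  have : k = 0 := int_eq_zero_of_abs_lt (by linarith) (by linarith)
  rw [this] at hk
  push_cast at hk
  linarith

lemma cwAngle_eq_of_lt {u v : Pt} (hu : cx u ≠ 0) (hv : cx v ≠ 0)
    (h : argN u < argN v) : cwAngle u v = argN u - argN v + 2 * π := by
  obtain ⟨k, hk⟩ := cwAngle_sub_key hu hv
  obtain ⟨hc0, hc2⟩ := cwAngle_mem u v
  obtain ⟨hu0, hu2⟩ := argN_mem u
  obtain ⟨hv0, hv2⟩ := argN_mem v
  have hk' : 2 * π * (k - 1) = cwAngle u v - (argN u - argN v + 2*π) := by push_cast; linarith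
  have : k - 1 = 0 := by
    apply int_eq_zero_of_abs_lt (k := k - 1) <;> push_cast <;> rw [hk'] <;> linarith
  have : k = 1 := by omega
  rw [this] at hk
  push_cast at hk
  linarith



lemma gap_pairs {m : ℕ} (hm : 1 ≤ m) (a : Fin m → ℝ)
    (ha : ∀ t, a t ∈ Set.Ico 0 (2 * π)) :
    ∃ P : Finset (Fin m × Fin m), m - 5 ≤ P.card ∧
      ∀ p ∈ P, p.1 ≠ p.2 ∧ 0 ≤ a p.1 - a p.2 ∧ a p.1 - a p.2 ≤ 2 * π / 5 := by
  have hπ := Real.pi_pos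
  set σ := Tuple.sort a with hσ
  have hmono : Monotone (a ∘ σ) := Tuple.monotone_sort a
  have hψlt : ∀ t : ℕ, min t (m - 1) < m := fun t => by omega
  set ψ : ℕ → Fin m := fun t => ⟨min t (m - 1), hψlt t⟩ with hψdef
  set B : ℕ → ℝ := fun t => a (σ (ψ t)) with hB
  have hBmono : Monotone B := by
    intro s t hst
    exact hmono (by simp only [hψdef, Fin.mk_le_mk]; omega)
  have htel : ∑ t ∈ Finset.range (m - 1), (B (t + 1) - B t) = B (m - 1) - B 0 :=
    Finset.sum_range_sub B (m - 1)
  have hspan : B (m - 1) - B 0 < 2 * π := by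
    have h1 := (ha (σ (ψ (m - 1)))).2
    have h2 := (ha (σ (ψ 0))).1
    simp only [hB]; linarith
  set S := (Finset.range (m - 1)).filter (fun t => 2 * π / 5 < B (t + 1) - B t) with hS
  have hcardS : S.card ≤ 4 := by
    by_contra hc
    push_neg at hc
    have h5 : 5 ≤ S.card := hc
    have hsum1 : (S.card : ℝ) * (2 * π / 5) ≤ ∑ t ∈ S, (B (t + 1) - B t) := by
      have := Finset.card_nsmul_le_sum S (fun t => B (t + 1) - B t) (2 * π / 5)
        (fun t ht => le_of_lt (Finset.mem_filter.mp ht).2)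
      simpa [nsmul_eq_mul] using this
    have hsum2 : ∑ t ∈ S, (B (t + 1) - B t) ≤ ∑ t ∈ Finset.range (m - 1), (B (t + 1) - B t) :=
      Finset.sum_le_sum_of_subset_of_nonneg (Finset.filter_subset _ _)
        (fun t _ _ => by have := hBmono (Nat.le_succ t); linarith)
    have : (5 : ℝ) ≤ (S.card : ℝ) := by exact_mod_cast h5
    nlinarith
  set T := (Finset.range (m - 1)).filter (fun t => ¬ 2 * π / 5 < B (t + 1) - B t) with hT
  have hTcard : m - 5 ≤ T.card := by
    have := Finset.card_filter_add_card_filter_not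
      (s := Finset.range (m - 1)) (p := fun t => 2 * π / 5 < B (t + 1) - B t)
    rw [Finset.card_range] at this
    rw [← hS, ← hT] at this
    omega
  refine ⟨T.image (fun t => (σ (ψ (t + 1)), σ (ψ t))), ?_, ?_⟩
  · have hinj : Set.InjOn (fun t => (σ (ψ (t + 1)), σ (ψ t))) T := by
      intro s hs t ht hst
      have hs' : s < m - 1 := Finset.mem_range.mp (Finset.mem_filter.mp hs).1
      have ht' : t < m - 1 := Finset.mem_range.mp (Finset.mem_filter.mp ht).1
      have := congrArg Prod.snd hst
      simp only at this
      have := σ.injective this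
      have : min s (m - 1) = min t (m - 1) := congrArg Fin.val this
      omega
    rw [Finset.card_image_of_injOn hinj]
    exact hTcard
  · rintro p hp
    obtain ⟨t, ht, rfl⟩ := Finset.mem_image.mp hp
    have ht1 : t < m - 1 := Finset.mem_range.mp (Finset.mem_filter.mp ht).1
    have ht2 : ¬ 2 * π / 5 < B (t + 1) - B t := (Finset.mem_filter.mp ht).2
    have hne : ψ (t + 1) ≠ ψ t := by
      simp only [hψdef, Ne, Fin.mk.injEq]
      omega
    refine ⟨fun h => hne (σ.injective h), ?_, ?_⟩
    · have := hBmono (Nat.le_succ t); simpa [hB] using this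
    · push_neg at ht2; simpa [hB] using ht2

lemma card_le_four {m : ℕ} (ε : ℝ) (hε : 0 < ε) (hε' : ε ≤ 1 / 100) (a : Fin m → ℝ)
    (ha : ∀ t, a t ∈ Set.Ico 0 (2 * π))
    (H1 : ∀ s t : Fin m, s ≠ t → a t ≤ a s → π / 2 - ε ≤ a s - a t)
    (H2 : ∀ s t : Fin m, s ≠ t → a t < a s → π / 2 - ε ≤ a t - a s + 2 * π) :
    m ≤ 4 := by
  have hπ := Real.pi_gt_three
  by_contra hc
  push_neg at hc
  have hm : 5 ≤ m := hc
  set σ := Tuple.sort a with hσ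
  have hmono : Monotone (a ∘ σ) := Tuple.monotone_sort a
  have hψlt : ∀ t : ℕ, min t (m - 1) < m := fun t => by omega
  set ψ : ℕ → Fin m := fun t => ⟨min t (m - 1), hψlt t⟩ with hψdef
  set B : ℕ → ℝ := fun t => a (σ (ψ t)) with hB
  have hBmono : Monotone B := by
    intro s t hst
    exact hmono (by simp only [hψdef, Fin.mk_le_mk]; omega)
  have htel : ∑ t ∈ Finset.range (m - 1), (B (t + 1) - B t) = B (m - 1) - B 0 :=
    Finset.sum_range_sub B (m - 1)
  have hgap : ∀ t, t < m - 1 → π / 2 - ε ≤ B (t + 1) - B t := by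
    intro t ht
    have hne : σ (ψ (t + 1)) ≠ σ (ψ t) := by
      intro h
      have := congrArg Fin.val (σ.injective h)
      simp only [hψdef] at this
      omega
    exact H1 _ _ hne (hBmono (Nat.le_succ t))
  have hsum : (m - 1 : ℕ) * (π / 2 - ε) ≤ B (m - 1) - B 0 := by
    rw [← htel]
    have := Finset.card_nsmul_le_sum (Finset.range (m - 1)) (fun t => B (t + 1) - B t)
      (π / 2 - ε) (fun t ht => hgap t (Finset.mem_range.mp ht))
    simpa [nsmul_eq_mul] using this
  have hlt : B 0 < B (m - 1) := by
    have h4 : (4 : ℝ) ≤ ((m - 1 : ℕ) : ℝ) := by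
      have : 4 ≤ m - 1 := by omega
      exact_mod_cast this
    nlinarith
  have hwrap : π / 2 - ε ≤ B 0 - B (m - 1) + 2 * π := by
    have hne : σ (ψ (m - 1)) ≠ σ (ψ 0) := by
      intro h
      have := congrArg Fin.val (σ.injective h)
      simp only [hψdef] at this
      omega
    exact H2 _ _ hne hlt
  have h4 : (4 : ℝ) ≤ ((m - 1 : ℕ) : ℝ) := by
    have : 4 ≤ m - 1 := by omega
    exact_mod_cast this
  nlinarith



def erealCoeHom : ℝ →+ EReal where
  toFun := fun x => (x : EReal)
  map_zero' := rfl
  map_add' := fun x y => EReal.coe_add x y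

lemma coe_finset_sum {ι : Type*} (s : Finset ι) (f : ι → ℝ) :
    ((∑ i ∈ s, f i : ℝ) : EReal) = ∑ i ∈ s, (f i : EReal) :=
  map_sum erealCoeHom f s

lemma ereal_sum_ne_bot {ι : Type*} {s : Finset ι} {f : ι → EReal}
    (h : ∀ i ∈ s, f i ≠ ⊥) : ∑ i ∈ s, f i ≠ ⊥ := by
  classical
  induction s using Finset.cons_induction with
  | empty => simp
  | cons i s hi ih =>
    rw [Finset.sum_cons]
    rw [Ne, EReal.add_eq_bot_iff]
    push_neg
    exact ⟨h i (Finset.mem_cons_self i s), ih (fun j hj => h j (Finset.mem_cons.mpr (Or.inr hj)))⟩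

lemma ereal_term_ne_top {ι : Type*} {s : Finset ι} {f : ι → EReal}
    (hb : ∀ i ∈ s, f i ≠ ⊥) (hs : ∑ i ∈ s, f i ≠ ⊤) : ∀ i ∈ s, f i ≠ ⊤ := by
  classical
  intro i hi htop
  apply hs
  rw [← Finset.add_sum_erase s f hi, htop]
  exact EReal.top_add_of_ne_bot
    (ereal_sum_ne_bot (fun j hj => hb j (Finset.mem_of_mem_erase hj)))

/-- the real-valued two-body term -/
def W (v2 : ℝ → EReal) {n : ℕ} (x : Fin n → Pt) (i j : Fin n) : ℝ :=
  if j ≠ i then (v2 (dist (x i) (x j))).toReal else 0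

/-- the real-valued three-body term -/
def S3 (r0 : ℝ) (v3 : ℝ → ℝ) {n : ℕ} (x : Fin n → Pt) (c : Fin n × Fin n × Fin n) : ℝ :=
  if c.1 ≠ c.2.1 ∧ c.1 ≠ c.2.2 ∧ c.2.1 ≠ c.2.2 ∧
      dist (x c.1) (x c.2.1) ≤ r0 ∧ dist (x c.1) (x c.2.2) ≤ r0
    then v3 (cwAngle (x c.2.1 - x c.1) (x c.2.2 - x c.1)) else 0

lemma energy_eq_coe (r0 : ℝ) (v2 : ℝ → EReal) (v3 : ℝ → ℝ) {n : ℕ} (x : Fin n → Pt)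
    (hne : ∀ i j : Fin n, j ≠ i → v2 (dist (x i) (x j)) ≠ ⊤ ∧ v2 (dist (x i) (x j)) ≠ ⊥) :
    energy r0 v2 v3 x =
      (((1 / 2 : ℝ) * ∑ i : Fin n, ∑ j : Fin n, W v2 x i j
        + (1 / 2 : ℝ) * ∑ c : Fin n × Fin n × Fin n, S3 r0 v3 x c : ℝ) : EReal) := by
  have h1 : ∀ i j : Fin n, (if j ≠ i then v2 (dist (x i) (x j)) else 0)
      = ((W v2 x i j : ℝ) : EReal) := by
    intro i j
    unfold W
    split
    · rename_i h
      exact (EReal.coe_toReal (hne i j h).1 (hne i j h).2).symm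
    · simp
  have h2 : (∑ i : Fin n, ∑ j : Fin n, (if j ≠ i then v2 (dist (x i) (x j)) else 0))
      = ((∑ i : Fin n, ∑ j : Fin n, W v2 x i j : ℝ) : EReal) := by
    rw [coe_finset_sum]
    refine Finset.sum_congr rfl (fun i _ => ?_)
    rw [coe_finset_sum]
    exact Finset.sum_congr rfl (fun j _ => h1 i j)
  have h3 : (∑ i : Fin n, ∑ j : Fin n, ∑ k : Fin n,
        (if i ≠ j ∧ i ≠ k ∧ j ≠ k ∧ dist (x i) (x j) ≤ r0 ∧ dist (x i) (x k) ≤ r0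
          then v3 (cwAngle (x j - x i) (x k - x i)) else 0))
      = ∑ c : Fin n × Fin n × Fin n, S3 r0 v3 x c := by
    rw [Fintype.sum_prod_type]
    refine Finset.sum_congr rfl (fun i _ => ?_)
    rw [Fintype.sum_prod_type]
    rfl
  rw [energy, h2, h3, EReal.coe_add, EReal.coe_mul, EReal.coe_mul]


/-! ### far-away points and comparison configurations -/

def pt (a : ℝ) : Pt := WithLp.toLp 2 (fun t : Fin 2 => if t = 0 then a else 0)

lemma pt_apply_zero (a : ℝ) : pt a 0 = a := rfl

lemma norm_pt (a : ℝ) : ‖pt a‖ = |a| := by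
  rw [EuclideanSpace.norm_eq, Fin.sum_univ_two]
  show Real.sqrt (‖pt a 0‖ ^ 2 + ‖pt a 1‖ ^ 2) = |a|
  have h0 : pt a 0 = a := rfl
  have h1 : pt a 1 = (0 : ℝ) := rfl
  rw [h0, h1]
  simp [Real.sqrt_sq_eq_abs, sq_abs]

lemma pt_sub (a b : ℝ) : pt a - pt b = pt (a - b) := by
  ext t
  show pt a t - pt b t = pt (a - b) t
  unfold pt
  simp only [PiLp.toLp_apply]
  split <;> ring

lemma dist_pt (a b : ℝ) : dist (pt a) (pt b) = |a - b| := by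
  rw [dist_eq_norm, pt_sub, norm_pt]

lemma energy_nonpos (r0 : ℝ) (v2 : ℝ → EReal) (v3 : ℝ → ℝ)
    (hr0 : 1 < r0) (h2 : V2Hyp ε r0 v2)
    {n : ℕ} (x : Fin n → Pt)
    (hmin : ∀ y : Fin n → Pt, Function.Injective y →
      energy r0 v2 v3 x ≤ energy r0 v2 v3 y) :
    energy r0 v2 v3 x ≤ 0 := by
  set z : Fin n → Pt := fun i => pt ((i : ℕ) * (r0 + 1)) with hz
  have hdist : ∀ i j : Fin n, i ≠ j → r0 < dist (z i) (z j) := by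
    intro i j hij
    have hne : (i : ℕ) ≠ (j : ℕ) := fun h => hij (Fin.ext h)
    have h1 : (1 : ℝ) ≤ |((i : ℕ) : ℝ) - ((j : ℕ) : ℝ)| := by
      have hz1 : ((i : ℕ) : ℤ) ≠ ((j : ℕ) : ℤ) := by exact_mod_cast hne
      have hz2 : (1 : ℤ) ≤ |((i : ℕ) : ℤ) - ((j : ℕ) : ℤ)| := Int.one_le_abs (sub_ne_zero.mpr hz1)
      calc (1 : ℝ) ≤ ((|((i : ℕ) : ℤ) - ((j : ℕ) : ℤ)| : ℤ) : ℝ) := by exact_mod_cast hz2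
        _ = |((i : ℕ) : ℝ) - ((j : ℕ) : ℝ)| := by push_cast; ring
    have : dist (z i) (z j) = |((i : ℕ) : ℝ) - ((j : ℕ) : ℝ)| * (r0 + 1) := by
      rw [hz]
      simp only
      rw [dist_pt, ← sub_mul, abs_mul, abs_of_nonneg (by linarith : (0:ℝ) ≤ r0 + 1)]
    rw [this]
    nlinarith
  have hzinj : Function.Injective z := by
    intro i j hij
    by_contra hne
    have := hdist i j hne
    rw [hij, dist_self] at this
    linarith
  have hzero : energy r0 v2 v3 z = 0 := by
    unfold energy
    have hA : (∑ i : Fin n, ∑ j : Fin n,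
        (if j ≠ i then v2 (dist (z i) (z j)) else 0)) = 0 := by
      refine Finset.sum_eq_zero fun i _ => Finset.sum_eq_zero fun j _ => ?_
      split
      · rename_i h
        exact h2.eq_zero _ (le_of_lt (hdist i j (Ne.symm h)))
      · rfl
    have hB : (∑ i : Fin n, ∑ j : Fin n, ∑ k : Fin n,
        (if i ≠ j ∧ i ≠ k ∧ j ≠ k ∧ dist (z i) (z j) ≤ r0 ∧ dist (z i) (z k) ≤ r0
          then v3 (cwAngle (z j - z i) (z k - z i)) else 0)) = 0 := by
      refine Finset.sum_eq_zero fun i _ => Finset.sum_eq_zero fun j _ =>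
        Finset.sum_eq_zero fun k _ => ?_
      rw [if_neg]
      rintro ⟨hij, -, -, hd, -⟩
      exact absurd hd (not_le.mpr (hdist i j hij))
    rw [hA, hB]
    simp
  calc energy r0 v2 v3 x ≤ energy r0 v2 v3 z := hmin z hzinj
    _ = 0 := hzero

lemma v2_real (ε r0 : ℝ) (v2 : ℝ → EReal) (v3 : ℝ → ℝ)
    (hr0 : 1 < r0) (h2 : V2Hyp ε r0 v2)
    {n : ℕ} (x : Fin n → Pt)
    (hmin : ∀ y : Fin n → Pt, Function.Injective y →
      energy r0 v2 v3 x ≤ energy r0 v2 v3 y) :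
    ∀ i j : Fin n, j ≠ i →
      v2 (dist (x i) (x j)) ≠ ⊤ ∧ v2 (dist (x i) (x j)) ≠ ⊥ := by
  have hbot : ∀ i j : Fin n, j ≠ i → v2 (dist (x i) (x j)) ≠ ⊥ := by
    intro i j _ hb
    have hle := h2.ge_neg_one (dist (x i) (x j)) dist_nonneg
    rw [hb] at hle
    have hlt : (⊥ : EReal) < -1 := by
      rw [show (-1 : EReal) = ((-1 : ℝ) : EReal) by norm_cast]
      exact EReal.bot_lt_coe _
    exact absurd hle (not_le.mpr hlt)
  refine fun i j hij => ⟨?_, hbot i j hij⟩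
  have hfbot : ∀ i j : Fin n, (if j ≠ i then v2 (dist (x i) (x j)) else 0) ≠ ⊥ := by
    intro i j
    split
    · exact hbot i j (by assumption)
    · simp
  have hE := energy_nonpos r0 v2 v3 hr0 h2 x hmin
  have hT : (∑ i : Fin n, ∑ j : Fin n,
      (if j ≠ i then v2 (dist (x i) (x j)) else 0)) ≠ ⊤ := by
    intro hT
    unfold energy at hE
    rw [hT] at hE
    have h12 : ((1/2 : ℝ) : EReal) * ⊤ = ⊤ := by
      rw [EReal.mul_top_of_pos]
      exact EReal.coe_pos.mpr (by norm_num)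
    rw [h12, EReal.top_add_of_ne_bot (EReal.coe_ne_bot _)] at hE
    exact absurd hE (by simp)
  have hinner_ne_bot : ∀ i : Fin n,
      (∑ j : Fin n, (if j ≠ i then v2 (dist (x i) (x j)) else 0)) ≠ ⊥ :=
    fun i => ereal_sum_ne_bot (fun j _ => hfbot i j)
  have hinner_ne_top : ∀ i : Fin n,
      (∑ j : Fin n, (if j ≠ i then v2 (dist (x i) (x j)) else 0)) ≠ ⊤ :=
    fun i => ereal_term_ne_top (fun i _ => hinner_ne_bot i) hT i (Finset.mem_univ i)
  have hne := ereal_term_ne_top (fun j _ => hfbot i j) (hinner_ne_top i) j (Finset.mem_univ j)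
  rw [if_pos hij] at hne
  exact hne

lemma v3_nonneg (ε : ℝ) (v3 : ℝ → ℝ) (h3 : V3Hyp ε v3) {θ : ℝ}
    (h0 : 0 ≤ θ) (h2 : θ ≤ 2 * π) : 0 ≤ v3 θ := by
  by_cases hθ : θ ∈ ({π / 2, π, 3 * π / 2} : Set ℝ)
  · rcases hθ with h | h | h <;> rw [h]
    · rw [h3.zero_pi_half]
    · rw [h3.zero_pi]
    · rw [h3.zero_three_pi_half]
  · exact le_of_lt (h3.pos θ h0 h2 hθ)

lemma v3_big (ε : ℝ) (v3 : ℝ → ℝ) (hε : 0 < ε) (hε1 : ε ≤ 1 / 100) (h3 : V3Hyp ε v3)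
    {θ : ℝ} (h0 : 0 ≤ θ) (h2 : θ ≤ 2 * π) (hbad : θ ∉ goodAngles ε) : 14 < v3 θ := by
  have hπ := Real.pi_gt_three
  have hlarge := h3.large θ h0 h2 hbad
  have hs2 : Real.sqrt 2 ^ 2 = 2 := Real.sq_sqrt (by norm_num)
  have hs0 : (0 : ℝ) ≤ Real.sqrt 2 := Real.sqrt_nonneg 2
  have hs54 : (5 / 4 : ℝ) ≤ Real.sqrt 2 := by nlinarith
  have hd : (0 : ℝ) < (1 - ε) ^ 2 := by nlinarith
  have h4 : (4 : ℝ) ≤ 4 / (1 - ε) ^ 2 := by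
    rw [le_div_iff₀ hd]
    nlinarith
  have h14 : (14 : ℝ) ≤ 4 / (1 - ε) ^ 2 * (Real.sqrt 2 + 1 / 2) ^ 2 := by
    nlinarith [sq_nonneg (Real.sqrt 2 + 1 / 2)]
  linarith

lemma not_good_of_small (ε θ : ℝ) (hε : 0 < ε) (hε1 : ε ≤ 1 / 100)
    (h0 : 0 ≤ θ) (h2 : θ ≤ 2 * π / 5) : θ ∉ goodAngles ε := by
  have hπ := Real.pi_gt_three
  rintro ((⟨h, -⟩ | ⟨h, -⟩) | ⟨h, -⟩) <;> linarith

lemma good_lb {ε θ : ℝ} (hε : 0 < ε) (hε1 : ε ≤ 1 / 100) (h : θ ∈ goodAngles ε) :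
    π / 2 - ε ≤ θ := by
  have hπ := Real.pi_gt_three
  rcases h with (⟨h, -⟩ | ⟨h, -⟩) | ⟨h, -⟩ <;> linarith

/-- Moving the point `x i₀` far away: the net interaction of `i₀` must be nonpositive. -/
lemma key_ineq (ε r0 : ℝ) (v2 : ℝ → EReal) (v3 : ℝ → ℝ)
    (hε : 0 < ε) (hε1 : ε ≤ 1 / 100) (hr0 : 1 < r0)
    (h2 : V2Hyp ε r0 v2) (h3 : V3Hyp ε v3)
    {n : ℕ} (x : Fin n → Pt) (hx : Function.Injective x)
    (hmin : ∀ y : Fin n → Pt, Function.Injective y →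
      energy r0 v2 v3 x ≤ energy r0 v2 v3 y)
    (i₀ : Fin n) (C : Finset (Fin n × Fin n × Fin n)) (hC : ∀ c ∈ C, c.1 = i₀) :
    2 * (∑ j ∈ Finset.univ.erase i₀, W v2 x i₀ j) + ∑ c ∈ C, S3 r0 v3 x c ≤ 0 := by
  classical
  have hreal := v2_real ε r0 v2 v3 hr0 h2 x hmin
  -- the far-away point
  set M : ℝ := r0 + 1 + ∑ j : Fin n, ‖x j‖ with hM
  have hM0 : 0 ≤ M := by
    have : (0 : ℝ) ≤ ∑ j : Fin n, ‖x j‖ :=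
      Finset.sum_nonneg fun j _ => norm_nonneg _
    rw [hM]; linarith
  set p : Pt := pt M with hp
  have hfar : ∀ j : Fin n, r0 < dist p (x j) := by
    intro j
    have h1 : ‖p‖ - ‖x j‖ ≤ ‖p - x j‖ := norm_sub_norm_le _ _
    have h2' : ‖p‖ = M := by rw [hp, norm_pt, abs_of_nonneg hM0]
    have h3' : ‖x j‖ ≤ ∑ j : Fin n, ‖x j‖ :=
      Finset.single_le_sum (fun j _ => norm_nonneg (x j)) (Finset.mem_univ j)
    rw [dist_eq_norm]
    rw [h2'] at h1
    rw [hM] at h1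
    linarith
  set y : Fin n → Pt := Function.update x i₀ p with hy
  have hyi₀ : y i₀ = p := Function.update_self i₀ p x
  have hyne : ∀ j : Fin n, j ≠ i₀ → y j = x j := fun j hj => Function.update_of_ne hj p x
  have hpx : ∀ j : Fin n, p ≠ x j := by
    intro j hpj
    have := hfar j
    rw [← hpj, dist_self] at this
    linarith
  have hyinj : Function.Injective y := by
    intro a b hab
    by_cases ha : a = i₀ <;> by_cases hb : b = i₀
    · rw [ha, hb]
    · rw [ha, hyi₀, hyne b hb] at hab
      exact absurd hab (hpx b)
    · rw [hb, hyi₀, hyne a ha] at hab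
      exact absurd hab.symm (hpx a)
    · rw [hyne a ha, hyne b hb] at hab
      exact hx hab
  -- realness for y
  have hrealy : ∀ i j : Fin n, j ≠ i →
      v2 (dist (y i) (y j)) ≠ ⊤ ∧ v2 (dist (y i) (y j)) ≠ ⊥ := by
    intro i j hij
    have hbot : v2 (dist (y i) (y j)) ≠ ⊥ := by
      intro hb
      have hle := h2.ge_neg_one (dist (y i) (y j)) dist_nonneg
      rw [hb] at hle
      have hlt : (⊥ : EReal) < -1 := by
        rw [show (-1 : EReal) = ((-1 : ℝ) : EReal) by norm_cast]
        exact EReal.bot_lt_coe _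
      exact absurd hle (not_le.mpr hlt)
    refine ⟨?_, hbot⟩
    by_cases hi : i = i₀ <;> by_cases hj : j = i₀
    · exact absurd (hj.trans hi.symm) hij
    · rw [hi, hyi₀, hyne j hj, h2.eq_zero _ (le_of_lt (hfar j))]
      simp
    · rw [hj, hyi₀, hyne i hi, dist_comm, h2.eq_zero _ (le_of_lt (hfar i))]
      simp
    · rw [hyne i hi, hyne j hj]
      exact (hreal i j hij).1
  -- pass to real energies
  have hEx := energy_eq_coe r0 v2 v3 x hreal
  have hEy := energy_eq_coe r0 v2 v3 y hrealy
  have hle := hmin y hyinj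
  rw [hEx, hEy, EReal.coe_le_coe_iff] at hle
  -- two-body bookkeeping
  have hW0 : W v2 x i₀ i₀ = 0 := by simp [W]
  have hWy0 : W v2 y i₀ i₀ = 0 := by simp [W]
  have hWyrow : ∀ j : Fin n, j ≠ i₀ → W v2 y i₀ j = 0 := by
    intro j hj
    unfold W
    rw [if_pos hj, hyi₀, hyne j hj, h2.eq_zero _ (le_of_lt (hfar j))]
    simp
  have hWycol : ∀ i : Fin n, i ≠ i₀ → W v2 y i i₀ = 0 := by
    intro i hi
    unfold W
    rw [if_pos (Ne.symm hi), hyi₀, hyne i hi, dist_comm,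
      h2.eq_zero _ (le_of_lt (hfar i))]
    simp
  have hWyeq : ∀ i j : Fin n, i ≠ i₀ → j ≠ i₀ → W v2 y i j = W v2 x i j := by
    intro i j hi hj
    unfold W
    rw [hyne i hi, hyne j hj]
  have hWsymm : ∀ i : Fin n, W v2 x i i₀ = W v2 x i₀ i := by
    intro i
    unfold W
    rcases eq_or_ne i i₀ with h | h
    · rw [h]
    · rw [if_pos (Ne.symm h), if_pos h, dist_comm]
  have hsplit : ∀ (g : Fin n → Fin n → ℝ), (∑ i : Fin n, ∑ j : Fin n, g i j)
      = (g i₀ i₀ + ∑ j ∈ Finset.univ.erase i₀, g i₀ j)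
        + ∑ i ∈ Finset.univ.erase i₀, (g i i₀ + ∑ j ∈ Finset.univ.erase i₀, g i j) := by
    intro g
    rw [← Finset.add_sum_erase Finset.univ (fun i => ∑ j : Fin n, g i j) (Finset.mem_univ i₀)]
    congr 1
    · exact (Finset.add_sum_erase Finset.univ (g i₀) (Finset.mem_univ i₀)).symm
    · exact Finset.sum_congr rfl fun i _ =>
        (Finset.add_sum_erase Finset.univ (g i) (Finset.mem_univ i₀)).symm
  have hS2x : (∑ i : Fin n, ∑ j : Fin n, W v2 x i j)
      = (∑ j ∈ Finset.univ.erase i₀, W v2 x i₀ j) * 2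
        + ∑ i ∈ Finset.univ.erase i₀, ∑ j ∈ Finset.univ.erase i₀, W v2 x i j := by
    rw [hsplit (W v2 x), hW0, Finset.sum_add_distrib]
    have : (∑ i ∈ Finset.univ.erase i₀, W v2 x i i₀)
        = ∑ i ∈ Finset.univ.erase i₀, W v2 x i₀ i :=
      Finset.sum_congr rfl fun i _ => hWsymm i
    rw [this]
    ring
  have hS2y : (∑ i : Fin n, ∑ j : Fin n, W v2 y i j)
      = ∑ i ∈ Finset.univ.erase i₀, ∑ j ∈ Finset.univ.erase i₀, W v2 x i j := by
    rw [hsplit (W v2 y), hWy0, Finset.sum_add_distrib]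
    rw [Finset.sum_eq_zero (fun j hj => hWyrow j (Finset.ne_of_mem_erase hj)),
      Finset.sum_eq_zero (fun i hi => hWycol i (Finset.ne_of_mem_erase hi))]
    have : (∑ i ∈ Finset.univ.erase i₀, ∑ j ∈ Finset.univ.erase i₀, W v2 y i j)
        = ∑ i ∈ Finset.univ.erase i₀, ∑ j ∈ Finset.univ.erase i₀, W v2 x i j :=
      Finset.sum_congr rfl fun i hi => Finset.sum_congr rfl fun j hj =>
        hWyeq i j (Finset.ne_of_mem_erase hi) (Finset.ne_of_mem_erase hj)
    rw [this]
    ring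
  -- three-body bookkeeping
  have hS3x_nonneg : ∀ c : Fin n × Fin n × Fin n, 0 ≤ S3 r0 v3 x c := by
    intro c
    unfold S3
    split
    · obtain ⟨h0, h2π⟩ := cwAngle_mem (x c.2.1 - x c.1) (x c.2.2 - x c.1)
      exact v3_nonneg ε v3 h3 h0 (le_of_lt h2π)
    · exact le_rfl
  have hS3y0 : ∀ c : Fin n × Fin n × Fin n,
      (c.1 = i₀ ∨ c.2.1 = i₀ ∨ c.2.2 = i₀) → S3 r0 v3 y c = 0 := by
    intro c hc
    unfold S3
    rw [if_neg]
    rintro ⟨h1, h2', h3', h4, h5⟩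
    rcases hc with hc | hc | hc
    · have hne : c.2.1 ≠ i₀ := by rw [← hc]; exact Ne.symm h1
      rw [hc, hyi₀, hyne c.2.1 hne] at h4
      exact absurd h4 (not_le.mpr (hfar c.2.1))
    · have hne : c.1 ≠ i₀ := by rw [← hc]; exact h1
      rw [hc, hyi₀, hyne c.1 hne, dist_comm] at h4
      exact absurd h4 (not_le.mpr (hfar c.1))
    · have hne : c.1 ≠ i₀ := by rw [← hc]; exact h2'
      rw [hc, hyi₀, hyne c.1 hne, dist_comm] at h5
      exact absurd h5 (not_le.mpr (hfar c.1))
  have hS3yeq : ∀ c : Fin n × Fin n × Fin n,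
      ¬(c.1 = i₀ ∨ c.2.1 = i₀ ∨ c.2.2 = i₀) → S3 r0 v3 y c = S3 r0 v3 x c := by
    intro c hc
    push_neg at hc
    obtain ⟨h1, h2', h3'⟩ := hc
    unfold S3
    rw [hyne c.1 h1, hyne c.2.1 h2', hyne c.2.2 h3']
  have hS3y_le : ∀ c : Fin n × Fin n × Fin n, S3 r0 v3 y c ≤ S3 r0 v3 x c := by
    intro c
    by_cases hc : c.1 = i₀ ∨ c.2.1 = i₀ ∨ c.2.2 = i₀
    · rw [hS3y0 c hc]
      exact hS3x_nonneg c
    · rw [hS3yeq c hc]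
  have hCsub : C ⊆ Finset.univ := Finset.subset_univ C
  have hS3sum : (∑ c : Fin n × Fin n × Fin n, S3 r0 v3 y c) + ∑ c ∈ C, S3 r0 v3 x c
      ≤ ∑ c : Fin n × Fin n × Fin n, S3 r0 v3 x c := by
    rw [← Finset.sum_sdiff hCsub (f := S3 r0 v3 x),
      ← Finset.sum_sdiff hCsub (f := S3 r0 v3 y)]
    have hC0 : (∑ c ∈ C, S3 r0 v3 y c) = 0 :=
      Finset.sum_eq_zero fun c hc => hS3y0 c (Or.inl (hC c hc))
    rw [hC0]
    have : (∑ c ∈ Finset.univ \ C, S3 r0 v3 y c) ≤ ∑ c ∈ Finset.univ \ C, S3 r0 v3 x c :=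
      Finset.sum_le_sum fun c _ => hS3y_le c
    linarith
  -- conclude
  rw [hS2x, hS2y] at hle
  linarith

section Apps

variable (ε r0 : ℝ) (v2 : ℝ → EReal) (v3 : ℝ → ℝ)

lemma W_ge_neg_one (h2 : V2Hyp ε r0 v2) {n : ℕ} (x : Fin n → Pt) {i j : Fin n}
    (hne : v2 (dist (x i) (x j)) ≠ ⊤) : -1 ≤ W v2 x i j := by
  have hm1 : ((-1 : ℝ) : EReal) = (-1 : EReal) := by norm_num
  unfold W
  split
  · have h := EReal.toReal_le_toReal (h2.ge_neg_one _ dist_nonneg)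
      (by rw [← hm1]; exact EReal.coe_ne_bot _)
      hne
    rw [← hm1, EReal.toReal_coe] at h
    exact h
  · norm_num

lemma W_eq_zero (h2 : V2Hyp ε r0 v2) {n : ℕ} (x : Fin n → Pt) {i j : Fin n}
    (hd : r0 ≤ dist (x i) (x j)) : W v2 x i j = 0 := by
  unfold W
  split
  · rw [h2.eq_zero _ hd]; simp
  · rfl

lemma W_big (hε : 0 < ε) (h2 : V2Hyp ε r0 v2) {n : ℕ} (x : Fin n → Pt) {i j : Fin n}
    (hij : j ≠ i) (htop : v2 (dist (x i) (x j)) ≠ ⊤) (hbot : v2 (dist (x i) (x j)) ≠ ⊥)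
    (hd : dist (x i) (x j) ≤ 1 - ε) : ε⁻¹ < W v2 x i j := by
  unfold W
  rw [if_pos hij]
  have h := h2.repulsive _ dist_nonneg hd
  rw [← EReal.coe_toReal htop hbot, EReal.coe_lt_coe_iff] at h
  exact h

/-- From at least 6 neighbors one can select many triples with small (hence expensive) angles. -/
lemma gap_triples (hε : 0 < ε) (hε1 : ε ≤ 1 / 100) (h3 : V3Hyp ε v3)
    {n : ℕ} (x : Fin n → Pt) (hx : Function.Injective x) (i₀ : Fin n)
    (hm : 6 ≤ ((Finset.univ.erase i₀).filter
      (fun j => dist (x i₀) (x j) ≤ r0)).card) :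
    ∃ C : Finset (Fin n × Fin n × Fin n),
      (∀ c ∈ C, c.1 = i₀) ∧
      (((Finset.univ.erase i₀).filter (fun j => dist (x i₀) (x j) ≤ r0)).card - 5 : ℕ)
        ≤ C.card ∧
      ∀ c ∈ C, (14 : ℝ) < S3 r0 v3 x c := by
  classical
  set N := (Finset.univ.erase i₀).filter (fun j => dist (x i₀) (x j) ≤ r0) with hN
  have hNprop : ∀ j ∈ N, j ≠ i₀ ∧ dist (x i₀) (x j) ≤ r0 := by
    intro j hj
    rw [hN, Finset.mem_filter, Finset.mem_erase] at hj
    exact ⟨hj.1.1, hj.2⟩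
  set e := N.orderIsoOfFin rfl with he
  have hvec : ∀ j : Fin n, j ≠ i₀ → cx (x j - x i₀) ≠ 0 := by
    intro j hj
    exact cx_ne_zero (sub_ne_zero.mpr (fun h => hj (hx h)))
  set a : Fin N.card → ℝ := fun t => argN (x ((e t : Fin n)) - x i₀) with ha
  obtain ⟨P, hPcard, hP⟩ := gap_pairs (by omega) a (fun t => argN_mem _)
  refine ⟨P.image (fun q => (i₀, ((e q.1 : Fin n)), ((e q.2 : Fin n)))), ?_, ?_, ?_⟩
  · intro c hc
    obtain ⟨q, -, rfl⟩ := Finset.mem_image.mp hc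
    rfl
  · rw [Finset.card_image_of_injOn]
    · exact hPcard
    · intro q hq q' hq' hqq
      simp only [Prod.mk.injEq] at hqq
      have h1 : q.1 = q'.1 := e.injective (Subtype.coe_injective hqq.2.1)
      have h2' : q.2 = q'.2 := e.injective (Subtype.coe_injective hqq.2.2)
      exact Prod.ext h1 h2'
  · intro c hc
    obtain ⟨q, hq, rfl⟩ := Finset.mem_image.mp hc
    obtain ⟨hq12, hq0, hq5⟩ := hP q hq
    have hj : ((e q.1 : Fin n)) ∈ N := (e q.1).2
    have hk : ((e q.2 : Fin n)) ∈ N := (e q.2).2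
    obtain ⟨hjne, hjd⟩ := hNprop _ hj
    obtain ⟨hkne, hkd⟩ := hNprop _ hk
    have hjk : ((e q.1 : Fin n)) ≠ ((e q.2 : Fin n)) := by
      intro h
      exact hq12 (e.injective (Subtype.coe_injective h))
    have hcw : cwAngle (x ((e q.1 : Fin n)) - x i₀) (x ((e q.2 : Fin n)) - x i₀)
        = a q.1 - a q.2 :=
      cwAngle_eq_of_le (hvec _ hjne) (hvec _ hkne) (by linarith)
    have hcond : i₀ ≠ ((e q.1 : Fin n)) ∧ i₀ ≠ ((e q.2 : Fin n)) ∧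
        ((e q.1 : Fin n)) ≠ ((e q.2 : Fin n)) ∧
        dist (x i₀) (x ((e q.1 : Fin n))) ≤ r0 ∧
        dist (x i₀) (x ((e q.2 : Fin n))) ≤ r0 :=
      ⟨Ne.symm hjne, Ne.symm hkne, hjk, hjd, hkd⟩
    have : S3 r0 v3 x (i₀, ((e q.1 : Fin n)), ((e q.2 : Fin n)))
        = v3 (cwAngle (x ((e q.1 : Fin n)) - x i₀) (x ((e q.2 : Fin n)) - x i₀)) := by
      unfold S3
      rw [if_pos hcond]
    rw [this, hcw]
    have hπ := Real.pi_gt_three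
    exact v3_big ε v3 hε hε1 h3 (by linarith) (by linarith)
      (not_good_of_small ε _ hε hε1 (by linarith) (by linarith))

lemma min_dist (hε : 0 < ε) (hε1 : ε ≤ 1 / 100) (hr0 : 1 < r0)
    (h2 : V2Hyp ε r0 v2) (h3 : V3Hyp ε v3)
    {n : ℕ} (x : Fin n → Pt) (hx : Function.Injective x)
    (hmin : ∀ y : Fin n → Pt, Function.Injective y →
      energy r0 v2 v3 x ≤ energy r0 v2 v3 y) :
    ∀ i j : Fin n, i ≠ j → 1 - ε < dist (x i) (x j) := by
  classical
  by_contra hcon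
  push_neg at hcon
  obtain ⟨i₀, j₀, hij₀, hd₀⟩ := hcon
  have hreal := v2_real ε r0 v2 v3 hr0 h2 x hmin
  set N := (Finset.univ.erase i₀).filter (fun j => dist (x i₀) (x j) ≤ r0) with hN
  have hNsub : N ⊆ Finset.univ.erase i₀ := Finset.filter_subset _ _
  have hsum_eq : (∑ j ∈ Finset.univ.erase i₀, W v2 x i₀ j) = ∑ j ∈ N, W v2 x i₀ j := by
    refine (Finset.sum_subset hNsub ?_).symm
    intro j hj hjn
    refine W_eq_zero ε r0 v2 h2 x (le_of_lt ?_)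
    rw [hN, Finset.mem_filter] at hjn
    push_neg at hjn
    exact hjn hj
  have hj₀N : j₀ ∈ N := by
    rw [hN, Finset.mem_filter, Finset.mem_erase]
    exact ⟨⟨Ne.symm hij₀, Finset.mem_univ _⟩, by linarith⟩
  have hNpos : 1 ≤ N.card := Finset.card_pos.mpr ⟨j₀, hj₀N⟩
  have h100 : (100 : ℝ) ≤ ε⁻¹ := by
    rw [show (100 : ℝ) = (1 / 100 : ℝ)⁻¹ by norm_num]
    exact inv_anti₀ hε hε1
  have hWlb : ∀ j ∈ N, (-1 : ℝ) ≤ W v2 x i₀ j := by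
    intro j hj
    have hjne : j ≠ i₀ := (Finset.mem_erase.mp (hNsub hj)).1
    exact W_ge_neg_one ε r0 v2 h2 x (hreal i₀ j hjne).1
  have hWj₀ : ε⁻¹ < W v2 x i₀ j₀ :=
    W_big ε r0 v2 hε h2 x (Ne.symm hij₀) (hreal i₀ j₀ (Ne.symm hij₀)).1
      (hreal i₀ j₀ (Ne.symm hij₀)).2 hd₀
  have hrest : (-(((N.erase j₀).card : ℕ) : ℝ)) ≤ ∑ j ∈ N.erase j₀, W v2 x i₀ j := by
    have := Finset.card_nsmul_le_sum (N.erase j₀) (fun j => W v2 x i₀ j) (-1)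
      (fun j hj => hWlb j (Finset.mem_of_mem_erase hj))
    simpa [nsmul_eq_mul] using this
  have hcard_erase : (N.erase j₀).card = N.card - 1 := Finset.card_erase_of_mem hj₀N
  have hDlb : ε⁻¹ - ((N.card : ℝ) - 1) ≤ ∑ j ∈ N, W v2 x i₀ j := by
    rw [← Finset.add_sum_erase N _ hj₀N]
    have hc : (((N.erase j₀).card : ℕ) : ℝ) = (N.card : ℝ) - 1 := by
      rw [hcard_erase]
      rw [Nat.cast_sub hNpos]
      norm_num
    rw [hc] at hrest
    linarith
  rcases le_or_gt N.card 5 with hm | hm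
  · have hkey := key_ineq ε r0 v2 v3 hε hε1 hr0 h2 h3 x hx hmin i₀ ∅ (by simp)
    rw [Finset.sum_empty, hsum_eq] at hkey
    have hm' : ((N.card : ℕ) : ℝ) ≤ 5 := by exact_mod_cast hm
    linarith
  · obtain ⟨C, hC1, hC2, hC3⟩ := gap_triples ε r0 v3 hε hε1 h3 x hx i₀ (by rw [← hN]; omega)
    rw [← hN] at hC2
    have hkey := key_ineq ε r0 v2 v3 hε hε1 hr0 h2 h3 x hx hmin i₀ C hC1
    rw [hsum_eq] at hkey
    have hCsum : ((C.card : ℕ) : ℝ) * 14 ≤ ∑ c ∈ C, S3 r0 v3 x c := by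
      have := Finset.card_nsmul_le_sum C (fun c => S3 r0 v3 x c) 14
        (fun c hc => le_of_lt (hC3 c hc))
      simpa [nsmul_eq_mul] using this
    have hCc : ((N.card - 5 : ℕ) : ℝ) ≤ (C.card : ℝ) := by exact_mod_cast hC2
    have hNc : ((N.card - 5 : ℕ) : ℝ) = (N.card : ℝ) - 5 := by
      rw [Nat.cast_sub (by omega)]
      norm_num
    have hm6 : (6 : ℝ) ≤ (N.card : ℝ) := by exact_mod_cast hm
    nlinarith
  
lemma angles_good (hε : 0 < ε) (hε1 : ε ≤ 1 / 100) (hr0 : 1 < r0)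
    (h2 : V2Hyp ε r0 v2) (h3 : V3Hyp ε v3)
    {n : ℕ} (x : Fin n → Pt) (hx : Function.Injective x)
    (hmin : ∀ y : Fin n → Pt, Function.Injective y →
      energy r0 v2 v3 x ≤ energy r0 v2 v3 y) :
    ∀ i₀ j k : Fin n, j ≠ i₀ → k ≠ i₀ → j ≠ k →
      dist (x i₀) (x j) ≤ r0 → dist (x i₀) (x k) ≤ r0 →
      cwAngle (x j - x i₀) (x k - x i₀) ∈ goodAngles ε := by
  classical
  intro i₀ j k hj hk hjk hdj hdk
  by_contra hbad
  have hreal := v2_real ε r0 v2 v3 hr0 h2 x hmin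
  set N := (Finset.univ.erase i₀).filter (fun j => dist (x i₀) (x j) ≤ r0) with hN
  have hNsub : N ⊆ Finset.univ.erase i₀ := Finset.filter_subset _ _
  have hsum_eq : (∑ j ∈ Finset.univ.erase i₀, W v2 x i₀ j) = ∑ j ∈ N, W v2 x i₀ j := by
    refine (Finset.sum_subset hNsub ?_).symm
    intro j hj hjn
    refine W_eq_zero ε r0 v2 h2 x (le_of_lt ?_)
    rw [hN, Finset.mem_filter] at hjn
    push_neg at hjn
    exact hjn hj
  have hWlb : ∀ j ∈ N, (-1 : ℝ) ≤ W v2 x i₀ j := by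
    intro j hj
    have hjne : j ≠ i₀ := (Finset.mem_erase.mp (hNsub hj)).1
    exact W_ge_neg_one ε r0 v2 h2 x (hreal i₀ j hjne).1
  have hDlb : (-((N.card : ℕ) : ℝ)) ≤ ∑ j ∈ N, W v2 x i₀ j := by
    have := Finset.card_nsmul_le_sum N (fun j => W v2 x i₀ j) (-1) hWlb
    simpa [nsmul_eq_mul] using this
  rcases le_or_gt N.card 7 with hm | hm
  · set c₀ : Fin n × Fin n × Fin n := (i₀, j, k) with hc₀
    have hS3c : (14 : ℝ) < S3 r0 v3 x c₀ := by
      have hcond : i₀ ≠ j ∧ i₀ ≠ k ∧ j ≠ k ∧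
          dist (x i₀) (x j) ≤ r0 ∧ dist (x i₀) (x k) ≤ r0 :=
        ⟨Ne.symm hj, Ne.symm hk, hjk, hdj, hdk⟩
      have : S3 r0 v3 x c₀ = v3 (cwAngle (x j - x i₀) (x k - x i₀)) := by
        unfold S3
        rw [hc₀, if_pos hcond]
      rw [this]
      obtain ⟨hθ0, hθ2⟩ := cwAngle_mem (x j - x i₀) (x k - x i₀)
      exact v3_big ε v3 hε hε1 h3 hθ0 (le_of_lt hθ2) hbad
    have hkey := key_ineq ε r0 v2 v3 hε hε1 hr0 h2 h3 x hx hmin i₀ {c₀}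
      (by intro c hc; rw [Finset.mem_singleton] at hc; rw [hc, hc₀])
    rw [Finset.sum_singleton, hsum_eq] at hkey
    have hm' : ((N.card : ℕ) : ℝ) ≤ 7 := by exact_mod_cast hm
    linarith
  · obtain ⟨C, hC1, hC2, hC3⟩ := gap_triples ε r0 v3 hε hε1 h3 x hx i₀ (by rw [← hN]; omega)
    rw [← hN] at hC2
    have hkey := key_ineq ε r0 v2 v3 hε hε1 hr0 h2 h3 x hx hmin i₀ C hC1
    rw [hsum_eq] at hkey
    have hCsum : ((C.card : ℕ) : ℝ) * 14 ≤ ∑ c ∈ C, S3 r0 v3 x c := by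
      have := Finset.card_nsmul_le_sum C (fun c => S3 r0 v3 x c) 14
        (fun c hc => le_of_lt (hC3 c hc))
      simpa [nsmul_eq_mul] using this
    have hCc : ((N.card - 5 : ℕ) : ℝ) ≤ (C.card : ℝ) := by exact_mod_cast hC2
    have hNc : ((N.card - 5 : ℕ) : ℝ) = (N.card : ℝ) - 5 := by
      rw [Nat.cast_sub (by omega)]
      norm_num
    have hm8 : (8 : ℝ) ≤ (N.card : ℝ) := by exact_mod_cast hm
    nlinarith

lemma edge_decode {r0 : ℝ} {n : ℕ} {x : Fin n → Pt} {hx : Function.Injective x} {a b : Pt}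
    (h : s(a, b) ∈ (natGraph r0 x hx).E) :
    ∃ ia ib : Fin n, x ia = a ∧ x ib = b ∧ ia ≠ ib ∧ dist (x ia) (x ib) ≤ r0 := by
  obtain ⟨i, j, hij, hd, he⟩ := h
  rw [Sym2.eq_iff] at he
  rcases he with ⟨h1, h2⟩ | ⟨h1, h2⟩
  · exact ⟨i, j, h1.symm, h2.symm, hij, hd⟩
  · exact ⟨j, i, h1.symm, h2.symm, hij.symm, by rw [dist_comm]; exact hd⟩

lemma deg_le_four (hε : 0 < ε) (hε1 : ε ≤ 1 / 100) (hr0 : 1 < r0)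
    (h2 : V2Hyp ε r0 v2) (h3 : V3Hyp ε v3)
    {n : ℕ} (x : Fin n → Pt) (hx : Function.Injective x)
    (hmin : ∀ y : Fin n → Pt, Function.Injective y →
      energy r0 v2 v3 x ≤ energy r0 v2 v3 y)
    (i₀ : Fin n) :
    ((Finset.univ.erase i₀).filter (fun j => dist (x i₀) (x j) ≤ r0)).card ≤ 4 := by
  classical
  have hag := angles_good ε r0 v2 v3 hε hε1 hr0 h2 h3 x hx hmin
  set N := (Finset.univ.erase i₀).filter (fun j => dist (x i₀) (x j) ≤ r0) with hN
  have hNprop : ∀ j ∈ N, j ≠ i₀ ∧ dist (x i₀) (x j) ≤ r0 := by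
    intro j hj
    rw [hN, Finset.mem_filter, Finset.mem_erase] at hj
    exact ⟨hj.1.1, hj.2⟩
  set e := N.orderIsoOfFin rfl with he
  have hvec : ∀ j : Fin n, j ≠ i₀ → cx (x j - x i₀) ≠ 0 := fun j hj =>
    cx_ne_zero (sub_ne_zero.mpr (fun h => hj (hx h)))
  set a : Fin N.card → ℝ := fun t => argN (x ((e t : Fin n)) - x i₀) with ha
  have hne : ∀ s t : Fin N.card, s ≠ t → ((e s : Fin n)) ≠ ((e t : Fin n)) := by
    intro s t hst h
    exact hst (e.injective (Subtype.coe_injective h))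
  have hgood : ∀ s t : Fin N.card, s ≠ t →
      cwAngle (x ((e s : Fin n)) - x i₀) (x ((e t : Fin n)) - x i₀) ∈ goodAngles ε := by
    intro s t hst
    obtain ⟨hs1, hs2⟩ := hNprop _ (e s).2
    obtain ⟨ht1, ht2⟩ := hNprop _ (e t).2
    exact hag i₀ _ _ hs1 ht1 (hne s t hst) hs2 ht2
  refine card_le_four ε hε hε1 a (fun t => argN_mem _) ?_ ?_
  · intro s t hst hle
    obtain ⟨hs1, -⟩ := hNprop _ (e s).2
    obtain ⟨ht1, -⟩ := hNprop _ (e t).2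
    have hcw : cwAngle (x ((e s : Fin n)) - x i₀) (x ((e t : Fin n)) - x i₀)
        = a s - a t := cwAngle_eq_of_le (hvec _ hs1) (hvec _ ht1) hle
    have := good_lb hε hε1 (hgood s t hst)
    rw [hcw] at this
    exact this
  · intro s t hst hlt
    obtain ⟨hs1, -⟩ := hNprop _ (e s).2
    obtain ⟨ht1, -⟩ := hNprop _ (e t).2
    have hcw : cwAngle (x ((e t : Fin n)) - x i₀) (x ((e s : Fin n)) - x i₀)
        = a t - a s + 2 * π := cwAngle_eq_of_lt (hvec _ ht1) (hvec _ hs1) hlt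
    have := good_lb hε hε1 (hgood t s (Ne.symm hst))
    rw [hcw] at this
    exact this

end Apps

end Aux

/-- **Elementary properties of minimizers.** There is `ε₀ ∈ (0, π/6)` such that for all
admissible potentials, the natural bond graph of every minimizer is `ε`-regular, and every
vertex has at most `4` neighbors. -/
theorem natural_bond_graph_of_minimizer :
    ∃ ε₀ : ℝ, 0 < ε₀ ∧ ε₀ < π / 6 ∧
      ∀ ε : ℝ, 0 < ε → ε < ε₀ →
      ∀ r0 : ℝ, 1 < r0 → r0 < Real.sqrt 2 →
      ∀ (v2 : ℝ → EReal) (v3 : ℝ → ℝ), V2Hyp ε r0 v2 → V3Hyp ε v3 →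
      ∀ (n : ℕ) (x : Fin n → Pt) (hx : Function.Injective x),
      (∀ y : Fin n → Pt, Function.Injective y → energy r0 v2 v3 x ≤ energy r0 v2 v3 y) →
      EpsRegular ε (natGraph r0 x hx) ∧
        ∀ p ∈ (natGraph r0 x hx).V, deg (natGraph r0 x hx) p ≤ 4 := by
  have hπ := Real.pi_gt_three
  refine ⟨1 / 100, by norm_num, by linarith, ?_⟩
  intro ε hε hε100 r0 hr01 hr02 v2 v3 h2 h3 n x hx hmin
  have hε1 : ε ≤ 1 / 100 := le_of_lt hε100
  have hmd := Aux.min_dist ε r0 v2 v3 hε hε1 hr01 h2 h3 x hx hmin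
  have hag := Aux.angles_good ε r0 v2 v3 hε hε1 hr01 h2 h3 x hx hmin
  refine ⟨⟨?_, ?_⟩, ?_⟩
  · -- bond lengths
    intro a b hab
    obtain ⟨ia, ib, ha, hb, hne, -⟩ := Aux.edge_decode hab
    rw [← ha, ← hb]
    exact le_of_lt (hmd ia ib hne)
  · -- bond angles
    intro a b c hab hcb hac
    obtain ⟨ia, ib, ha, hb, hne, hd⟩ := Aux.edge_decode hab
    obtain ⟨ic, ib', hc, hb', hne', hd'⟩ := Aux.edge_decode hcb
    have hbb : ib' = ib := hx (by rw [hb, hb'])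
    rw [hbb] at hd' hne'
    have hjk : ia ≠ ic := by
      intro h
      apply hac
      rw [← ha, ← hc, h]
    have := hag ib ia ic hne hne' hjk
      (by rw [dist_comm]; exact hd) (by rw [dist_comm]; exact hd')
    rw [ha, hb, hc] at this
    exact this
  · -- degrees
    intro p hp
    obtain ⟨i₀, rfl⟩ := hp
    have hsub : nbhd (natGraph r0 x hx) (x i₀) ⊆
        (x '' ((Finset.univ.erase i₀).filter
          (fun j => dist (x i₀) (x j) ≤ r0) : Finset (Fin n))) := by
      intro q hq
      obtain ⟨ip, iq, hip, hiq, hne, hd⟩ := Aux.edge_decode (hx := hx) hq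
      have hii : ip = i₀ := hx hip
      rw [hii] at hne hd
      refine ⟨iq, ?_, hiq⟩
      rw [Finset.coe_filter]
      exact ⟨Finset.mem_erase.mpr ⟨Ne.symm hne, Finset.mem_univ _⟩, hd⟩
    have h1 : deg (natGraph r0 x hx) (x i₀)
        ≤ (x '' ((Finset.univ.erase i₀).filter
          (fun j => dist (x i₀) (x j) ≤ r0) : Finset (Fin n))).ncard :=
      Set.ncard_le_ncard hsub ((Finset.finite_toSet _).image x)
    have h2' : (x '' ((Finset.univ.erase i₀).filter
          (fun j => dist (x i₀) (x j) ≤ r0) : Finset (Fin n))).ncard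
        ≤ ((Finset.univ.erase i₀).filter (fun j => dist (x i₀) (x j) ≤ r0)).card := by
      have := Set.ncard_image_le (f := x)
        (s := ((Finset.univ.erase i₀).filter
          (fun j => dist (x i₀) (x j) ≤ r0) : Set (Fin n))) (Finset.finite_toSet _)
      rw [Set.ncard_coe_finset] at this
      exact this
    have h3' := Aux.deg_le_four ε r0 v2 v3 hε hε1 hr01 h2 h3 x hx hmin i₀
    omega

end
end

section
/- Let ε ∈ (0, π/6) and let G = (V,E) be an ε-regular graph. If θ_ex(γ) < 3π/2 − ε for every straight path γ of G, then every straight path of G is open. -/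
open scoped Real

noncomputable section

/-- The `i`-th vertex of a path (with junk value `0` out of range). -/
def nth (γ : List Pt) (i : ℕ) : Pt := γ.getD i 0

/-- The interior angle `θ_{i+2} = θ_{x_{i+2}, x_{i+1}, x_i}` of a path (`0`-based). -/
noncomputable def pathAngle (γ : List Pt) (i : ℕ) : ℝ :=
  cwAngle (nth γ (i + 2) - nth γ (i + 1)) (nth γ i - nth γ (i + 1))

/-- The list of (unordered) edges of a path. -/
def pathEdges (γ : List Pt) : List (Sym2 Pt) := (γ.zip γ.tail).map (fun p => s(p.1, p.2))

/-- A straight path of the graph `G`. -/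
def IsStraightPath (ε : ℝ) (G : BondGraph) (γ : List Pt) : Prop :=
  2 ≤ γ.length ∧
  (∀ x ∈ γ, x ∈ G.V) ∧
  γ.Chain' (fun a b => s(a, b) ∈ G.E) ∧
  (∀ i : ℕ, i + 2 < γ.length → pathAngle γ i ∈ Set.Icc (π - ε) (π + ε)) ∧
  (pathEdges γ).Nodup

/-- A path is closed if its first and last points coincide. -/
def IsClosedPath (γ : List Pt) : Prop := γ.head? = γ.getLast?

/-- The angle excess `θ_ex(γ)` of a path. -/
noncomputable def thetaEx (γ : List Pt) : ℝ :=
  ∑ i ∈ Finset.range (γ.length - 2), |pathAngle γ i - π|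

/-- Two lists are identified if they agree up to reversal. -/
def revSetoid : Setoid (List Pt) where
  r a b := a = b ∨ a = b.reverse
  iseqv := by
    constructor
    · intro a; exact Or.inl rfl
    · intro a b h
      rcases h with h | h
      · exact Or.inl h.symm
      · right; rw [h, List.reverse_reverse]
    · intro a b c hab hbc
      rcases hab with h | h <;> rcases hbc with h' | h' <;>
        simp [h, h', List.reverse_reverse]

/-- An (undirected) stratum: a list of points up to reversal. -/
def Stratum : Type := Quotient revSetoid

/-- The length `l(s)` of a stratum. -/
def Stratum.len : Stratum → ℕ :=
  Quotient.lift List.length (by rintro a b (rfl | rfl) <;> simp)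

/-- The set of vertices of a stratum. -/
def Stratum.verts : Stratum → Set Pt :=
  Quotient.lift (fun l => {x : Pt | x ∈ l}) (by
    rintro a b (rfl | rfl)
    · rfl
    · ext x; simp)

/-- `γ` is a subpath of `γ'`, up to reversal. -/
def SubPathUpToRev (γ γ' : List Pt) : Prop := γ <:+: γ' ∨ γ <:+: γ'.reverse

/-- A maximal straight path (maximal with respect to inclusion). -/
def IsMaximalStraight (ε : ℝ) (G : BondGraph) (γ : List Pt) : Prop :=
  IsStraightPath ε G γ ∧
    ∀ γ' : List Pt, IsStraightPath ε G γ' → SubPathUpToRev γ γ' →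
      (γ' = γ ∨ γ' = γ.reverse)

/-- `x ∈ V₂^π`: a vertex of degree two whose bond angle lies in `[π−ε, π+ε]`. -/
def V2pi (ε : ℝ) (G : BondGraph) (x : Pt) : Prop :=
  x ∈ G.V ∧ ∃ x₁ x₂ : Pt, x₁ ≠ x₂ ∧ nbhd G x = {x₁, x₂} ∧
    cwAngle (x₁ - x) (x₂ - x) ∈ Set.Icc (π - ε) (π + ε)

/-- The set of strata `S(G)`: maximal straight paths, together with the degenerate
one-point stratum `(x)` counted twice for `x ∈ V₀` and once for `x ∈ V₁ ∪ V₂^π`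
(the `Fin 2` tag realizes the multiplicity). -/
def strataSet (ε : ℝ) (G : BondGraph) : Set (Stratum × Fin 2) :=
  {p | ∃ γ : List Pt, IsMaximalStraight ε G γ ∧ p = (Quotient.mk revSetoid γ, 0)}
  ∪ {p | ∃ x ∈ G.V, deg G x = 0 ∧
      (p = (Quotient.mk revSetoid [x], 0) ∨ p = (Quotient.mk revSetoid [x], 1))}
  ∪ {p | ∃ x ∈ G.V, (deg G x = 1 ∨ V2pi ε G x) ∧ p = (Quotient.mk revSetoid [x], 0)}

/-- The set of orthogonal strata `S^⊥(s)`. -/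
def orthStrata (ε : ℝ) (G : BondGraph) (s : Stratum × Fin 2) : Set (Stratum × Fin 2) :=
  {s' | s' ∈ strataSet ε G ∧ s' ≠ s ∧ (Stratum.verts s.1 ∩ Stratum.verts s'.1).Nonempty}


/-! ### Auxiliary lemmas for `open_of_small_excess` -/

noncomputable def Complex.abs : AbsoluteValue ℂ ℝ where
  toFun := fun z => ‖z‖
  map_mul' := norm_mul
  nonneg' := norm_nonneg
  eq_zero' := fun _ => norm_eq_zero
  add_le' := norm_add_le

lemma Complex.abs_apply (z : ℂ) : Complex.abs z = √(Complex.normSq z) := Complex.norm_def z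

lemma Complex.abs_mul_exp_arg_mul_I (x : ℂ) :
    ((Complex.abs x : ℝ) : ℂ) * Complex.exp (x.arg * Complex.I) = x :=
  Complex.norm_mul_exp_arg_mul_I x

lemma Complex.abs_conj (z : ℂ) : Complex.abs ((starRingEnd ℂ) z) = Complex.abs z :=
  Complex.norm_conj z

noncomputable def auxToC (p : Pt) : ℂ := ⟨p 0, p 1⟩

lemma auxToC_sub (p q : Pt) : auxToC (p - q) = auxToC p - auxToC q := by
  simp [auxToC, Complex.ext_iff]

lemma aux_abs_toC_sub (p q : Pt) : Complex.abs (auxToC p - auxToC q) = dist p q := by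
  rw [EuclideanSpace.dist_eq, Complex.abs_apply, Complex.normSq_apply]
  congr 1
  simp [auxToC, Real.dist_eq, Fin.sum_univ_two, sq_abs]
  ring

noncomputable def auxArgN (w : ℂ) : ℝ := if w.arg < 0 then w.arg + 2 * π else w.arg

lemma aux_cwAngle_eq (u v : Pt) :
    cwAngle u v = auxArgN (auxToC u * (starRingEnd ℂ) (auxToC v)) := rfl

lemma aux_expN (w : ℂ) :
    w = (Complex.abs w : ℝ) * Complex.exp (auxArgN w * Complex.I) := by
  unfold auxArgN
  split_ifs with h
  · rw [show ((w.arg + 2*π : ℝ) : ℂ) * Complex.I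
        = w.arg * Complex.I + 2*π*Complex.I by push_cast; ring,
      Complex.exp_add, Complex.exp_two_pi_mul_I, mul_one, Complex.abs_mul_exp_arg_mul_I]
  · rw [Complex.abs_mul_exp_arg_mul_I]

lemma aux_rot (u v : ℂ) :
    v * (starRingEnd ℂ) u
      = (Complex.abs (v * (starRingEnd ℂ) (-u)) : ℝ)
        * Complex.exp ((auxArgN (v * (starRingEnd ℂ) (-u)) - π) * Complex.I) := by
  have h1 : v * (starRingEnd ℂ) u = -(v * (starRingEnd ℂ) (-u)) := by
    simp [map_neg]
  conv_lhs => rw [h1, aux_expN (v * (starRingEnd ℂ) (-u))]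
  have h2 : ((auxArgN (v * (starRingEnd ℂ) (-u)) : ℂ) - (π:ℂ)) * Complex.I
      = (auxArgN (v * (starRingEnd ℂ) (-u)) : ℂ) * Complex.I + (-((π:ℂ) * Complex.I)) := by
    ring
  rw [h2, Complex.exp_add, Complex.exp_neg, Complex.exp_pi_mul_I]
  ring

lemma aux_closed (γ : List Pt) (h2 : 2 ≤ γ.length) (hc : IsClosedPath γ) :
    nth γ 0 = nth γ (γ.length - 1) := by
  have hne : γ ≠ [] := by intro he; rw [he] at h2; simp at h2
  have hpos : 0 < γ.length := List.length_pos_iff.2 hne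
  have h0 : γ.head? = some (γ[0]'hpos) := by
    cases γ with
    | nil => exact absurd rfl hne
    | cons a t => rfl
  have h1 : γ.getLast? = some (γ[γ.length - 1]'(by omega)) := by
    rw [List.getLast?_eq_getLast hne, List.getLast_eq_getElem]
  have hcc := hc
  rw [IsClosedPath, h0, h1] at hcc
  have h3 := Option.some_injective _ hcc
  rw [nth, nth, List.getD_eq_getElem γ 0 hpos, List.getD_eq_getElem γ 0 (by omega), h3]

lemma aux_pathEdges_length (γ : List Pt) : (pathEdges γ).length = γ.length - 1 := by
  simp [pathEdges]

lemma aux_pathEdges_get (γ : List Pt) (i : ℕ) (h : i + 1 < γ.length) :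
    (pathEdges γ)[i]'(by rw [aux_pathEdges_length]; omega)
      = s(nth γ i, nth γ (i+1)) := by
  rw [nth, nth, List.getD_eq_getElem γ 0 (by omega), List.getD_eq_getElem γ 0 (by omega)]
  simp only [pathEdges, List.getElem_map, List.getElem_zip, List.getElem_tail]

lemma aux_chain_get (γ : List Pt) (R : Pt → Pt → Prop) (hc : γ.Chain' R) (i : ℕ)
    (h : i + 1 < γ.length) : R (nth γ i) (nth γ (i+1)) := by
  rw [nth, nth, List.getD_eq_getElem γ 0 (by omega), List.getD_eq_getElem γ 0 (by omega)]
  have := List.isChain_iff_getElem.mp hc i (by omega)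
  simpa using this

lemma aux_nodup_inj {α : Type*} (l : List α) (h : l.Nodup) {i j : ℕ}
    (hi : i < l.length) (hj : j < l.length) (he : l[i] = l[j]) : i = j := by
  have h2 := (h.get_inj_iff (i := ⟨i, hi⟩) (j := ⟨j, hj⟩))
  simp only [List.get_eq_getElem] at h2
  have := h2.mp he
  exact congrArg Fin.val this

/-- **Lemma (small angle excess, (i)).** If every straight path has angle excess less than
`3π/2 − ε`, then every straight path is open. -/
theorem open_of_small_excess (ε : ℝ) (hε0 : 0 < ε) (hε : ε < π / 6)
    (G : BondGraph) (hreg : EpsRegular ε G)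
    (hex : ∀ γ : List Pt, IsStraightPath ε G γ → thetaEx γ < 3 * π / 2 - ε) :
    ∀ γ : List Pt, IsStraightPath ε G γ → ¬ IsClosedPath γ := by
  intro γ hγ hclosed
  obtain ⟨hlen, hV, hchain, hang, hnodup⟩ := hγ
  have hπ : (0:ℝ) < π := Real.pi_pos
  have hε1 : ε < 1 := by nlinarith [Real.pi_le_four]
  set n := γ.length with hn
  have hcl : nth γ 0 = nth γ (n - 1) := aux_closed γ hlen hclosed
  have hE : ∀ i, i + 1 < n → s(nth γ i, nth γ (i+1)) ∈ G.E := fun i h =>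
    aux_chain_get γ _ hchain i h
  have hn3 : 3 ≤ n := by
    by_contra hcon
    have hn2 : n = 2 := by omega
    have he : s(nth γ 0, nth γ 1) ∈ G.E := hE 0 (by omega)
    have heq : nth γ 0 = nth γ 1 := by rw [hcl, hn2]
    exact G.not_diag _ he (by rw [Sym2.mk_isDiag_iff]; exact heq)
  have hne2 : nth γ (n-2) ≠ nth γ 1 := by
    intro heq
    have h1 := aux_pathEdges_get γ 0 (by omega)
    have h2 := aux_pathEdges_get γ (n-2) (by rw [← hn]; omega)
    have h3 : s(nth γ (n-2), nth γ (n-2+1)) = s(nth γ 0, nth γ 1) := by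
      rw [show n-2+1 = n-1 by omega, heq, ← hcl, Sym2.eq_swap]
    have h4 := aux_nodup_inj _ hnodup
      (i := 0) (j := n-2)
      (by rw [aux_pathEdges_length, ← hn]; omega)
      (by rw [aux_pathEdges_length, ← hn]; omega)
      (by rw [h1, h2, h3])
    omega
  -- complex coordinates
  set z : ℕ → ℂ := fun i => auxToC (nth γ i) with hzdef
  set u : ℕ → ℂ := fun i => z (i+1) - z i with hudef
  set β : ℕ → ℝ := fun i => pathAngle γ i - π with hβdef
  set σ : ℕ → ℝ := fun j => ∑ i ∈ Finset.range j, β i with hσdef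
  set t := (u 0).arg with htdef
  have hσ0 : σ 0 = 0 := by simp [hσdef]
  have hσsucc : ∀ j, σ (j+1) = σ j + β j := by
    intro j; simp [hσdef, Finset.sum_range_succ]
  have habs : ∀ i, i + 1 < n → 1 - ε ≤ Complex.abs (u i) := by
    intro i h
    have h1 := hreg.1 _ _ (hE i h)
    calc 1 - ε ≤ dist (nth γ i) (nth γ (i+1)) := h1
      _ = Complex.abs (z i - z (i+1)) := (aux_abs_toC_sub _ _).symm
      _ = Complex.abs (u i) := by
          simp only [hudef]
          rw [show z i - z (i+1) = -(z (i+1) - z i) by ring, AbsoluteValue.map_neg]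
  have hupos : ∀ i, i + 1 < n → 0 < Complex.abs (u i) := fun i h =>
    lt_of_lt_of_le (by linarith) (habs i h)
  have hβrel : ∀ i, i + 2 < n →
      u (i+1) * (starRingEnd ℂ) (u i)
        = ((Complex.abs (u (i+1)) * Complex.abs (u i) : ℝ) : ℂ)
            * Complex.exp ((β i : ℝ) * Complex.I) := by
    intro i h
    have h1 : pathAngle γ i = auxArgN (u (i+1) * (starRingEnd ℂ) (-(u i))) := by
      rw [pathAngle, aux_cwAngle_eq]
      congr 1
      rw [auxToC_sub, auxToC_sub]
      simp only [hudef, hzdef]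
      simp only [map_sub, map_neg, map_add]
      ring
    have habsprod : Complex.abs (u (i+1) * (starRingEnd ℂ) (-(u i)))
        = Complex.abs (u (i+1)) * Complex.abs (u i) := by
      rw [map_mul, map_neg, AbsoluteValue.map_neg, Complex.abs_conj]
    have h2 := aux_rot (u i) (u (i+1))
    rw [h2, ← h1, habsprod]
    simp only [hβdef]
    push_cast
    ring_nf
  have hβbd : ∀ i, i + 2 < n → |β i| ≤ ε := by
    intro i h
    have h1 := hang i (by omega)
    rw [Set.mem_Icc] at h1
    simp only [hβdef]
    rw [abs_le]
    constructor <;> linarith [h1.1, h1.2]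
  have hA : ∀ j, j + 1 < n →
      u j = ((Complex.abs (u j) : ℝ) : ℂ) * Complex.exp (((t + σ j : ℝ)) * Complex.I) := by
    intro j
    induction j with
    | zero =>
      intro _
      rw [hσ0, add_zero, htdef]
      exact (Complex.abs_mul_exp_arg_mul_I (u 0)).symm
    | succ j ih =>
      intro h
      have ihh := ih (by omega)
      have hrel := hβrel j (by omega)
      push_cast at hrel
      have hrne : ((Complex.abs (u j) : ℝ) : ℂ) ≠ 0 := by
        exact_mod_cast ne_of_gt (hupos j (by omega))
      have hmc : (starRingEnd ℂ) (u j) * u j = ((Complex.abs (u j) : ℝ) : ℂ)^2 := by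
        rw [Complex.conj_mul']; norm_cast
      have hexp : Complex.exp (((t + σ (j+1) : ℝ)) * Complex.I)
          = Complex.exp (((β j : ℝ)) * Complex.I)
            * Complex.exp (((t + σ j : ℝ)) * Complex.I) := by
        rw [← Complex.exp_add]
        congr 1
        rw [hσsucc j]
        push_cast; ring
      have hmain : u (j+1) * ((Complex.abs (u j):ℝ):ℂ)^2
          = (((Complex.abs (u (j+1)) : ℝ):ℂ)
              * Complex.exp (((t + σ (j+1):ℝ)) * Complex.I))
            * ((Complex.abs (u j):ℝ):ℂ)^2 := by
        linear_combination (-(u (j+1))) * hmc + (u j) * hrel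
          + (((Complex.abs (u (j+1)) : ℝ):ℂ) * ((Complex.abs (u j) : ℝ):ℂ)
              * Complex.exp (((β j : ℝ)) * Complex.I)) * ihh
          + (-(((Complex.abs (u (j+1)) : ℝ):ℂ) * ((Complex.abs (u j) : ℝ):ℂ)^2)) * hexp
      exact mul_right_cancel₀ (pow_ne_zero 2 hrne) hmain
  have hsum0 : ∑ j ∈ Finset.range (n-1), u j = 0 := by
    have h1 := Finset.sum_range_sub z (n-1)
    simp only [hudef]
    rw [h1]
    simp only [hzdef]
    rw [show nth γ (n-1) = nth γ 0 from hcl.symm, sub_self]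
  -- Claim C : some two partial sums differ by at least π
  have hCC : ∃ a b, a ≤ n - 2 ∧ b ≤ n - 2 ∧ π ≤ σ a - σ b := by
    obtain ⟨a, ha, hamax⟩ := Finset.exists_max_image (Finset.range (n-1)) σ
      ⟨0, Finset.mem_range.2 (by omega)⟩
    obtain ⟨b, hb, hbmin⟩ := Finset.exists_min_image (Finset.range (n-1)) σ
      ⟨0, Finset.mem_range.2 (by omega)⟩
    have ha' := Finset.mem_range.1 ha
    have hb' := Finset.mem_range.1 hb
    refine ⟨a, b, by omega, by omega, ?_⟩
    by_contra hlt
    push_neg at hlt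
    have hba : σ b ≤ σ a := hbmin a ha
    set c := (σ a + σ b)/2 with hcdef
    have hzero : (0:ℝ) = ∑ j ∈ Finset.range (n-1),
        Complex.abs (u j) * Real.cos (σ j - c) := by
      have h1 : ((0:ℂ)) = ∑ j ∈ Finset.range (n-1),
          u j * Complex.exp (-((t + c : ℝ):ℂ) * Complex.I) := by
        rw [← Finset.sum_mul, hsum0, zero_mul]
      have h2 : ∀ j ∈ Finset.range (n-1),
          (u j * Complex.exp (-((t + c:ℝ):ℂ) * Complex.I)).re
            = Complex.abs (u j) * Real.cos (σ j - c) := by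
        intro j hj
        rw [Finset.mem_range] at hj
        conv_lhs => rw [hA j (by omega)]
        rw [mul_assoc, ← Complex.exp_add,
          show ((t + σ j : ℝ):ℂ) * Complex.I + -((t + c:ℝ):ℂ) * Complex.I
            = ((σ j - c : ℝ):ℂ) * Complex.I by push_cast; ring,
          Complex.re_ofReal_mul, Complex.exp_ofReal_mul_I_re]
      calc (0:ℝ) = ((0:ℂ)).re := rfl
        _ = (∑ j ∈ Finset.range (n-1),
              u j * Complex.exp (-((t + c:ℝ):ℂ) * Complex.I)).re := by rw [← h1]
        _ = ∑ j ∈ Finset.range (n-1),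
              (u j * Complex.exp (-((t+c:ℝ):ℂ) * Complex.I)).re := Complex.re_sum _ _
        _ = ∑ j ∈ Finset.range (n-1),
              Complex.abs (u j) * Real.cos (σ j - c) := Finset.sum_congr rfl h2
    have hpos : ∀ j ∈ Finset.range (n-1),
        0 < Complex.abs (u j) * Real.cos (σ j - c) := by
      intro j hj
      have hj' := Finset.mem_range.1 hj
      have h3 := hamax j hj
      have h4 := hbmin j hj
      have hcos : 0 < Real.cos (σ j - c) := by
        apply Real.cos_pos_of_mem_Ioo
        constructor
        · rw [hcdef]; linarith
        · rw [hcdef]; linarith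
      exact mul_pos (hupos j (by omega)) hcos
    have hgt := Finset.sum_pos hpos ⟨0, Finset.mem_range.2 (by omega)⟩
    linarith
  -- Claim D : closure angle
  have he1 : s(nth γ 1, nth γ 0) ∈ G.E := by
    rw [Sym2.eq_swap]; exact hE 0 (by omega)
  have he2 : s(nth γ (n-2), nth γ 0) ∈ G.E := by
    have h1 := hE (n-2) (by omega)
    rw [show n-2+1 = n-1 by omega, ← hcl] at h1
    exact h1
  have hgood := hreg.2 _ _ _ he2 he1 hne2
  set θ' := cwAngle (nth γ (n-2) - nth γ 0) (nth γ 1 - nth γ 0) with hθdef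
  have hθbd : |θ' - π| ≤ π/2 + ε := by
    rcases hgood with (h|h)|h <;>
      (rw [Set.mem_Icc] at h; rw [abs_le];
        constructor <;> linarith [h.1, h.2, hε0.le])
  have hD : ∃ k : ℤ, σ (n-2) = θ' - π + k * (2*π) := by
    have hr := aux_rot (u 0) (u (n-2))
    have hw : u (n-2) * (starRingEnd ℂ) (-(u 0))
        = auxToC (nth γ (n-2) - nth γ 0) * (starRingEnd ℂ) (auxToC (nth γ 1 - nth γ 0)) := by
      rw [auxToC_sub, auxToC_sub]
      simp only [hudef, hzdef]
      rw [show n-2+1 = n-1 by omega, show nth γ (n-1) = nth γ 0 from hcl.symm, map_neg]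
      ring
    have hθeq : θ' = auxArgN (u (n-2) * (starRingEnd ℂ) (-(u 0))) := by
      rw [hθdef, aux_cwAngle_eq, ← hw]
    have habsprod : Complex.abs (u (n-2) * (starRingEnd ℂ) (-(u 0)))
        = Complex.abs (u (n-2)) * Complex.abs (u 0) := by
      rw [map_mul, map_neg, AbsoluteValue.map_neg, Complex.abs_conj]
    have hA2 := hA (n-2) (by omega)
    have hA0 := hA 0 (by omega)
    rw [hσ0, add_zero] at hA0
    have ha0 := hupos 0 (by omega)
    have ha2 := hupos (n-2) (by omega)
    have hc0 : (starRingEnd ℂ) (u 0)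
        = ((Complex.abs (u 0):ℝ):ℂ) * Complex.exp (-(((t:ℝ):ℂ) * Complex.I)) := by
      conv_lhs => rw [hA0]
      rw [map_mul, Complex.conj_ofReal, ← Complex.exp_conj]
      congr 1
      rw [map_mul, Complex.conj_ofReal, Complex.conj_I]
      ring
    have h1 : u (n-2) * (starRingEnd ℂ) (u 0)
        = ((Complex.abs (u (n-2)) * Complex.abs (u 0) : ℝ):ℂ)
          * Complex.exp (((θ' - π : ℝ):ℂ) * Complex.I) := by
      rw [hr, ← hθeq, habsprod]
      push_cast
      ring_nf
    have hexp2 : Complex.exp (((t + σ (n-2) : ℝ):ℂ) * Complex.I)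
          * Complex.exp (-(((t:ℝ):ℂ) * Complex.I))
        = Complex.exp (((σ (n-2) : ℝ):ℂ) * Complex.I) := by
      rw [← Complex.exp_add]
      congr 1
      push_cast
      ring
    have h2 : u (n-2) * (starRingEnd ℂ) (u 0)
        = ((Complex.abs (u (n-2)) * Complex.abs (u 0) : ℝ):ℂ)
          * Complex.exp (((σ (n-2) : ℝ):ℂ) * Complex.I) := by
      push_cast
      linear_combination ((starRingEnd ℂ) (u 0)) * hA2
        + (((Complex.abs (u (n-2)):ℝ):ℂ)
            * Complex.exp (((t + σ (n-2) : ℝ):ℂ) * Complex.I)) * hc0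
        + (((Complex.abs (u (n-2)):ℝ):ℂ) * ((Complex.abs (u 0):ℝ):ℂ)) * hexp2
    have hcan : ((Complex.abs (u (n-2)) * Complex.abs (u 0) : ℝ):ℂ) ≠ 0 := by
      exact_mod_cast ne_of_gt (mul_pos ha2 ha0)
    have hEq : Complex.exp (((σ (n-2) : ℝ):ℂ) * Complex.I)
        = Complex.exp (((θ' - π : ℝ):ℂ) * Complex.I) :=
      mul_left_cancel₀ hcan (h2.symm.trans h1)
    obtain ⟨k, hk⟩ := Complex.exp_eq_exp_iff_exists_int.mp hEq
    refine ⟨k, ?_⟩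
    have hkk : ((σ (n-2) : ℝ):ℂ) = ((θ' - π + k * (2*π) : ℝ):ℂ) := by
      apply mul_right_cancel₀ Complex.I_ne_zero
      push_cast at hk ⊢
      linear_combination hk
    exact_mod_cast hkk
  -- total variation facts
  have hTV : ∑ i ∈ Finset.range (n-2), |β i| < 3*π/2 - ε := by
    have h1 := hex γ ⟨hlen, hV, hchain, hang, hnodup⟩
    have h2 : thetaEx γ = ∑ i ∈ Finset.range (n-2), |β i| := by
      simp only [thetaEx, ← hn, hβdef]
    rw [h2] at h1
    exact h1
  have hblock : ∀ p q : ℕ, p ≤ q → |σ q - σ p| ≤ ∑ i ∈ Finset.Ico p q, |β i| := by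
    intro p q hpq
    have h1 : σ q - σ p = ∑ i ∈ Finset.Ico p q, β i := by
      simp only [hσdef]
      rw [Finset.sum_Ico_eq_sub β hpq]
    rw [h1]
    exact Finset.abs_sum_le_sum_abs β (Finset.Ico p q)
  have hsplit : ∀ p q : ℕ, p ≤ q → q ≤ n - 2 →
      ∑ i ∈ Finset.Ico 0 p, |β i| + ∑ i ∈ Finset.Ico p q, |β i|
        + ∑ i ∈ Finset.Ico q (n-2), |β i| = ∑ i ∈ Finset.range (n-2), |β i| := by
    intro p q h1 h2
    rw [Finset.sum_Ico_consecutive (fun i => |β i|) (Nat.zero_le p) h1,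
      Finset.sum_Ico_consecutive (fun i => |β i|) (Nat.zero_le q) h2,
      Finset.range_eq_Ico]
  obtain ⟨a, b, ha2, hb2, hab⟩ := hCC
  obtain ⟨k, hk⟩ := hD
  -- k = 0
  have hσEbd : |σ (n-2)| ≤ ∑ i ∈ Finset.range (n-2), |β i| := by
    have h1 := hblock 0 (n-2) (Nat.zero_le _)
    rw [hσ0, sub_zero, ← Finset.range_eq_Ico] at h1
    exact h1
  have hk0 : k = 0 := by
    by_contra hk0
    have h1 : (1:ℝ) ≤ |(k:ℝ)| := by
      have : (1:ℤ) ≤ |k| := Int.one_le_abs (by omega)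
      exact_mod_cast this
    have h2 : |(k:ℝ) * (2*π)| = |(k:ℝ)| * (2*π) := by
      rw [abs_mul, abs_of_pos (by linarith : (0:ℝ) < 2*π)]
    have h3 : |(k:ℝ)*(2*π)| ≤ |σ (n-2)| + |θ' - π| := by
      rw [show (k:ℝ)*(2*π) = σ (n-2) - (θ' - π) by linarith [hk]]
      calc |σ (n-2) - (θ' - π)| = |σ (n-2) + (-(θ' - π))| := by ring_nf
        _ ≤ |σ (n-2)| + |(-(θ' - π))| := abs_add_le _ _
        _ = |σ (n-2)| + |θ' - π| := by rw [abs_neg]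
    nlinarith [hσEbd, hTV, hθbd]
  rw [hk0] at hk
  push_cast at hk
  have hσE : |σ (n-2)| ≤ π/2 + ε := by
    rw [show σ (n-2) = θ' - π by linarith [hk]]
    exact hθbd
  have hσE1 := abs_le.1 hσE
  rcases le_total a b with hab' | hab'
  · have e1 := hsplit a b hab' hb2
    have e2 := hblock 0 a (Nat.zero_le a)
    have e3 := hblock a b hab'
    have e4 := hblock b (n-2) hb2
    rw [hσ0, sub_zero] at e2
    have l2 : σ a ≤ |σ a| := le_abs_self _
    have l3 : σ a - σ b ≤ |σ b - σ a| := by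
      rw [abs_sub_comm]; exact le_abs_self _
    have l4 : σ (n-2) - σ b ≤ |σ (n-2) - σ b| := le_abs_self _
    linarith
  · have e1 := hsplit b a hab' ha2
    have e2 := hblock 0 b (Nat.zero_le b)
    have e3 := hblock b a hab'
    have e4 := hblock a (n-2) ha2
    rw [hσ0, sub_zero] at e2
    have l2 : -(σ b) ≤ |σ b| := neg_le_abs _
    have l3 : σ a - σ b ≤ |σ a - σ b| := le_abs_self _
    have l4 : σ a - σ (n-2) ≤ |σ (n-2) - σ a| := by
      rw [abs_sub_comm]; exact le_abs_self _
    linarith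

end
end

section
/- Let ε ∈ (0, π/6) and let G = (V,E) be an ε-regular graph. If θ_ex(γ) < π/6 − ε for every straight path γ of G, then for every stratum s ∈ S(G) and any two distinct orthogonal strata s₁, s₂ ∈ S^⊥(s) one has s₁ ∩ s₂ = ∅. -/
open scoped Real

noncomputable section

/-! ### Auxiliary toolkit -/

namespace OSD

noncomputable def toC (u : Pt) : ℂ := ⟨u 0, u 1⟩

lemma toC_sub (u v : Pt) : toC (u - v) = toC u - toC v := by
  simp [toC, Complex.ext_iff]

lemma abs_toC (u : Pt) : ‖toC u‖ = ‖u‖ := by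
  rw [EuclideanSpace.norm_eq, Complex.norm_def, Complex.normSq_apply]
  norm_num [toC, Fin.sum_univ_two]
  ring_nf

noncomputable def aA (z : ℂ) : Real.Angle := (Complex.arg z : Real.Angle)

noncomputable def A2 (z w : ℂ) : Real.Angle := aA z - aA w

lemma A2_trans (x y z : ℂ) : A2 x z = A2 x y + A2 y z := by
  simp only [A2]; abel

lemma A2_self (z : ℂ) : A2 z z = 0 := by simp [A2]

lemma A2_anti (z w : ℂ) : A2 z w = - A2 w z := by simp only [A2]; abel

lemma aA_neg {z : ℂ} (hz : z ≠ 0) : aA (-z) = aA z + (π : Real.Angle) := by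
  simp [aA, Complex.arg_neg_coe_angle hz]

lemma A2_neg_left {z w : ℂ} (hz : z ≠ 0) : A2 (-z) w = A2 z w + (π : Real.Angle) := by
  simp only [A2, aA_neg hz]; abel

lemma A2_neg_right {z w : ℂ} (hw : w ≠ 0) : A2 z (-w) = A2 z w + (π : Real.Angle) := by
  simp only [A2, aA_neg hw]
  rw [sub_add_eq_sub_sub, sub_eq_add_neg (aA z - aA w), Real.Angle.neg_coe_pi]

lemma A2_neg_neg {z w : ℂ} (hz : z ≠ 0) (hw : w ≠ 0) : A2 (-z) (-w) = A2 z w := by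
  rw [A2_neg_left hz, A2_neg_right hw, add_assoc, Real.Angle.coe_pi_add_coe_pi, add_zero]

lemma cwAngle_def (u v : Pt) : cwAngle u v =
    if (toC u * (starRingEnd ℂ) (toC v)).arg < 0
    then (toC u * (starRingEnd ℂ) (toC v)).arg + 2 * π
    else (toC u * (starRingEnd ℂ) (toC v)).arg := rfl

/-- `cwAngle` coerced to `Real.Angle`. -/
lemma cw_coe (u v : Pt) :
    ((cwAngle u v : ℝ) : Real.Angle) = aA (toC u * (starRingEnd ℂ) (toC v)) := by
  rw [cwAngle_def]
  split_ifs with h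
  · rw [Real.Angle.coe_add, Real.Angle.coe_two_pi, add_zero]; rfl
  · rfl

lemma cw_coe' {u v : Pt} (hu : toC u ≠ 0) (hv : toC v ≠ 0) :
    ((cwAngle u v : ℝ) : Real.Angle) = A2 (toC u) (toC v) := by
  rw [cw_coe, aA, Complex.arg_mul_coe_angle hu (by simpa using hv),
    Complex.arg_conj_coe_angle]
  simp [A2, aA, sub_eq_add_neg]

lemma cw_mem_Ico (u v : Pt) : cwAngle u v ∈ Set.Ico 0 (2 * π) := by
  have h1 := Complex.arg_mem_Ioc (toC u * (starRingEnd ℂ) (toC v))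
  rw [Set.mem_Ioc] at h1
  have hπ := Real.pi_pos
  rw [cwAngle_def]
  split_ifs with h <;> constructor <;> linarith [h1.1, h1.2]

lemma cw_eq_of_coe {u v : Pt} {r : ℝ} (hr0 : 0 ≤ r) (hr1 : r < 2 * π)
    (h : ((cwAngle u v : ℝ) : Real.Angle) = (r : Real.Angle)) : cwAngle u v = r := by
  obtain ⟨k, hk⟩ := Real.Angle.angle_eq_iff_two_pi_dvd_sub.1 h
  have hm := cw_mem_Ico u v
  rw [Set.mem_Ico] at hm
  have hπ := Real.pi_pos
  have hk0 : k = 0 := by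
    by_contra hk0
    rcases lt_or_gt_of_ne hk0 with h' | h'
    · have h2 : (k : ℝ) ≤ -1 := by exact_mod_cast (show k ≤ -1 by omega)
      nlinarith
    · have h2 : (1 : ℝ) ≤ (k : ℝ) := by exact_mod_cast h'
      nlinarith
  rw [hk0] at hk
  push_cast at hk
  linarith

/-! ### `toReal` estimates -/

lemma coe_neg_pi : ((-π : ℝ) : Real.Angle) = ((π : ℝ) : Real.Angle) := by
  rw [Real.Angle.coe_neg, Real.Angle.neg_coe_pi]

lemma toReal_pi : ((π : ℝ) : Real.Angle).toReal = π :=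
  Real.Angle.toReal_coe_eq_self_iff.2 ⟨by linarith [Real.pi_pos], le_refl _⟩

lemma abs_toReal_coe_eq {r : ℝ} (h : |r| ≤ π) : |((r : ℝ) : Real.Angle).toReal| = |r| := by
  rcases eq_or_lt_of_le (neg_le_of_abs_le h) with h2 | h2
  · rw [← h2, coe_neg_pi, toReal_pi, abs_neg]
  · rw [Real.Angle.toReal_coe_eq_self_iff.2 ⟨h2, le_of_abs_le h⟩]

lemma abs_toReal_coe_le (r : ℝ) : |((r : ℝ) : Real.Angle).toReal| ≤ |r| := by
  rcases le_or_gt |r| π with h | h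
  · rw [abs_toReal_coe_eq h]
  · exact le_trans (Real.Angle.abs_toReal_le_pi _) h.le

lemma angle_add_abs (θ ψ : Real.Angle) : |(θ + ψ).toReal| ≤ |θ.toReal| + |ψ.toReal| := by
  have h : θ + ψ = ((θ.toReal + ψ.toReal : ℝ) : Real.Angle) := by
    rw [Real.Angle.coe_add, Real.Angle.coe_toReal, Real.Angle.coe_toReal]
  rw [h]
  exact le_trans (abs_toReal_coe_le _) (abs_add_le _ _)

lemma angle_neg_abs (θ : Real.Angle) : |(-θ).toReal| = |θ.toReal| := by
  have h : -θ = ((-θ.toReal : ℝ) : Real.Angle) := by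
    rw [Real.Angle.coe_neg, Real.Angle.coe_toReal]
  rw [h, abs_toReal_coe_eq (by rw [abs_neg]; exact Real.Angle.abs_toReal_le_pi _), abs_neg]

lemma angle_sub_abs (θ ψ : Real.Angle) : |(θ - ψ).toReal| ≤ |θ.toReal| + |ψ.toReal| := by
  rw [sub_eq_add_neg]
  exact le_trans (angle_add_abs _ _) (by rw [angle_neg_abs])

/-- Triangle inequality through an intermediate angle. -/
lemma angle_tri (θ ψ χ : Real.Angle) : |(θ - ψ).toReal| ≤ |(θ - χ).toReal| + |(χ - ψ).toReal| := by
  have h : θ - ψ = (θ - χ) + (χ - ψ) := by abel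
  rw [h]; exact angle_add_abs _ _

lemma angle_rev_tri (θ ψ : Real.Angle) : |θ.toReal| - |ψ.toReal| ≤ |(θ + ψ).toReal| := by
  have h := angle_add_abs (θ + ψ) (-ψ)
  rw [add_neg_cancel_right, angle_neg_abs] at h
  linarith

end OSD

namespace OSD

/-! ### Sector (cone) lemmas -/

lemma sector_re_im {z : ℂ} {a : ℝ} (hz : z ≠ 0) (ha0 : 0 ≤ a) (ha : a < π / 2)
    (h : |z.arg| ≤ a) : Real.cos a * ‖z‖ ≤ z.re ∧ |z.im| ≤ Real.tan a * z.re := by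
  have hπ := Real.pi_pos
  have habs : 0 < ‖z‖ := norm_pos_iff.mpr hz
  have hca : 0 < Real.cos a := Real.cos_pos_of_mem_Ioo ⟨by linarith, ha⟩
  have hc : Real.cos a ≤ Real.cos z.arg := by
    rw [← Real.cos_abs z.arg]
    exact Real.cos_le_cos_of_nonneg_of_le_pi (abs_nonneg _) (by linarith) h
  have hre : Real.cos a * ‖z‖ ≤ z.re := by
    rw [← Complex.norm_mul_cos_arg z, mul_comm]
    exact mul_le_mul_of_nonneg_left hc habs.le
  refine ⟨hre, ?_⟩
  have hsin : |Real.sin z.arg| ≤ Real.sin a := by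
    have hmono : Real.sin |z.arg| ≤ Real.sin a :=
      Real.sin_le_sin_of_le_of_le_pi_div_two (by linarith [abs_nonneg z.arg]) ha.le h
    rcases le_or_gt 0 z.arg with h0 | h0
    · rw [abs_of_nonneg h0] at hmono
      rw [abs_of_nonneg (Real.sin_nonneg_of_nonneg_of_le_pi h0 (by
          rw [abs_of_nonneg h0] at h; linarith))]
      exact hmono
    · rw [abs_of_neg h0] at hmono
      rw [abs_of_nonpos (by
        have : Real.sin (-z.arg) ≥ 0 := Real.sin_nonneg_of_nonneg_of_le_pi (by linarith) (by
          rw [abs_of_neg h0] at h; linarith)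
        rw [Real.sin_neg] at this; linarith)]
      rw [← Real.sin_neg]
      exact hmono
  have him : |z.im| ≤ Real.sin a * ‖z‖ := by
    rw [← Complex.norm_mul_sin_arg z, abs_mul, abs_of_nonneg habs.le, mul_comm (‖z‖)]
    exact mul_le_mul_of_nonneg_right hsin habs.le
  have hsa : 0 ≤ Real.sin a := Real.sin_nonneg_of_nonneg_of_le_pi ha0 (by linarith)
  calc |z.im| ≤ Real.sin a * ‖z‖ := him
    _ ≤ Real.tan a * z.re := by
        rw [Real.tan_eq_sin_div_cos, div_mul_eq_mul_div, le_div_iff₀ hca]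
        calc Real.sin a * ‖z‖ * Real.cos a
            = Real.sin a * (Real.cos a * ‖z‖) := by ring
          _ ≤ Real.sin a * z.re := mul_le_mul_of_nonneg_left hre hsa

lemma sector_of_re_im {z : ℂ} {a : ℝ} (ha0 : 0 ≤ a) (ha : a < π / 2)
    (hre : 0 < z.re) (him : |z.im| ≤ Real.tan a * z.re) : |z.arg| ≤ a := by
  have hπ := Real.pi_pos
  have hca : 0 < Real.cos a := Real.cos_pos_of_mem_Ioo ⟨by linarith, ha⟩
  have hz : z ≠ 0 := fun h => by simp [h] at hre
  have habs : 0 < ‖z‖ := norm_pos_iff.mpr hz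
  -- |z| * cos a ≤ re
  have key : ‖z‖ * Real.cos a ≤ z.re := by
    have h1 : z.im ^ 2 * Real.cos a ^ 2 ≤ Real.sin a ^ 2 * z.re ^ 2 := by
      have := him
      rw [Real.tan_eq_sin_div_cos] at this
      have h2 : |z.im| * Real.cos a ≤ Real.sin a * z.re := by
        rw [div_mul_eq_mul_div] at this
        calc |z.im| * Real.cos a ≤ (Real.sin a * z.re / Real.cos a) * Real.cos a :=
              mul_le_mul_of_nonneg_right this hca.le
          _ = Real.sin a * z.re := by field_simp
      have h3 : 0 ≤ |z.im| * Real.cos a := mul_nonneg (abs_nonneg _) hca.le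
      calc z.im ^ 2 * Real.cos a ^ 2 = (|z.im| * Real.cos a) ^ 2 := by
            rw [mul_pow, sq_abs]
        _ ≤ (Real.sin a * z.re) ^ 2 := by nlinarith
        _ = Real.sin a ^ 2 * z.re ^ 2 := by ring
    have h4 : (‖z‖ * Real.cos a) ^ 2 ≤ z.re ^ 2 := by
      have habs2 : ‖z‖ ^ 2 = z.re ^ 2 + z.im ^ 2 := by
        rw [Complex.sq_norm, Complex.normSq_apply]; ring
      have hsc := Real.sin_sq_add_cos_sq a
      nlinarith
    nlinarith
  have hc : Real.cos a ≤ Real.cos z.arg := by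
    rw [← Complex.norm_mul_cos_arg z] at key
    have := (mul_le_mul_iff_right₀ habs).1 key
    exact this
  by_contra hcon
  push_neg at hcon
  have hargle : |z.arg| ≤ π := by
    have h5 := Complex.arg_mem_Ioc z
    rw [abs_le]; exact ⟨by linarith [h5.1], h5.2⟩
  have : Real.cos |z.arg| < Real.cos a :=
    Real.cos_lt_cos_of_nonneg_of_le_pi ha0 hargle hcon
  rw [Real.cos_abs] at this
  linarith

lemma conj_ne_zero {g : ℂ} (hg : g ≠ 0) : (starRingEnd ℂ) g ≠ 0 := by simpa using hg

lemma A2_coe_arg {z g : ℂ} (hz : z ≠ 0) (hg : g ≠ 0) :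
    A2 z g = (((z * (starRingEnd ℂ) g).arg : ℝ) : Real.Angle) := by
  rw [Complex.arg_mul_coe_angle hz (conj_ne_zero hg), Complex.arg_conj_coe_angle]
  simp [A2, aA, sub_eq_add_neg]

lemma A2_toReal_arg {z g : ℂ} (hz : z ≠ 0) (hg : g ≠ 0) :
    (A2 z g).toReal = (z * (starRingEnd ℂ) g).arg := by
  rw [A2_coe_arg hz hg]
  have h := Complex.arg_mem_Ioc (z * (starRingEnd ℂ) g)
  exact Real.Angle.toReal_coe_eq_self_iff.2 ⟨h.1, h.2⟩

/-- Adding two vectors in a closed cone of half-angle `a < π/2` around `g`. -/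
lemma cone_add {g z w : ℂ} (hg : g ≠ 0) (hz : z ≠ 0) (hw : w ≠ 0) {a : ℝ}
    (ha0 : 0 ≤ a) (ha : a < π / 2)
    (h1 : |(A2 z g).toReal| ≤ a) (h2 : |(A2 w g).toReal| ≤ a) :
    z + w ≠ 0 ∧ |(A2 (z + w) g).toReal| ≤ a := by
  have hZ : z * (starRingEnd ℂ) g ≠ 0 := mul_ne_zero hz (conj_ne_zero hg)
  have hW : w * (starRingEnd ℂ) g ≠ 0 := mul_ne_zero hw (conj_ne_zero hg)
  rw [A2_toReal_arg hz hg] at h1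
  rw [A2_toReal_arg hw hg] at h2
  obtain ⟨hre1, him1⟩ := sector_re_im hZ ha0 ha h1
  obtain ⟨hre2, him2⟩ := sector_re_im hW ha0 ha h2
  have hπ := Real.pi_pos
  have hca : 0 < Real.cos a := Real.cos_pos_of_mem_Ioo ⟨by linarith, ha⟩
  have habs1 : 0 < ‖z * (starRingEnd ℂ) g‖ := norm_pos_iff.mpr hZ
  have habs2 : 0 < ‖w * (starRingEnd ℂ) g‖ := norm_pos_iff.mpr hW
  have hrepos : 0 < ((z + w) * (starRingEnd ℂ) g).re := by
    have : (z + w) * (starRingEnd ℂ) g = z * (starRingEnd ℂ) g + w * (starRingEnd ℂ) g := by ring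
    rw [this, Complex.add_re]
    nlinarith
  have hzw : z + w ≠ 0 := by
    intro h
    rw [h] at hrepos
    simp at hrepos
  refine ⟨hzw, ?_⟩
  rw [A2_toReal_arg hzw hg]
  apply sector_of_re_im ha0 ha hrepos
  have heq : (z + w) * (starRingEnd ℂ) g = z * (starRingEnd ℂ) g + w * (starRingEnd ℂ) g := by ring
  rw [heq, Complex.add_im, Complex.add_re]
  calc |(z * (starRingEnd ℂ) g).im + (w * (starRingEnd ℂ) g).im|
      ≤ |(z * (starRingEnd ℂ) g).im| + |(w * (starRingEnd ℂ) g).im| := abs_add_le _ _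
    _ ≤ Real.tan a * (z * (starRingEnd ℂ) g).re + Real.tan a * (w * (starRingEnd ℂ) g).re := by
        linarith
    _ = Real.tan a * ((z * (starRingEnd ℂ) g).re + (w * (starRingEnd ℂ) g).re) := by ring

end OSD

namespace OSD

/-! ### Path machinery -/

noncomputable def zz (γ : List Pt) (i : ℕ) : ℂ := toC (nth γ i)
noncomputable def ee (γ : List Pt) (i : ℕ) : ℂ := zz γ (i + 1) - zz γ i

lemma nth_eq_getElem (γ : List Pt) (i : ℕ) (h : i < γ.length) : nth γ i = γ[i] :=
  List.getD_eq_getElem _ _ h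

lemma hε1 {ε : ℝ} (hε : ε < π / 6) : ε < 1 := by
  have := Real.pi_le_four
  linarith

section PathBasics

variable {ε : ℝ} {G : BondGraph} {γ : List Pt}

lemma edge_mem (hγ : IsStraightPath ε G γ) {i : ℕ} (h : i + 1 < γ.length) :
    s(nth γ i, nth γ (i + 1)) ∈ G.E := by
  have hc := List.isChain_iff_getElem.1 hγ.2.2.1 i (by omega)
  rw [nth_eq_getElem _ _ (by omega), nth_eq_getElem _ _ h]
  simpa using hc

lemma edge_vec_ne {x y : Pt} (hε : ε < π / 6) (hd : 1 - ε ≤ dist x y) : toC (x - y) ≠ 0 := by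
  intro h
  have h2 : ‖toC (x - y)‖ = 0 := by rw [h]; simp
  rw [abs_toC, ← dist_eq_norm] at h2
  have := hε1 hε
  linarith

lemma edge_vec_ne' {x y : Pt} (hε : ε < π / 6) (hreg : EpsRegular ε G)
    (h : s(x, y) ∈ G.E) : toC (x - y) ≠ 0 :=
  edge_vec_ne hε (hreg.1 x y h)

lemma ee_ne (hε : ε < π / 6) (hreg : EpsRegular ε G) (hγ : IsStraightPath ε G γ)
    {i : ℕ} (h : i + 1 < γ.length) : ee γ i ≠ 0 := by
  have h1 : ee γ i = toC (nth γ (i + 1) - nth γ i) := by rw [toC_sub]; rfl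
  rw [h1]
  exact edge_vec_ne hε (by
    rw [dist_comm]
    exact hreg.1 _ _ (edge_mem hγ h))

lemma pathAngle_coe (hε : ε < π / 6) (hreg : EpsRegular ε G) (hγ : IsStraightPath ε G γ)
    {i : ℕ} (h : i + 2 < γ.length) :
    ((pathAngle γ i : ℝ) : Real.Angle) = A2 (ee γ (i + 1)) (ee γ i) + (π : Real.Angle) := by
  have hu : toC (nth γ (i + 2) - nth γ (i + 1)) ≠ 0 := by
    rw [show i + 2 = (i+1)+1 by ring] at *
    exact edge_vec_ne hε (by rw [dist_comm]; exact hreg.1 _ _ (edge_mem hγ h))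
  have hv : toC (nth γ i - nth γ (i + 1)) ≠ 0 :=
    edge_vec_ne hε (hreg.1 _ _ (edge_mem hγ (by omega)))
  rw [pathAngle, cw_coe' hu hv]
  have e1 : toC (nth γ (i + 2) - nth γ (i + 1)) = ee γ (i + 1) := by
    rw [toC_sub]; rfl
  have e2 : toC (nth γ i - nth γ (i + 1)) = -ee γ i := by
    rw [toC_sub]; simp [ee, zz]
  rw [e1, e2, A2_neg_right (by
    have : toC (nth γ i - nth γ (i+1)) = - ee γ i := by rw [toC_sub]; simp [ee, zz]
    intro hz; rw [hz] at this; simp at this; exact hv (by rw [this]))]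

lemma turn_bound (hε : ε < π / 6) (hreg : EpsRegular ε G) (hγ : IsStraightPath ε G γ)
    {i : ℕ} (h : i + 2 < γ.length) :
    |(A2 (ee γ (i + 1)) (ee γ i)).toReal| ≤ |pathAngle γ i - π| := by
  have h1 := pathAngle_coe hε hreg hγ h
  have h2 : A2 (ee γ (i + 1)) (ee γ i) = ((pathAngle γ i - π : ℝ) : Real.Angle) := by
    rw [Real.Angle.coe_sub, h1]
    abel
  rw [h2]
  exact abs_toReal_coe_le _

lemma thetaEx_nonneg (γ : List Pt) : 0 ≤ thetaEx γ :=
  Finset.sum_nonneg fun _ _ => abs_nonneg _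

lemma edge_dir_le (hε : ε < π / 6) (hreg : EpsRegular ε G) (hγ : IsStraightPath ε G γ)
    {i j : ℕ} (hij : i ≤ j) (hj : j + 1 < γ.length) :
    |(A2 (ee γ j) (ee γ i)).toReal| ≤ thetaEx γ := by
  have key : ∀ j, i ≤ j → j + 1 < γ.length →
      |(A2 (ee γ j) (ee γ i)).toReal| ≤ ∑ m ∈ Finset.Ico i j, |pathAngle γ m - π| := by
    intro j hij
    induction j, hij using Nat.le_induction with
    | base => intro _; simp [A2_self]
    | succ j hij IH =>
      intro hj1
      have hsum : ∑ m ∈ Finset.Ico i (j + 1), |pathAngle γ m - π|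
          = (∑ m ∈ Finset.Ico i j, |pathAngle γ m - π|) + |pathAngle γ j - π| :=
        Finset.sum_Ico_succ_top hij _
      have h3 : A2 (ee γ (j + 1)) (ee γ i) = A2 (ee γ (j+1)) (ee γ j) + A2 (ee γ j) (ee γ i) :=
        A2_trans _ _ _
      rw [h3, hsum]
      have h4 := angle_add_abs (A2 (ee γ (j+1)) (ee γ j)) (A2 (ee γ j) (ee γ i))
      have h5 := turn_bound hε hreg hγ (show j + 2 < γ.length by omega)
      have h6 := IH (by omega)
      linarith
  have h7 := key j hij hj
  refine h7.trans (Finset.sum_le_sum_of_subset_of_nonneg ?_ (fun _ _ _ => abs_nonneg _))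
  intro m hm
  rw [Finset.mem_Ico] at hm
  rw [Finset.mem_range]
  omega

lemma edge_dir (hε : ε < π / 6) (hreg : EpsRegular ε G) (hγ : IsStraightPath ε G γ)
    {i j : ℕ} (hi : i + 1 < γ.length) (hj : j + 1 < γ.length) :
    |(A2 (ee γ j) (ee γ i)).toReal| ≤ thetaEx γ := by
  rcases le_total i j with h | h
  · exact edge_dir_le hε hreg hγ h hj
  · rw [A2_anti, angle_neg_abs]
    exact edge_dir_le hε hreg hγ h hi

lemma chord (hε : ε < π / 6) (hreg : EpsRegular ε G) (hγ : IsStraightPath ε G γ)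
    (hEx : thetaEx γ < π / 2)
    {i j m : ℕ} (hij : i < j) (hj : j < γ.length) (hm : m + 1 < γ.length) :
    zz γ j - zz γ i ≠ 0 ∧ |(A2 (zz γ j - zz γ i) (ee γ m)).toReal| ≤ thetaEx γ := by
  have hij' : i + 1 ≤ j := hij
  clear hij
  revert hj
  induction j, hij' using Nat.le_induction with
  | base =>
    intro hj
    have he : zz γ (i + 1) - zz γ i = ee γ i := rfl
    rw [he]
    exact ⟨ee_ne hε hreg hγ hj, edge_dir hε hreg hγ hm hj⟩
  | succ j hij IH =>
    intro hj
    have IH2 := IH (by omega)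
    have hsplit : zz γ (j + 1) - zz γ i = (zz γ j - zz γ i) + ee γ j := by
      rw [ee]; ring
    rw [hsplit]
    exact cone_add (ee_ne hε hreg hγ hm) IH2.1 (ee_ne hε hreg hγ hj)
      (thetaEx_nonneg γ) hEx IH2.2 (edge_dir hε hreg hγ hm hj)

lemma path_nodup (hε : ε < π / 6) (hreg : EpsRegular ε G) (hγ : IsStraightPath ε G γ)
    (hEx : thetaEx γ < π / 2) : γ.Nodup := by
  rw [List.nodup_iff_injective_get]
  intro a b hab
  by_contra hne
  have hne' : (a : ℕ) ≠ (b : ℕ) := Fin.val_ne_of_ne hne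
  have key : ∀ i j : ℕ, i < j → (hj : j < γ.length) → nth γ i ≠ nth γ j := by
    intro i j hij hj h
    have h1 := (chord hε hreg hγ hEx hij hj (show i + 1 < γ.length by omega)).1
    apply h1
    have : zz γ j - zz γ i = toC (nth γ j - nth γ i) := by rw [toC_sub]; rfl
    rw [this, h]
    simp [toC, Complex.ext_iff]
  rcases lt_or_gt_of_ne hne' with h | h
  · exact key a b h b.2 (by
      rw [nth_eq_getElem _ _ a.2, nth_eq_getElem _ _ b.2]
      simpa using hab)
  · exact key b a h a.2 (by
      rw [nth_eq_getElem _ _ a.2, nth_eq_getElem _ _ b.2]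
      simpa using hab.symm)

end PathBasics

end OSD

namespace OSD

/-! ### pathEdges structure, swaps, goodAngles -/

lemma pathEdges_length (γ : List Pt) : (pathEdges γ).length = γ.length - 1 := by
  simp [pathEdges]

lemma pathEdges_getElem (γ : List Pt) (k : ℕ) (h : k + 1 < γ.length)
    (h' : k < (pathEdges γ).length) :
    (pathEdges γ)[k] = s(nth γ k, nth γ (k + 1)) := by
  simp [pathEdges, List.getElem_zip, List.getElem_tail,
    nth_eq_getElem _ _ (show k < γ.length by omega), nth_eq_getElem _ _ h]

lemma pathEdges_mem {γ : List Pt} {e : Sym2 Pt} :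
    e ∈ pathEdges γ ↔ ∃ k, k + 1 < γ.length ∧ e = s(nth γ k, nth γ (k + 1)) := by
  rw [List.mem_iff_getElem]
  constructor
  · rintro ⟨k, hk, rfl⟩
    have hk2 : k + 1 < γ.length := by
      have := pathEdges_length γ; omega
    exact ⟨k, hk2, pathEdges_getElem γ k hk2 hk⟩

  · rintro ⟨k, hk, rfl⟩
    have hk' : k < (pathEdges γ).length := by rw [pathEdges_length]; omega
    exact ⟨k, hk', pathEdges_getElem γ k hk hk'⟩

lemma nth_inj {γ : List Pt} (hnd : γ.Nodup) {i j : ℕ} (hi : i < γ.length)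
    (hj : j < γ.length) (h : nth γ i = nth γ j) : i = j := by
  rw [nth_eq_getElem _ _ hi, nth_eq_getElem _ _ hj] at h
  exact (List.Nodup.getElem_inj_iff hnd).1 h

lemma pathEdges_nodup_of_nodup {γ : List Pt} (hnd : γ.Nodup) : (pathEdges γ).Nodup := by
  rw [List.nodup_iff_injective_get]
  intro a b hab
  have ha : (a : ℕ) + 1 < γ.length := by have := pathEdges_length γ; have := a.2; omega
  have hb : (b : ℕ) + 1 < γ.length := by have := pathEdges_length γ; have := b.2; omega
  have h1 : s(nth γ a, nth γ (a + 1)) = s(nth γ b, nth γ (b + 1)) := by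
    rw [← pathEdges_getElem γ a ha a.2, ← pathEdges_getElem γ b hb b.2]
    simpa using hab
  rw [Sym2.eq_iff] at h1
  apply Fin.ext
  rcases h1 with ⟨h2, _⟩ | ⟨h2, h3⟩
  · exact nth_inj hnd (by omega) (by omega) h2
  · have e1 := nth_inj hnd (by omega) (by omega) h2
    have e2 := nth_inj hnd (by omega) (by omega) h3
    omega

lemma cw_swap (u v : Pt) :
    ((cwAngle v u : ℝ) : Real.Angle) = -((cwAngle u v : ℝ) : Real.Angle) := by
  rw [cw_coe, cw_coe]
  have h : toC v * (starRingEnd ℂ) (toC u)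
      = (starRingEnd ℂ) (toC u * (starRingEnd ℂ) (toC v)) := by
    rw [map_mul, Complex.conj_conj]; ring
  rw [h, aA, Complex.arg_conj_coe_angle]; rfl

lemma cw_self (u : Pt) : cwAngle u u = 0 := by
  rw [cwAngle_def, Complex.mul_conj, Complex.arg_ofReal_of_nonneg (Complex.normSq_nonneg _)]
  simp

lemma cw_swap_Icc {ε : ℝ} {u v : Pt} (hεπ : ε < π)
    (h : cwAngle u v ∈ Set.Icc (π - ε) (π + ε)) :
    cwAngle v u ∈ Set.Icc (π - ε) (π + ε) := by
  obtain ⟨h1, h2⟩ := h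
  set r := cwAngle u v - π with hr
  have hπ := Real.pi_pos
  have hco : ((cwAngle v u : ℝ) : Real.Angle) = ((π - r : ℝ) : Real.Angle) := by
    rw [cw_swap]
    have h3 : cwAngle u v = π + r := by rw [hr]; ring
    rw [h3, ← Real.Angle.coe_neg]
    apply Real.Angle.angle_eq_iff_two_pi_dvd_sub.2 ⟨-1, by push_cast; ring⟩
  have h4 := cw_eq_of_coe (by simp only [hr]; linarith) (by simp only [hr]; linarith) hco
  rw [h4]
  constructor <;> simp only [hr] <;> linarith

lemma icc_to_angle {ε θ : ℝ} (h : θ ∈ Set.Icc (π - ε) (π + ε)) :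
    |(((θ : ℝ) : Real.Angle) - ((π : ℝ) : Real.Angle)).toReal| ≤ ε := by
  rw [← Real.Angle.coe_sub]
  refine le_trans (abs_toReal_coe_le _) ?_
  rw [abs_le]
  exact ⟨by linarith [h.1], by linarith [h.2]⟩

lemma angle_to_icc {ε : ℝ} {u v : Pt} (hεπ : ε < π)
    (hb : |(((cwAngle u v : ℝ) : Real.Angle) - ((π : ℝ) : Real.Angle)).toReal| ≤ ε) :
    cwAngle u v ∈ Set.Icc (π - ε) (π + ε) := by
  set r := (((cwAngle u v : ℝ) : Real.Angle) - ((π : ℝ) : Real.Angle)).toReal with hrdef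
  have hπ := Real.pi_pos
  have h1 : ((cwAngle u v : ℝ) : Real.Angle) = ((π + r : ℝ) : Real.Angle) := by
    rw [Real.Angle.coe_add, hrdef, Real.Angle.coe_toReal]
    abel
  have hrabs : |r| ≤ ε := hb
  rw [abs_le] at hrabs
  have h2 := cw_eq_of_coe (by linarith) (by linarith) h1
  rw [h2]
  constructor <;> linarith

/-- Trichotomy for good angles, at the `Real.Angle` level. -/
lemma ga_cases {ε θ : ℝ} (hε0 : 0 < ε) (hεπ : ε < π / 6) (h : θ ∈ goodAngles ε) :
    |(((θ : ℝ) : Real.Angle) - ((π/2 : ℝ) : Real.Angle)).toReal| ≤ ε ∨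
    |(((θ : ℝ) : Real.Angle) - ((π : ℝ) : Real.Angle)).toReal| ≤ ε ∨
    |(((θ : ℝ) : Real.Angle) + ((π/2 : ℝ) : Real.Angle)).toReal| ≤ ε := by
  rcases h with (h | h) | h
  · left
    rw [← Real.Angle.coe_sub]
    refine le_trans (abs_toReal_coe_le _) (abs_le.2 ⟨by linarith [h.1], by linarith [h.2]⟩)
  · right; left
    rw [← Real.Angle.coe_sub]
    refine le_trans (abs_toReal_coe_le _) (abs_le.2 ⟨by linarith [h.1], by linarith [h.2]⟩)
  · right; right
    rw [← Real.Angle.coe_add]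
    have he : ((θ + π/2 : ℝ) : Real.Angle) = ((θ - 3*π/2 : ℝ) : Real.Angle) :=
      Real.Angle.angle_eq_iff_two_pi_dvd_sub.2 ⟨1, by push_cast; ring⟩
    rw [he]
    refine le_trans (abs_toReal_coe_le _) (abs_le.2 ⟨by linarith [h.1], by linarith [h.2]⟩)

/-- Good angles are at distance at least `π/2 - ε` from `0` on the circle. -/
lemma ga_lower {ε θ : ℝ} (hε0 : 0 < ε) (hεπ : ε < π / 6) (h : θ ∈ goodAngles ε) :
    π / 2 - ε ≤ |((θ : ℝ) : Real.Angle).toReal| := by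
  have hπ := Real.pi_pos
  have hεπ2 : ε < π / 2 := by linarith
  rcases h with (h | h) | h
  · rw [abs_toReal_coe_eq (abs_le.2 ⟨by linarith [h.1], by linarith [h.2]⟩)]
    rw [abs_of_nonneg (by linarith [h.1])]
    linarith [h.1]
  · rcases le_or_gt θ π with hle | hlt
    · rw [abs_toReal_coe_eq (abs_le.2 ⟨by linarith [h.1], hle⟩)]
      rw [abs_of_nonneg (by linarith [h.1])]
      linarith [h.1]
    · have he : ((θ : ℝ) : Real.Angle) = (((θ - 2*π) : ℝ) : Real.Angle) :=
        Real.Angle.angle_eq_iff_two_pi_dvd_sub.2 ⟨1, by push_cast; ring⟩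
      rw [he, abs_toReal_coe_eq (abs_le.2 ⟨by linarith, by linarith [h.2]⟩)]
      rw [abs_of_nonpos (by linarith [h.2])]
      linarith [h.2]
  · have he : ((θ : ℝ) : Real.Angle) = (((θ - 2*π) : ℝ) : Real.Angle) :=
      Real.Angle.angle_eq_iff_two_pi_dvd_sub.2 ⟨1, by push_cast; ring⟩
    rw [he, abs_toReal_coe_eq (abs_le.2 ⟨by linarith [h.1], by linarith [h.2]⟩)]
    rw [abs_of_nonpos (by linarith [h.2])]
    linarith [h.2]

/-- If a good angle is within `ε` of `π` on the circle, it lies in `[π-ε, π+ε]` as a real. -/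
lemma ga_pi_real {ε θ : ℝ} (hε0 : 0 < ε) (hεπ : ε < π / 6)
    (h : θ ∈ goodAngles ε)
    (hb : |(((θ : ℝ) : Real.Angle) - ((π : ℝ) : Real.Angle)).toReal| ≤ ε) :
    θ ∈ Set.Icc (π - ε) (π + ε) := by
  have hπ := Real.pi_pos
  rcases h with (h | h) | h
  · exfalso
    have he : (((θ : ℝ) : Real.Angle) - ((π : ℝ) : Real.Angle)) = ((θ - π : ℝ) : Real.Angle) := by
      rw [Real.Angle.coe_sub]
    rw [he, abs_toReal_coe_eq (by rw [abs_le]; constructor <;> linarith [h.1, h.2])] at hb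
    rw [abs_le] at hb
    linarith [h.2, hb.1]
  · exact h
  · exfalso
    have he : (((θ : ℝ) : Real.Angle) - ((π : ℝ) : Real.Angle)) = ((θ - π : ℝ) : Real.Angle) := by
      rw [Real.Angle.coe_sub]
    rw [he, abs_toReal_coe_eq (by rw [abs_le]; constructor <;> linarith [h.1, h.2])] at hb
    rw [abs_le] at hb
    linarith [h.1, hb.2]

end OSD

namespace OSD

/-! ### Reversal, extension, unique continuation -/

lemma nth_reverse (γ : List Pt) (k : ℕ) (h : k < γ.length) :
    nth γ.reverse k = nth γ (γ.length - 1 - k) := by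
  rw [nth_eq_getElem _ _ (by simpa using h), nth_eq_getElem _ _ (by omega)]
  exact List.getElem_reverse _

lemma straight_reverse {ε : ℝ} {G : BondGraph} {γ : List Pt}
    (hεπ : ε < π / 6) (hγ : IsStraightPath ε G γ) (hnd : γ.Nodup) :
    IsStraightPath ε G γ.reverse := by
  have hπ := Real.pi_pos
  obtain ⟨hlen, hverts, hchain, hangs, hednd⟩ := hγ
  refine ⟨by simpa using hlen, fun x hx => hverts x (by simpa using hx), ?_, ?_,
    pathEdges_nodup_of_nodup (by simpa using hnd)⟩
  · change List.IsChain _ γ.reverse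
    rw [List.isChain_reverse]
    change List.IsChain (flip fun a b => s(a, b) ∈ G.E) γ
    have he : (flip fun a b => s(a, b) ∈ G.E) = fun a b : Pt => s(a, b) ∈ G.E := by
      funext a b
      simp only [flip, eq_iff_iff]
      rw [Sym2.eq_swap]
    rw [he]
    exact hchain
  · intro i h
    have hrl : γ.reverse.length = γ.length := by simp
    rw [hrl] at h
    set n := γ.length with hn
    have e0 : nth γ.reverse i = nth γ (n - 1 - i) := nth_reverse _ _ (by omega)
    have e1 : nth γ.reverse (i+1) = nth γ (n - 1 - (i+1)) := nth_reverse _ _ (by omega)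
    have e2 : nth γ.reverse (i+2) = nth γ (n - 1 - (i+2)) := nth_reverse _ _ (by omega)
    set j := n - 3 - i with hj
    have j0 : n - 1 - (i+2) = j := by omega
    have j1 : n - 1 - (i+1) = j + 1 := by omega
    have j2 : n - 1 - i = j + 2 := by omega
    have hrw : pathAngle γ.reverse i
        = cwAngle (nth γ j - nth γ (j+1)) (nth γ (j+2) - nth γ (j+1)) := by
      rw [pathAngle, e0, e1, e2, j0, j1, j2]
    rw [hrw]
    have hj2 := hangs j (by omega)
    rw [pathAngle] at hj2
    exact cw_swap_Icc (by linarith) hj2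

lemma max_reverse {ε : ℝ} {G : BondGraph} {γ : List Pt}
    (hεπ : ε < π / 6) (hm : IsMaximalStraight ε G γ) (hnd : γ.Nodup) :
    IsMaximalStraight ε G γ.reverse := by
  refine ⟨straight_reverse hεπ hm.1 hnd, ?_⟩
  intro γ' hγ' hsub
  have hsub' : SubPathUpToRev γ γ' := by
    rcases hsub with h | h
    · right
      simpa using List.reverse_infix.2 h
    · left
      have := List.reverse_infix.2 h
      simpa using this
  rcases hm.2 γ' hγ' hsub' with h | h
  · right; rw [h]; simp
  · left; rw [h]

lemma exists_cons_cons {γ : List Pt} (h : 2 ≤ γ.length) : ∃ a b l, γ = a :: b :: l := by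
  match γ, h with
  | a :: b :: l, _ => exact ⟨a, b, l, rfl⟩

/-- A maximal straight path cannot be extended at its head. -/
lemma ext_head {ε : ℝ} {G : BondGraph} {γ : List Pt}
    (hε0 : 0 < ε) (hεπ : ε < π / 6)
    (hm : IsMaximalStraight ε G γ) (hnd : γ.Nodup) {u : Pt}
    (hu : s(u, nth γ 0) ∈ G.E)
    (hang : cwAngle (nth γ 1 - nth γ 0) (u - nth γ 0) ∈ Set.Icc (π - ε) (π + ε)) : False := by
  have hπ := Real.pi_pos
  obtain ⟨hstr, hmax⟩ := hm
  obtain ⟨a, b, l, rfl⟩ := exists_cons_cons hstr.1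
  obtain ⟨hlen, hverts, hchain, hangs, hednd⟩ := hstr
  set γ := a :: b :: l with hγdef
  have ha0 : nth γ 0 = a := rfl
  have hb1 : nth γ 1 = b := rfl
  have hune : u ≠ b := by
    intro h
    rw [ha0, hb1, h] at hang
    rw [cw_self] at hang
    have := hang.1
    linarith
  have hstr' : IsStraightPath ε G (u :: γ) := by
    refine ⟨by simp [hγdef], ?_, ?_, ?_, ?_⟩
    · intro x hx
      rcases List.mem_cons.1 hx with rfl | hx
      · exact G.mem_V _ hu x (Sym2.mem_iff.2 (Or.inl rfl))
      · exact hverts x hx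
    · rw [hγdef]
      change List.IsChain _ _
      rw [List.isChain_cons_cons]
      rw [ha0] at hu
      exact ⟨hu, hchain⟩
    · intro i hi
      match i with
      | 0 =>
        have : pathAngle (u :: γ) 0 = cwAngle (nth γ 1 - nth γ 0) (u - nth γ 0) := by
          rw [pathAngle]
          rfl
        rw [this]
        exact hang
      | (i + 1) =>
        have : pathAngle (u :: γ) (i + 1) = pathAngle γ i := by
          rw [pathAngle, pathAngle]
          rfl
        rw [this]
        exact hangs i (by have h9 := hi; simp [hγdef] at h9 ⊢; omega)
    · have he : pathEdges (u :: γ) = s(u, a) :: pathEdges γ := rfl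
      rw [he, List.nodup_cons]
      refine ⟨?_, hednd⟩
      intro hmem
      obtain ⟨k, hk, hke⟩ := pathEdges_mem.1 hmem
      rw [Sym2.eq_iff] at hke
      rcases hke with ⟨h1, h2⟩ | ⟨h1, h2⟩
      · have : (0 : ℕ) = k + 1 := nth_inj hnd (by omega) (by omega) (by rw [ha0]; exact h2)
        omega
      · have hk0 : (0 : ℕ) = k := nth_inj hnd (by omega) (by omega) (by rw [ha0]; exact h2)
        apply hune
        rw [h1, ← hk0]
        exact hb1
  have hsub : SubPathUpToRev γ (u :: γ) := Or.inl ⟨[u], [], by simp⟩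
  rcases hmax (u :: γ) hstr' hsub with h | h
  · have := congrArg List.length h
    simp at this
  · have := congrArg List.length h
    simp at this

/-- Unique straight continuation. -/
lemma uc {ε : ℝ} {G : BondGraph} (hε0 : 0 < ε) (hεπ : ε < π / 6) (hreg : EpsRegular ε G)
    {a b c c' : Pt} (h2 : s(c, b) ∈ G.E) (h3 : s(c', b) ∈ G.E)
    (ha : toC (a - b) ≠ 0)
    (hc : cwAngle (c - b) (a - b) ∈ Set.Icc (π - ε) (π + ε))
    (hc' : cwAngle (c' - b) (a - b) ∈ Set.Icc (π - ε) (π + ε)) : c = c' := by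
  by_contra hne
  have hga := hreg.2 c b c' h2 h3 hne
  have hlow := ga_lower hε0 hεπ hga
  have hcne : toC (c - b) ≠ 0 := edge_vec_ne' hεπ hreg h2
  have hc'ne : toC (c' - b) ≠ 0 := edge_vec_ne' hεπ hreg h3
  have he : ((cwAngle (c - b) (c' - b) : ℝ) : Real.Angle)
      = A2 (toC (c - b)) (toC (c' - b)) := cw_coe' hcne hc'ne
  have htrans : A2 (toC (c - b)) (toC (c' - b))
      = (((cwAngle (c - b) (a - b) : ℝ) : Real.Angle) - ((π : ℝ) : Real.Angle))
        - ((((cwAngle (c' - b) (a - b) : ℝ) : Real.Angle)) - ((π : ℝ) : Real.Angle)) := by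
    rw [cw_coe' hcne ha, cw_coe' hc'ne ha, A2, A2, A2]
    abel
  have hbound : |(A2 (toC (c - b)) (toC (c' - b))).toReal| ≤ ε + ε := by
    rw [htrans]
    exact le_trans (angle_sub_abs _ _) (add_le_add (icc_to_angle hc) (icc_to_angle hc'))
  rw [he] at hlow
  linarith [hbound, hlow]

end OSD

namespace OSD

section Align

variable {ε : ℝ} {G : BondGraph}
  (hε0 : 0 < ε) (hεπ : ε < π / 6) (hreg : EpsRegular ε G)
  (hex : ∀ γ : List Pt, IsStraightPath ε G γ → thetaEx γ < π / 6 - ε)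

include hε0 hεπ hreg hex

lemma ex_half {γ : List Pt} (hγ : IsStraightPath ε G γ) : thetaEx γ < π / 2 := by
  have h := hex γ hγ
  have := Real.pi_pos
  linarith

lemma nodup' {γ : List Pt} (hγ : IsStraightPath ε G γ) : γ.Nodup :=
  path_nodup hεπ hreg hγ (ex_half hε0 hεπ hreg hex hγ)

lemma forward {σ τ : List Pt} (hσ : IsStraightPath ε G σ) (hτ : IsStraightPath ε G τ)
    {i j : ℕ}
    (h0 : nth σ i = nth τ j) (h1 : nth σ (i + 1) = nth τ (j + 1)) :
    ∀ m, i + m < σ.length → j + m < τ.length → nth σ (i + m) = nth τ (j + m) := by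
  intro m
  induction m using Nat.strong_induction_on with
  | _ m IH =>
    match m with
    | 0 => intro _ _; simpa using h0
    | 1 => intro _ _; simpa using h1
    | (m + 2) =>
      intro hm1 hm2
      have e0 : nth σ (i + m) = nth τ (j + m) := IH m (by omega) (by omega) (by omega)
      have e1 : nth σ (i + m + 1) = nth τ (j + m + 1) := IH (m + 1) (by omega) (by omega) (by omega)
      have hang1 := hσ.2.2.2.1 (i + m) (by omega)
      have hang2 := hτ.2.2.2.1 (j + m) (by omega)
      rw [pathAngle] at hang1 hang2
      have hE1 : s(nth σ (i + m + 2), nth σ (i + m + 1)) ∈ G.E := by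
        have h := edge_mem hσ (show (i + m + 1) + 1 < σ.length by omega)
        rwa [Sym2.eq_swap] at h
      have hE2 : s(nth τ (j + m + 2), nth τ (j + m + 1)) ∈ G.E := by
        have h := edge_mem hτ (show (j + m + 1) + 1 < τ.length by omega)
        rwa [Sym2.eq_swap] at h
      have hvec : toC (nth σ (i + m) - nth σ (i + m + 1)) ≠ 0 := by
        apply edge_vec_ne' hεπ hreg
        exact edge_mem hσ (show (i + m) + 1 < σ.length by omega)
      rw [← e0, ← e1] at hang2
      rw [← e1] at hE2
      have hfin := uc hε0 hεπ hreg hE1 hE2 hvec hang1 hang2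
      have heq1 : i + (m + 2) = i + m + 2 := by omega
      have heq2 : j + (m + 2) = j + m + 2 := by omega
      rw [heq1, heq2, hfin]

lemma noext {σ τ : List Pt} (hσ : IsMaximalStraight ε G σ) (hτ : IsStraightPath ε G τ)
    {i j : ℕ} (hi : i + 1 < σ.length) (hj : j + 1 < τ.length)
    (h0 : nth σ i = nth τ j) (h1 : nth σ (i + 1) = nth τ (j + 1)) :
    τ.length - j ≤ σ.length - i := by
  by_contra hcon
  push_neg at hcon
  set M := σ.length - 1 - i with hM
  have hM1 : 1 ≤ M := by omega
  have hjM : j + M + 1 < τ.length := by omega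
  have eA : nth σ (i + M) = nth τ (j + M) :=
    forward hε0 hεπ hreg hex hσ.1 hτ h0 h1 M (by omega) (by omega)
  have eB : nth σ (i + (M - 1)) = nth τ (j + (M - 1)) :=
    forward hε0 hεπ hreg hex hσ.1 hτ h0 h1 (M - 1) (by omega) (by omega)
  have hndσ := nodup' hε0 hεπ hreg hex hσ.1
  have hσr := max_reverse hεπ hσ hndσ
  have hrl : σ.reverse.length = σ.length := by simp
  have hr0 : nth σ.reverse 0 = nth σ (i + M) := by
    rw [nth_reverse σ 0 (by omega)]
    exact congrArg (nth σ) (by omega)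
  have hr1 : nth σ.reverse 1 = nth σ (i + (M - 1)) := by
    rw [nth_reverse σ 1 (by omega)]
    exact congrArg (nth σ) (by omega)
  -- the next point of τ
  have hedge : s(nth τ (j + M + 1), nth σ.reverse 0) ∈ G.E := by
    rw [hr0, eA]
    have h := edge_mem hτ (show (j + M) + 1 < τ.length by omega)
    rwa [Sym2.eq_swap] at h
  have hang : cwAngle (nth σ.reverse 1 - nth σ.reverse 0)
      (nth τ (j + M + 1) - nth σ.reverse 0) ∈ Set.Icc (π - ε) (π + ε) := by
    rw [hr0, hr1, eA, eB]
    have hpa := hτ.2.2.2.1 (j + M - 1) (by omega)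
    rw [pathAngle] at hpa
    rw [show j + M - 1 + 2 = j + M + 1 by omega, show j + M - 1 + 1 = j + M by omega] at hpa
    have hsw := cw_swap_Icc (by have := Real.pi_pos; linarith) hpa
    rw [show j + (M - 1) = j + M - 1 by omega]
    exact hsw
  exact ext_head hε0 hεπ hσr (by simpa using hndσ) hedge hang

lemma step_one {σ τ : List Pt} (hσ : IsStraightPath ε G σ) (hτ : IsStraightPath ε G τ)
    {a b : Pt} (hab : a ≠ b)
    {ia ib ja jb : ℕ} (hia : ia < ib) (hib : ib < σ.length) (hja : ja < jb)
    (hjb : jb < τ.length)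
    (ea : nth σ ia = a) (eb : nth σ ib = b) (fa : nth τ ja = a) (fb : nth τ jb = b) :
    nth σ (ia + 1) = nth τ (ja + 1) := by
  by_contra hne
  set c := nth σ (ia + 1) with hc
  set c' := nth τ (ja + 1) with hc'
  have hEc : s(c, a) ∈ G.E := by
    have h := edge_mem hσ (show ia + 1 < σ.length by omega)
    rw [ea] at h
    rwa [Sym2.eq_swap] at h
  have hEc' : s(c', a) ∈ G.E := by
    have h := edge_mem hτ (show ja + 1 < τ.length by omega)
    rw [fa] at h
    rwa [Sym2.eq_swap] at h
  have hga := hreg.2 c a c' hEc hEc' hne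
  have hlow := ga_lower hε0 hεπ hga
  -- chord vector
  have hchordσ := chord hεπ hreg hσ (ex_half hε0 hεπ hreg hex hσ) hia hib
    (show ia + 1 < σ.length by omega)
  have hchordτ := chord hεπ hreg hτ (ex_half hε0 hεπ hreg hex hτ) hja hjb
    (show ja + 1 < τ.length by omega)
  have hWeq : zz τ jb - zz τ ja = zz σ ib - zz σ ia := by
    simp only [zz, ea, eb, fa, fb]
  rw [hWeq] at hchordτ
  set W := zz σ ib - zz σ ia with hW
  have heσ : ee σ ia = toC (c - a) := by
    rw [toC_sub]
    simp only [ee, zz, hc, ea]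
  have heτ : ee τ ja = toC (c' - a) := by
    rw [toC_sub]
    simp only [ee, zz, hc', fa]
  have htr : A2 (toC (c - a)) (toC (c' - a))
      = (A2 (ee σ ia) W) + (A2 W (ee τ ja)) := by
    rw [← heσ, ← heτ, A2, A2, A2]
    abel
  have hcoe : ((cwAngle (c - a) (c' - a) : ℝ) : Real.Angle)
      = A2 (toC (c - a)) (toC (c' - a)) :=
    cw_coe' (edge_vec_ne' hεπ hreg hEc) (edge_vec_ne' hεπ hreg hEc')
  have hbound : |(A2 (toC (c - a)) (toC (c' - a))).toReal| ≤ thetaEx σ + thetaEx τ := by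
    rw [htr]
    refine le_trans (angle_add_abs _ _) ?_
    refine add_le_add ?_ hchordτ.2
    rw [A2_anti, angle_neg_abs]
    exact hchordσ.2
  rw [hcoe] at hlow
  have h1 := hex σ hσ
  have h2 := hex τ hτ
  have := Real.pi_pos
  linarith

lemma half {σ τ : List Pt} (hσ : IsMaximalStraight ε G σ) (hτ : IsMaximalStraight ε G τ)
    {a b : Pt} (hab : a ≠ b)
    {ia ib ja jb : ℕ} (hia : ia < ib) (hib : ib < σ.length) (hja : ja < jb)
    (hjb : jb < τ.length)
    (ea : nth σ ia = a) (eb : nth σ ib = b) (fa : nth τ ja = a) (fb : nth τ jb = b) :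
    σ.length - ia = τ.length - ja ∧
      (∀ m, ia + m < σ.length → nth σ (ia + m) = nth τ (ja + m)) := by
  have h0 : nth σ ia = nth τ ja := by rw [ea, fa]
  have h1 : nth σ (ia + 1) = nth τ (ja + 1) :=
    step_one hε0 hεπ hreg hex hσ.1 hτ.1 hab hia hib hja hjb ea eb fa fb
  have hle1 := noext hε0 hεπ hreg hex hσ hτ.1 (by omega) (by omega) h0 h1
  have hle2 := noext hε0 hεπ hreg hex hτ hσ.1 (by omega) (by omega) h0.symm h1.symm
  have hlen : σ.length - ia = τ.length - ja := by omega
  refine ⟨hlen, fun m hm => ?_⟩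
  exact forward hε0 hεπ hreg hex hσ.1 hτ.1 h0 h1 m hm (by omega)

lemma align_core {σ τ : List Pt} (hσ : IsMaximalStraight ε G σ) (hτ : IsMaximalStraight ε G τ)
    {a b : Pt} (hab : a ≠ b)
    {ia ib ja jb : ℕ} (hia : ia < ib) (hib : ib < σ.length) (hja : ja < jb)
    (hjb : jb < τ.length)
    (ea : nth σ ia = a) (eb : nth σ ib = b) (fa : nth τ ja = a) (fb : nth τ jb = b) :
    σ = τ := by
  have hndσ := nodup' hε0 hεπ hreg hex hσ.1
  have hndτ := nodup' hε0 hεπ hreg hex hτ.1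
  obtain ⟨hlen1, hal1⟩ := half hε0 hεπ hreg hex hσ hτ hab hia hib hja hjb ea eb fa fb
  have hjb' : jb = ja + (ib - ia) := by
    have h9 := hal1 (ib - ia) (by omega)
    rw [show ia + (ib - ia) = ib by omega] at h9
    refine nth_inj hndτ hjb (by omega) ?_
    rw [fb, ← h9, eb]
  -- reversed halves
  have hσr := max_reverse hεπ hσ hndσ
  have hτr := max_reverse hεπ hτ hndτ
  have hrlσ : σ.reverse.length = σ.length := by simp
  have hrlτ : τ.reverse.length = τ.length := by simp
  obtain ⟨hlen2, hal2⟩ := half hε0 hεπ hreg hex hσr hτr hab.symm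
    (ia := σ.length - 1 - ib) (ib := σ.length - 1 - ia)
    (ja := τ.length - 1 - jb) (jb := τ.length - 1 - ja)
    (by omega) (by omega) (by omega) (by omega)
    (by rw [nth_reverse _ _ (by omega), show σ.length - 1 - (σ.length - 1 - ib) = ib by omega]
        exact eb)
    (by rw [nth_reverse _ _ (by omega), show σ.length - 1 - (σ.length - 1 - ia) = ia by omega]
        exact ea)
    (by rw [nth_reverse _ _ (by omega), show τ.length - 1 - (τ.length - 1 - jb) = jb by omega]
        exact fb)
    (by rw [nth_reverse _ _ (by omega), show τ.length - 1 - (τ.length - 1 - ja) = ja by omega]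
        exact fa)
  rw [hrlσ, hrlτ] at hlen2
  have hib_jb : ib = jb := by omega
  have hia_ja : ia = ja := by omega
  have hlen : σ.length = τ.length := by omega
  apply List.ext_getElem hlen
  intro k hk1 hk2
  rcases le_or_gt ia k with hk | hk
  · have h9 := hal1 (k - ia) (by omega)
    rw [show ia + (k - ia) = k by omega, show ja + (k - ia) = k by omega] at h9
    rw [← nth_eq_getElem _ _ hk1, ← nth_eq_getElem _ _ hk2]
    exact h9
  · have h9 := hal2 (ib - k) (by rw [hrlσ]; omega)
    rw [show (σ.length - 1 - ib) + (ib - k) = σ.length - 1 - k by omega] at h9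
    rw [show (τ.length - 1 - jb) + (ib - k) = τ.length - 1 - k by omega] at h9
    rw [nth_reverse _ _ (by omega), nth_reverse _ _ (by omega)] at h9
    rw [show σ.length - 1 - (σ.length - 1 - k) = k by omega] at h9
    rw [show τ.length - 1 - (τ.length - 1 - k) = k by omega] at h9
    rw [← nth_eq_getElem _ _ hk1, ← nth_eq_getElem _ _ hk2]
    exact h9

/-- Two maximal straight paths sharing two distinct vertices agree up to reversal. -/
lemma align {σ τ : List Pt} (hσ : IsMaximalStraight ε G σ) (hτ : IsMaximalStraight ε G τ)
    {a b : Pt} (hab : a ≠ b)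
    (haσ : a ∈ σ) (hbσ : b ∈ σ) (haτ : a ∈ τ) (hbτ : b ∈ τ) :
    σ = τ ∨ σ = τ.reverse := by
  obtain ⟨ia, hia, ea⟩ := List.mem_iff_getElem.1 haσ
  obtain ⟨ib, hib, eb⟩ := List.mem_iff_getElem.1 hbσ
  obtain ⟨ja, hja, fa⟩ := List.mem_iff_getElem.1 haτ
  obtain ⟨jb, hjb, fb⟩ := List.mem_iff_getElem.1 hbτ
  rw [← nth_eq_getElem _ _ hia] at ea
  rw [← nth_eq_getElem _ _ hib] at eb
  rw [← nth_eq_getElem _ _ hja] at fa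
  rw [← nth_eq_getElem _ _ hjb] at fb
  have hndτ := nodup' hε0 hεπ hreg hex hτ.1
  have hτr := max_reverse hεπ hτ hndτ
  have hiab : ia ≠ ib := by
    intro h
    apply hab
    rw [← ea, ← eb, h]
  have hjab : ja ≠ jb := by
    intro h
    apply hab
    rw [← fa, ← fb, h]
  have hrlτ : τ.reverse.length = τ.length := by simp
  have far : nth τ.reverse (τ.length - 1 - ja) = a := by
    rw [nth_reverse _ _ (by omega), show τ.length - 1 - (τ.length - 1 - ja) = ja by omega]
    exact fa
  have fbr : nth τ.reverse (τ.length - 1 - jb) = b := by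
    rw [nth_reverse _ _ (by omega), show τ.length - 1 - (τ.length - 1 - jb) = jb by omega]
    exact fb
  rcases lt_or_gt_of_ne hiab with h1 | h1 <;> rcases lt_or_gt_of_ne hjab with h2 | h2
  · exact Or.inl (align_core hε0 hεπ hreg hex hσ hτ hab h1 hib h2 hjb ea eb fa fb)
  · refine Or.inr (align_core hε0 hεπ hreg hex hσ hτr hab h1 hib
      (ja := τ.length - 1 - ja) (jb := τ.length - 1 - jb) (by omega) (by rw [hrlτ]; omega)
      ea eb far fbr)
  · refine Or.inr (align_core hε0 hεπ hreg hex hσ hτr (Ne.symm hab) h1 hia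
      (ja := τ.length - 1 - jb) (jb := τ.length - 1 - ja) (by omega) (by rw [hrlτ]; omega)
      eb ea fbr far)
  · exact Or.inl (align_core hε0 hεπ hreg hex hσ hτ (Ne.symm hab) h1 hia h2 hja eb ea fb fa)

end Align

end OSD

namespace OSD

/-! ### Neighbors in a path, chord data -/

def PNbr (γ : List Pt) (p u : Pt) : Prop :=
  ∃ q, q < γ.length ∧ nth γ q = p ∧
    ((q + 1 < γ.length ∧ u = nth γ (q + 1)) ∨ (1 ≤ q ∧ u = nth γ (q - 1)))

lemma nth_mem {γ : List Pt} {q : ℕ} (h : q < γ.length) : nth γ q ∈ γ := by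
  rw [nth_eq_getElem _ _ h]
  exact List.getElem_mem _

section PN

variable {ε : ℝ} {G : BondGraph} {γ : List Pt}

lemma pnbr_edge (hγ : IsStraightPath ε G γ) {p u : Pt} (h : PNbr γ p u) : s(p, u) ∈ G.E := by
  obtain ⟨q, hq, rfl, hside⟩ := h
  rcases hside with ⟨h1, rfl⟩ | ⟨h1, rfl⟩
  · exact edge_mem hγ h1
  · have h2 := edge_mem hγ (show (q - 1) + 1 < γ.length by omega)
    rw [show q - 1 + 1 = q by omega] at h2
    rwa [Sym2.eq_swap] at h2

lemma pnbr_mem {p u : Pt} (h : PNbr γ p u) : u ∈ γ ∧ p ∈ γ := by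
  obtain ⟨q, hq, rfl, hside⟩ := h
  rcases hside with ⟨h1, rfl⟩ | ⟨h1, rfl⟩
  · exact ⟨nth_mem h1, nth_mem hq⟩
  · exact ⟨nth_mem (by omega), nth_mem hq⟩

lemma pnbr_ne (hnd : γ.Nodup) {p u : Pt} (h : PNbr γ p u) : u ≠ p := by
  obtain ⟨q, hq, rfl, hside⟩ := h
  rcases hside with ⟨h1, rfl⟩ | ⟨h1, rfl⟩ <;> intro he
  · have := nth_inj hnd h1 hq he; omega
  · have := nth_inj hnd (by omega) hq he; omega

lemma pnbr_exists (hγ : IsStraightPath ε G γ) {p : Pt} (hp : p ∈ γ) : ∃ u, PNbr γ p u := by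
  obtain ⟨q, hq, rfl⟩ := List.mem_iff_getElem.1 hp
  rw [← nth_eq_getElem _ _ hq]
  rcases lt_or_ge (q + 1) γ.length with h | h
  · exact ⟨nth γ (q + 1), q, hq, rfl, Or.inl ⟨h, rfl⟩⟩
  · have hq1 : 1 ≤ q := by have := hγ.1; omega
    exact ⟨nth γ (q - 1), q, hq, rfl, Or.inr ⟨hq1, rfl⟩⟩

lemma pnbr_vec_ne (hεπ : ε < π / 6) (hreg : EpsRegular ε G) (hγ : IsStraightPath ε G γ)
    {p u : Pt} (h : PNbr γ p u) : toC (u - p) ≠ 0 := by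
  have he := pnbr_edge hγ h
  rw [Sym2.eq_swap] at he
  exact edge_vec_ne' hεπ hreg he

lemma A2_negswap {a b : ℂ} (ha : a ≠ 0) (hb : b ≠ 0) :
    |(A2 (-b) a).toReal| = |(A2 (-a) b).toReal| := by
  have h : A2 (-b) a = -(A2 (-a) b) := by
    rw [A2_neg_left hb, A2_neg_left ha, neg_add, Real.Angle.neg_coe_pi]
    congr 1
    exact A2_anti b a
  rw [h, angle_neg_abs]

/-- Chord and edge data for two marked points on a straight path. -/
lemma two_pt_data (hεπ : ε < π / 6) (hreg : EpsRegular ε G) (hγ : IsStraightPath ε G γ)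
    (hEx : thetaEx γ < π / 2) {i j : ℕ} (hi : i < γ.length) (hj : j < γ.length)
    (hne : i ≠ j) :
    ∃ ui uj : Pt,
      PNbr γ (nth γ i) ui ∧ PNbr γ (nth γ j) uj ∧
      toC (nth γ j - nth γ i) ≠ 0 ∧
      |(A2 (toC (nth γ j - nth γ i)) (toC (ui - nth γ i))).toReal| ≤ thetaEx γ ∧
      |(A2 (toC (nth γ i - nth γ j)) (toC (uj - nth γ j))).toReal| ≤ thetaEx γ ∧
      |(A2 (-toC (uj - nth γ j)) (toC (ui - nth γ i))).toReal| ≤ thetaEx γ := by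
  have key : ∀ i j : ℕ, i < j → (j < γ.length) →
      ∃ ui uj : Pt,
      PNbr γ (nth γ i) ui ∧ PNbr γ (nth γ j) uj ∧
      toC (nth γ j - nth γ i) ≠ 0 ∧
      |(A2 (toC (nth γ j - nth γ i)) (toC (ui - nth γ i))).toReal| ≤ thetaEx γ ∧
      |(A2 (toC (nth γ i - nth γ j)) (toC (uj - nth γ j))).toReal| ≤ thetaEx γ ∧
      |(A2 (-toC (uj - nth γ j)) (toC (ui - nth γ i))).toReal| ≤ thetaEx γ := by
    clear hne hi hj
    intro i j hij hj
    refine ⟨nth γ (i + 1), nth γ (j - 1), ⟨i, by omega, rfl, Or.inl ⟨by omega, rfl⟩⟩,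
      ⟨j, by omega, rfl, Or.inr ⟨by omega, rfl⟩⟩, ?_, ?_, ?_, ?_⟩
    · have h := (chord hεπ hreg hγ hEx hij hj (show i + 1 < γ.length by omega)).1
      intro hzero
      apply h
      rw [show zz γ j - zz γ i = toC (nth γ j - nth γ i) from by rw [toC_sub]; rfl, hzero]
    · have h := (chord hεπ hreg hγ hEx hij hj (show i + 1 < γ.length by omega)).2
      have e1 : toC (nth γ (i+1) - nth γ i) = ee γ i := by rw [toC_sub]; rfl
      have e2 : toC (nth γ j - nth γ i) = zz γ j - zz γ i := by rw [toC_sub]; rfl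
      rw [e1, e2]
      exact h
    · have h := (chord hεπ hreg hγ hEx hij hj (show (j - 1) + 1 < γ.length by omega)).2
      have e1 : toC (nth γ (j-1) - nth γ j) = -ee γ (j-1) := by
        rw [toC_sub]
        simp only [ee, zz]
        rw [show j - 1 + 1 = j by omega]
        ring
      have e2 : toC (nth γ i - nth γ j) = -(zz γ j - zz γ i) := by
        rw [toC_sub]
        simp only [zz]
        ring
      rw [e1, e2]
      have hz : zz γ j - zz γ i ≠ 0 :=
        (chord hεπ hreg hγ hEx hij hj (show i + 1 < γ.length by omega)).1
      have hee : ee γ (j - 1) ≠ 0 := ee_ne hεπ hreg hγ (by omega)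
      rw [A2_neg_neg hz hee]
      exact h
    · have e1 : -toC (nth γ (j-1) - nth γ j) = ee γ (j-1) := by
        rw [toC_sub]
        simp only [ee, zz]
        rw [show j - 1 + 1 = j by omega]
        ring
      have e2 : toC (nth γ (i+1) - nth γ i) = ee γ i := by rw [toC_sub]; rfl
      rw [e1, e2]
      exact edge_dir hεπ hreg hγ (by omega) (by omega)
  rcases lt_or_gt_of_ne hne with h | h
  · exact key i j h hj
  · obtain ⟨uj, ui, h1, h2, h3, h4, h5, h6⟩ := key j i h hi
    refine ⟨ui, uj, h2, h1, ?_, h5, h4, ?_⟩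
    · intro hzero
      apply h3
      have : toC (nth γ i - nth γ j) = -toC (nth γ j - nth γ i) := by
        rw [toC_sub, toC_sub]; ring
      rw [this, hzero, neg_zero]
    · rw [A2_negswap (pnbr_vec_ne hεπ hreg hγ h2) (pnbr_vec_ne hεπ hreg hγ h1)]
      exact h6

end PN

section Perp

variable {ε : ℝ} {G : BondGraph}
  (hε0 : 0 < ε) (hεπ : ε < π / 6) (hreg : EpsRegular ε G)
  (hex : ∀ γ : List Pt, IsStraightPath ε G γ → thetaEx γ < π / 6 - ε)

include hε0 hεπ hreg hex

lemma not_shared {σ τ : List Pt} (hσ : IsMaximalStraight ε G σ)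
    (hτ : IsMaximalStraight ε G τ) (hne : ¬(σ = τ ∨ σ = τ.reverse))
    {p w : Pt} (hwp : w ≠ p) (hpσ : p ∈ σ) (hpτ : p ∈ τ) (hwσ : w ∈ σ) (hwτ : w ∈ τ) :
    False :=
  hne (align hε0 hεπ hreg hex hσ hτ hwp hwσ hpσ hwτ hpτ)

/-- The edge of a second maximal path at a shared vertex is near-perpendicular
to the edges of the first. -/
lemma perp {σ τ : List Pt} (hσ : IsMaximalStraight ε G σ) (hτ : IsMaximalStraight ε G τ)
    (hne : ¬(σ = τ ∨ σ = τ.reverse)) {p aN u : Pt}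
    (ha : PNbr σ p aN) (hu : PNbr τ p u) :
    |(A2 (toC (u - p)) (toC (aN - p)) - ((π/2 : ℝ) : Real.Angle)).toReal| ≤ ε ∨
    |(A2 (toC (u - p)) (toC (aN - p)) + ((π/2 : ℝ) : Real.Angle)).toReal| ≤ ε := by
  have hπ := Real.pi_pos
  have hndσ := nodup' hε0 hεπ hreg hex hσ.1
  have hndτ := nodup' hε0 hεπ hreg hex hτ.1
  have huaN : u ≠ aN := by
    intro h
    exact not_shared hε0 hεπ hreg hex hσ hτ hne (pnbr_ne hndσ ha)
      (pnbr_mem ha).2 (pnbr_mem hu).2 (pnbr_mem ha).1 (h ▸ (pnbr_mem hu).1)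
  have eA : s(aN, p) ∈ G.E := by rw [Sym2.eq_swap]; exact pnbr_edge hσ.1 ha
  have eU : s(u, p) ∈ G.E := by rw [Sym2.eq_swap]; exact pnbr_edge hτ.1 hu
  have hga := hreg.2 u p aN eU eA huaN
  have hUne : toC (u - p) ≠ 0 := pnbr_vec_ne hεπ hreg hτ.1 hu
  have hAne : toC (aN - p) ≠ 0 := pnbr_vec_ne hεπ hreg hσ.1 ha
  have hcoe : ((cwAngle (u - p) (aN - p) : ℝ) : Real.Angle)
      = A2 (toC (u - p)) (toC (aN - p)) := cw_coe' hUne hAne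
  rcases ga_cases hε0 hεπ hga with h | h | h
  · left; rwa [hcoe] at h
  · -- the near-π case is impossible
    exfalso
    have hIcc := ga_pi_real hε0 hεπ hga h
    obtain ⟨q, hq, hqp, hside⟩ := ha
    -- interior continuation helper
    have hInterior : ∀ a' : Pt, a' ∈ σ → s(a', p) ∈ G.E →
        cwAngle (a' - p) (aN - p) ∈ Set.Icc (π - ε) (π + ε) → False := by
      intro a' ha'σ hE' hIcc'
      have heq := uc hε0 hεπ hreg eU hE' hAne hIcc hIcc'
      have hu2 : u ∈ σ := heq ▸ ha'σ
      exact not_shared hε0 hεπ hreg hex hσ hτ hne (pnbr_ne hndτ hu)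
        (hqp ▸ nth_mem hq) (pnbr_mem hu).2 hu2 (pnbr_mem hu).1
    rcases hside with ⟨hq1, haN⟩ | ⟨hq1, haN⟩
    · rcases Nat.eq_zero_or_pos q with rfl | hqpos
      · -- head extension
        refine ext_head hε0 hεπ hσ hndσ (u := u) ?_ ?_
        · rwa [hqp]
        · rw [show nth σ 1 = aN from by rw [haN], hqp]
          exact cw_swap_Icc (by linarith) hIcc
      · -- interior, other neighbour a' = nth σ (q-1)
        apply hInterior (nth σ (q - 1)) (nth_mem (by omega))
        · have h2 := edge_mem hσ.1 (show (q - 1) + 1 < σ.length by omega)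
          rw [show q - 1 + 1 = q by omega, hqp] at h2
          exact h2
        · have hpa := hσ.1.2.2.2.1 (q - 1) (by omega)
          rw [pathAngle] at hpa
          rw [show q - 1 + 2 = q + 1 by omega, show q - 1 + 1 = q by omega, hqp, ← haN] at hpa
          exact cw_swap_Icc (by linarith) hpa
    · rcases lt_or_ge (q + 1) σ.length with hqlt | hqge
      · -- interior, other neighbour a' = nth σ (q+1)
        apply hInterior (nth σ (q + 1)) (nth_mem hqlt)
        · have h2 := edge_mem hσ.1 hqlt
          rw [hqp, Sym2.eq_swap] at h2
          exact h2
        · have hpa := hσ.1.2.2.2.1 (q - 1) (by omega)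
          rw [pathAngle] at hpa
          rw [show q - 1 + 2 = q + 1 by omega, show q - 1 + 1 = q by omega, hqp, ← haN] at hpa
          exact hpa
      · -- tail extension: use the reversed path
        have hσr := max_reverse hεπ hσ hndσ
        have hrl : σ.reverse.length = σ.length := by simp
        have hr0 : nth σ.reverse 0 = p := by
          rw [nth_reverse σ 0 (by omega), show σ.length - 1 - 0 = q by omega, hqp]
        have hr1 : nth σ.reverse 1 = aN := by
          rw [nth_reverse σ 1 (by omega), show σ.length - 1 - 1 = q - 1 by omega, ← haN]
        refine ext_head hε0 hεπ hσr (by simpa using hndσ) (u := u) ?_ ?_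
        · rwa [hr0]
        · rw [hr0, hr1]
          exact cw_swap_Icc (by linarith) hIcc
  · right; rwa [hcoe] at h

end Perp

end OSD

namespace OSD

/-! ### Endgame geometry -/

lemma coe_neg_two_pi : ((-(2*π) : ℝ) : Real.Angle) = 0 := by
  rw [Real.Angle.coe_neg, Real.Angle.coe_two_pi, neg_zero]

lemma abs_toReal_half {t : ℝ}
    (h : t = π/2 ∨ t = -(π/2) ∨ t = 3*π/2 ∨ t = -(3*π/2)) :
    |((t : ℝ) : Real.Angle).toReal| = π/2 := by
  have hπ := Real.pi_pos
  rcases h with rfl | rfl | rfl | rfl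
  · rw [abs_toReal_coe_eq (by rw [abs_of_nonneg] <;> linarith)]
    rw [abs_of_nonneg] <;> linarith
  · rw [abs_toReal_coe_eq (by rw [abs_of_nonpos] <;> linarith)]
    rw [abs_of_nonpos] <;> linarith
  · have he : ((3*π/2 : ℝ) : Real.Angle) = ((-(π/2) : ℝ) : Real.Angle) :=
      Real.Angle.angle_eq_iff_two_pi_dvd_sub.2 ⟨1, by push_cast; ring⟩
    rw [he, abs_toReal_coe_eq (by rw [abs_of_nonpos] <;> linarith)]
    rw [abs_of_nonpos] <;> linarith
  · have he : ((-(3*π/2) : ℝ) : Real.Angle) = (((π/2) : ℝ) : Real.Angle) :=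
      Real.Angle.angle_eq_iff_two_pi_dvd_sub.2 ⟨-1, by push_cast; ring⟩
    rw [he, abs_toReal_coe_eq (by rw [abs_of_nonneg] <;> linarith)]
    rw [abs_of_nonneg] <;> linarith

/-- The final planar contradiction: two "orthogonal" paths leaving a base path at
distinct points and meeting at a common point. -/
lemma endgame {ε Eγ E₁ E₂ : ℝ} (hε0 : 0 < ε) (hεπ : ε < π/6)
    (hEγ0 : 0 ≤ Eγ) (hE10 : 0 ≤ E₁) (hE20 : 0 ≤ E₂)
    (hEγ : Eγ < π/6 - ε) (hE1 : E₁ < π/6 - ε) (hE2 : E₂ < π/6 - ε)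
    {f₁ f₂ g₁ g₂ h₁ h₂ w₁ w₂ v : ℂ}
    (hg₁ : g₁ ≠ 0) (hf₂ : f₂ ≠ 0)
    (hh₁ : h₁ ≠ 0) (hh₂ : h₂ ≠ 0) (hw₁ : w₁ ≠ 0) (hw₂ : w₂ ≠ 0)
    (hv : v = w₁ - w₂)
    {s₁ s₂ : ℝ} (hs₁ : s₁ = π/2 ∨ s₁ = -(π/2)) (hs₂ : s₂ = π/2 ∨ s₂ = -(π/2))
    (hφ₁ : |(A2 g₁ f₁ - ((s₁ : ℝ) : Real.Angle)).toReal| ≤ ε)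
    (hφ₂ : |(A2 g₂ f₂ - ((s₂ : ℝ) : Real.Angle)).toReal| ≤ ε)
    (hG1 : |(A2 v f₁).toReal| ≤ Eγ)
    (hG3 : |(A2 (-f₂) f₁).toReal| ≤ Eγ)
    (hH1 : |(A2 w₁ g₁).toReal| ≤ E₁)
    (hH3 : |(A2 (-h₁) g₁).toReal| ≤ E₁)
    (hK1 : |(A2 w₂ g₂).toReal| ≤ E₂)
    (hK3 : |(A2 (-h₂) g₂).toReal| ≤ E₂)
    (hGAL : π/2 - ε ≤ |(A2 h₁ h₂).toReal|) : False := by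
  have hπ := Real.pi_pos
  set S₁ : Real.Angle := ((s₁ : ℝ) : Real.Angle) with hS₁
  set S₂ : Real.Angle := ((s₂ : ℝ) : Real.Angle) with hS₂
  by_cases hss : s₁ = s₂
  · -- opposite-side case: cone argument
    subst hss
    have id_opp : A2 (-w₂) g₁ = A2 w₂ g₂ + (A2 g₂ f₂ - S₁) + (A2 (-f₂) f₁)
        + (-(A2 g₁ f₁ - S₁)) := by
      rw [A2_neg_left hw₂, A2_neg_left hf₂]
      simp only [A2]
      abel
    have hOw₂ : |(A2 (-w₂) g₁).toReal| ≤ E₂ + Eγ + 2*ε := by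
      rw [id_opp]
      have t1 := angle_add_abs (A2 w₂ g₂ + (A2 g₂ f₂ - S₁) + A2 (-f₂) f₁) (-(A2 g₁ f₁ - S₁))
      have t2 := angle_add_abs (A2 w₂ g₂ + (A2 g₂ f₂ - S₁)) (A2 (-f₂) f₁)
      have t3 := angle_add_abs (A2 w₂ g₂) (A2 g₂ f₂ - S₁)
      rw [angle_neg_abs] at t1
      linarith
    set c₀ := max E₁ (E₂ + Eγ + 2*ε) with hc₀
    have hc₀0 : 0 ≤ c₀ := le_trans hE10 (le_max_left _ _)
    have hc₀lt : c₀ < π/2 := by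
      apply max_lt <;> [linarith; linarith]
    have hcone := cone_add hg₁ hw₁ (neg_ne_zero.2 hw₂) hc₀0 hc₀lt
      (le_trans hH1 (le_max_left _ _)) (le_trans hOw₂ (le_max_right _ _))
    have hvsum : w₁ + -w₂ = v := by rw [hv]; ring
    rw [hvsum] at hcone
    have id_vg : A2 v g₁ + S₁ = A2 v f₁ - (A2 g₁ f₁ - S₁) := by
      simp only [A2]; abel
    have hup : |(A2 v g₁ + S₁).toReal| ≤ Eγ + ε := by
      rw [id_vg, sub_eq_add_neg]
      have t1 := angle_add_abs (A2 v f₁) (-(A2 g₁ f₁ - S₁))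
      rw [angle_neg_abs] at t1
      linarith
    have hS₁abs : |S₁.toReal| = π/2 := by
      rw [hS₁]
      apply abs_toReal_half
      rcases hs₁ with h | h
      · left; exact h
      · right; left; exact h
    have hrev := angle_rev_tri S₁ (A2 v g₁)
    rw [add_comm] at hrev
    have := hcone.2
    rw [hS₁abs] at hrev
    have hEE : Eγ < π/6 - ε := hEγ
    -- π/2 - |A2 v g₁| ≤ |A2 v g₁ + S₁| ≤ Eγ + ε, |A2 v g₁| ≤ c₀ < π/3
    have hc3 : c₀ < π/3 := by
      apply max_lt <;> linarith
    linarith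
  · -- same-side case: the two paths meet at the far point with a small angle
    have hs12 : s₂ = -s₁ := by
      rcases hs₁ with rfl | rfl <;> rcases hs₂ with rfl | rfl <;> simp_all <;> linarith
    have hconst : S₂ - S₁ - ((π : ℝ) : Real.Angle) = 0 := by
      rw [hS₁, hS₂, ← Real.Angle.coe_sub, ← Real.Angle.coe_sub, hs12]
      rcases hs₁ with rfl | rfl
      · rw [show -(π/2) - π/2 - π = -(2*π) by ring, coe_neg_two_pi]
      · rw [show - -(π/2) - -(π/2) - π = (0:ℝ) by ring, Real.Angle.coe_zero]
    have id_same : A2 g₂ g₁ = (A2 g₂ f₂ - S₂) + (-(A2 g₁ f₁ - S₁)) + (A2 (-f₂) f₁)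
        + (S₂ - S₁ - ((π : ℝ) : Real.Angle)) := by
      rw [A2_neg_left hf₂]
      simp only [A2]
      abel
    rw [hconst, add_zero] at id_same
    have hgg : |(A2 g₂ g₁).toReal| ≤ 2*ε + Eγ := by
      rw [id_same]
      have t1 := angle_add_abs ((A2 g₂ f₂ - S₂) + (-(A2 g₁ f₁ - S₁))) (A2 (-f₂) f₁)
      have t2 := angle_add_abs (A2 g₂ f₂ - S₂) (-(A2 g₁ f₁ - S₁))
      rw [angle_neg_abs] at t2
      linarith
    have id_h : A2 h₁ h₂ = (A2 (-h₁) g₁) + (-(A2 g₂ g₁)) + (-(A2 (-h₂) g₂)) := by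
      have e1 : A2 h₁ h₂ = A2 (-h₁) (-h₂) := (A2_neg_neg hh₁ hh₂).symm
      rw [e1]
      simp only [A2]
      abel
    have hfin : |(A2 h₁ h₂).toReal| ≤ E₁ + (2*ε + Eγ) + E₂ := by
      rw [id_h]
      have t1 := angle_add_abs (A2 (-h₁) g₁ + (-(A2 g₂ g₁))) (-(A2 (-h₂) g₂))
      have t2 := angle_add_abs (A2 (-h₁) g₁) (-(A2 g₂ g₁))
      rw [angle_neg_abs] at t1 t2
      linarith
    linarith

/-- Three pairwise distinct maximal strata cannot pass through a single vertex. -/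
lemma triple_angles {ε : ℝ} (hε0 : 0 < ε) (hεπ : ε < π/6)
    {A B C : Real.Angle} {sA sB sC : ℝ}
    (hsA : sA = π/2 ∨ sA = -(π/2)) (hsB : sB = π/2 ∨ sB = -(π/2))
    (hsC : sC = π/2 ∨ sC = -(π/2))
    (hA : |(A - ((sA : ℝ) : Real.Angle)).toReal| ≤ ε)
    (hB : |(B - ((sB : ℝ) : Real.Angle)).toReal| ≤ ε)
    (hC : |(C - ((sC : ℝ) : Real.Angle)).toReal| ≤ ε)
    (hsum : A + C - B = 0) : False := by
  have hπ := Real.pi_pos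
  have hid : ((sA + sC - sB : ℝ) : Real.Angle)
      = -((A - ((sA : ℝ) : Real.Angle)) + (C - ((sC : ℝ) : Real.Angle))
          - (B - ((sB : ℝ) : Real.Angle))) := by
    rw [Real.Angle.coe_sub, Real.Angle.coe_add]
    rw [show (A - ((sA : ℝ) : Real.Angle)) + (C - ((sC : ℝ) : Real.Angle))
          - (B - ((sB : ℝ) : Real.Angle))
        = (A + C - B) - (((sA : ℝ) : Real.Angle) + ((sC : ℝ) : Real.Angle)
          - ((sB : ℝ) : Real.Angle)) by abel, hsum]
    abel
  have hval : sA + sC - sB = π/2 ∨ sA + sC - sB = -(π/2)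
      ∨ sA + sC - sB = 3*π/2 ∨ sA + sC - sB = -(3*π/2) := by
    rcases hsA with rfl | rfl <;> rcases hsB with rfl | rfl <;> rcases hsC with rfl | rfl <;>
      [(left; ring); (right; left; ring); (right; right; left; ring); (left; ring);
       (right; left; ring); (right; right; right; ring); (left; ring); (right; left; ring)]
  have habs := abs_toReal_half hval
  rw [hid] at habs
  rw [angle_neg_abs] at habs
  have t1 := angle_add_abs ((A - ((sA : ℝ) : Real.Angle)) + (C - ((sC : ℝ) : Real.Angle)))
    (-(B - ((sB : ℝ) : Real.Angle)))
  have t2 := angle_add_abs (A - ((sA : ℝ) : Real.Angle)) (C - ((sC : ℝ) : Real.Angle))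
  rw [angle_neg_abs] at t1
  rw [show (A - ((sA : ℝ) : Real.Angle)) + (C - ((sC : ℝ) : Real.Angle))
      - (B - ((sB : ℝ) : Real.Angle))
      = (A - ((sA : ℝ) : Real.Angle)) + (C - ((sC : ℝ) : Real.Angle))
        + -(B - ((sB : ℝ) : Real.Angle)) by abel] at habs
  linarith

end OSD

namespace OSD

section Kills

variable {ε : ℝ} {G : BondGraph}
  (hε0 : 0 < ε) (hεπ : ε < π / 6) (hreg : EpsRegular ε G)
  (hex : ∀ γ : List Pt, IsStraightPath ε G γ → thetaEx γ < π / 6 - ε)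

lemma mem_nth {γ : List Pt} {x : Pt} (h : x ∈ γ) : ∃ q, q < γ.length ∧ nth γ q = x := by
  obtain ⟨q, hq, e⟩ := List.mem_iff_getElem.1 h
  exact ⟨q, hq, by rw [nth_eq_getElem _ _ hq]; exact e⟩

include hε0 hεπ hreg hex

lemma vertex_dichotomy {σ : List Pt} (hσ : IsMaximalStraight ε G σ) {y : Pt} (hy : y ∈ σ) :
    (∃ b c : Pt, b ≠ c ∧ PNbr σ y b ∧ PNbr σ y c) ∨
    (∃ b : Pt, PNbr σ y b ∧ ∀ u : Pt, s(u, y) ∈ G.E →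
        cwAngle (b - y) (u - y) ∈ Set.Icc (π - ε) (π + ε) → False) := by
  have hndσ := nodup' hε0 hεπ hreg hex hσ.1
  have hlen := hσ.1.1
  obtain ⟨q, hq, rfl⟩ := mem_nth hy
  by_cases h1 : 1 ≤ q ∧ q + 1 < σ.length
  · left
    refine ⟨nth σ (q + 1), nth σ (q - 1), ?_,
      ⟨q, hq, rfl, Or.inl ⟨h1.2, rfl⟩⟩, ⟨q, hq, rfl, Or.inr ⟨h1.1, rfl⟩⟩⟩
    intro he
    have := nth_inj hndσ h1.2 (by omega) he
    omega
  · right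
    rcases Nat.eq_zero_or_pos q with rfl | hqpos
    · refine ⟨nth σ 1, ⟨0, hq, rfl, Or.inl ⟨by omega, rfl⟩⟩, fun u hu hang => ?_⟩
      exact ext_head hε0 hεπ hσ hndσ hu hang
    · have hup : q + 1 = σ.length := by omega
      have hσr := max_reverse hεπ hσ hndσ
      have hrl : σ.reverse.length = σ.length := by simp
      have hr0 : nth σ.reverse 0 = nth σ q := by
        rw [nth_reverse σ 0 (by omega)]
        exact congrArg (nth σ) (by omega)
      have hr1 : nth σ.reverse 1 = nth σ (q - 1) := by
        rw [nth_reverse σ 1 (by omega)]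
        exact congrArg (nth σ) (by omega)
      refine ⟨nth σ (q - 1), ⟨q, hq, rfl, Or.inr ⟨by omega, rfl⟩⟩, fun u hu hang => ?_⟩
      refine ext_head hε0 hεπ hσr (by simpa using hndσ) (u := u) ?_ ?_
      · rwa [hr0]
      · rw [hr0, hr1]
        exact hang

omit hε0 hεπ hreg hex

lemma nbhd_finite (G : BondGraph) (p : Pt) : (nbhd G p).Finite :=
  G.finV.subset (fun y hy => G.mem_V _ hy y (Sym2.mem_iff.2 (Or.inr rfl)))

lemma pnbr_nbhd {γ : List Pt} {p u : Pt} (hγ : IsStraightPath ε G γ) (h : PNbr γ p u) :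
    u ∈ nbhd G p := pnbr_edge hγ h

include hε0 hεπ hreg hex

lemma deg0_no_path {y : Pt} (h0 : deg G y = 0) {γ : List Pt}
    (hγ : IsStraightPath ε G γ) (hy : y ∈ γ) : False := by
  obtain ⟨u, hu⟩ := pnbr_exists hγ hy
  have h1 : nbhd G y = ∅ := (Set.ncard_eq_zero (nbhd_finite G y)).1 h0
  have := pnbr_nbhd hγ hu
  rw [h1] at this
  exact this

lemma deg1_kill {y : Pt} (h1 : deg G y = 1) {σ τ : List Pt}
    (hσ : IsMaximalStraight ε G σ) (hτ : IsMaximalStraight ε G τ)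
    (hne : ¬(σ = τ ∨ σ = τ.reverse)) (hyσ : y ∈ σ) (hyτ : y ∈ τ) : False := by
  obtain ⟨a, ha⟩ := Set.ncard_eq_one.1 h1
  obtain ⟨u, hu⟩ := pnbr_exists hσ.1 hyσ
  obtain ⟨w, hw⟩ := pnbr_exists hτ.1 hyτ
  have hu1 : u = a := by have := pnbr_nbhd hσ.1 hu; rw [ha] at this; exact this
  have hw1 : w = a := by have := pnbr_nbhd hτ.1 hw; rw [ha] at this; exact this
  exact not_shared hε0 hεπ hreg hex hσ hτ hne
    (pnbr_ne (nodup' hε0 hεπ hreg hex hσ.1) hu) (pnbr_mem hu).2 (pnbr_mem hw).2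
    (pnbr_mem hu).1 (by rw [hu1, ← hw1]; exact (pnbr_mem hw).1)

lemma v2pi_kill {y : Pt} (hv : V2pi ε G y) {σ τ : List Pt}
    (hσ : IsMaximalStraight ε G σ) (hτ : IsMaximalStraight ε G τ)
    (hne : ¬(σ = τ ∨ σ = τ.reverse)) (hyσ : y ∈ σ) (hyτ : y ∈ τ) : False := by
  obtain ⟨_, x₁, x₂, hx12, hnb, hang⟩ := hv
  have hπ := Real.pi_pos
  -- a path through y which has two neighbours at y shares a neighbour with the other path
  have hshare : ∀ w w' : Pt, PNbr σ y w → PNbr τ y w' → w ≠ w' := by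
    intro w w' hw hw' he
    exact not_shared hε0 hεπ hreg hex hσ hτ hne
      (pnbr_ne (nodup' hε0 hεπ hreg hex hσ.1) hw) (pnbr_mem hw).2 (pnbr_mem hw').2
      (pnbr_mem hw).1 (by rw [he]; exact (pnbr_mem hw').1)
  rcases vertex_dichotomy hε0 hεπ hreg hex hσ hyσ with ⟨b, c, hbc, hb, hc⟩ | ⟨b, hb, hbext⟩
  · -- σ has both neighbours; τ's neighbour collides
    obtain ⟨w, hw⟩ := pnbr_exists hτ.1 hyτ
    have hbm : b ∈ nbhd G y := pnbr_nbhd hσ.1 hb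
    have hcm : c ∈ nbhd G y := pnbr_nbhd hσ.1 hc
    have hwm : w ∈ nbhd G y := pnbr_nbhd hτ.1 hw
    rw [hnb] at hbm hcm hwm
    have h1 := hshare b w hb hw
    have h2 := hshare c w hc hw
    simp only [Set.mem_insert_iff, Set.mem_singleton_iff] at hbm hcm hwm
    rcases hbm with rfl | rfl <;> rcases hcm with rfl | rfl <;> rcases hwm with h3 | h3 <;>
      simp_all
  · rcases vertex_dichotomy hε0 hεπ hreg hex hτ hyτ with ⟨b', c', hbc', hb', hc'⟩ | ⟨b', hb', _⟩
    · -- τ has both neighbours; σ's collides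
      have hbm : b' ∈ nbhd G y := pnbr_nbhd hτ.1 hb'
      have hcm : c' ∈ nbhd G y := pnbr_nbhd hτ.1 hc'
      have hwm : b ∈ nbhd G y := pnbr_nbhd hσ.1 hb
      rw [hnb] at hbm hcm hwm
      have h1 := hshare b b' hb hb'
      have h2 := hshare b c' hb hc'
      simp only [Set.mem_insert_iff, Set.mem_singleton_iff] at hbm hcm hwm
      rcases hbm with rfl | rfl <;> rcases hcm with rfl | rfl <;> rcases hwm with h3 | h3 <;>
        simp_all
    · -- both endpoints: straight continuation, contradicting maximality of σ
      have hbm : b ∈ nbhd G y := pnbr_nbhd hσ.1 hb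
      have hbm' : b' ∈ nbhd G y := pnbr_nbhd hτ.1 hb'
      have hbb' := hshare b b' hb hb'
      rw [hnb] at hbm hbm'
      simp only [Set.mem_insert_iff, Set.mem_singleton_iff] at hbm hbm'
      have hE : s(b', y) ∈ G.E := by
        have : b' ∈ nbhd G y := pnbr_nbhd hτ.1 hb'
        rw [Sym2.eq_swap]
        exact this
      apply hbext b' hE
      rcases hbm with rfl | rfl <;> rcases hbm' with h4 | h4
      · exact absurd h4.symm hbb'
      · rw [h4]; exact hang
      · rw [h4]; exact cw_swap_Icc (by linarith) hang
      · exact absurd h4.symm hbb'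

/-- `perp`, packaged with a sign. -/
lemma perp' {σ τ : List Pt} (hσ : IsMaximalStraight ε G σ) (hτ : IsMaximalStraight ε G τ)
    (hne : ¬(σ = τ ∨ σ = τ.reverse)) {p aN u : Pt}
    (ha : PNbr σ p aN) (hu : PNbr τ p u) :
    ∃ s : ℝ, (s = π/2 ∨ s = -(π/2)) ∧
      |(A2 (toC (u - p)) (toC (aN - p)) - ((s : ℝ) : Real.Angle)).toReal| ≤ ε := by
  rcases perp hε0 hεπ hreg hex hσ hτ hne ha hu with h | h
  · exact ⟨π/2, Or.inl rfl, h⟩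
  · refine ⟨-(π/2), Or.inr rfl, ?_⟩
    rw [Real.Angle.coe_neg, sub_neg_eq_add]
    exact h

/-- Three pairwise distinct maximal strata cannot share a vertex. -/
lemma triple_kill {σ τ ρ : List Pt}
    (hσ : IsMaximalStraight ε G σ) (hτ : IsMaximalStraight ε G τ)
    (hρ : IsMaximalStraight ε G ρ)
    (hστ : ¬(σ = τ ∨ σ = τ.reverse)) (hσρ : ¬(σ = ρ ∨ σ = ρ.reverse))
    (hτρ : ¬(τ = ρ ∨ τ = ρ.reverse))
    {p : Pt} (hpσ : p ∈ σ) (hpτ : p ∈ τ) (hpρ : p ∈ ρ) : False := by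
  obtain ⟨a, haP⟩ := pnbr_exists hσ.1 hpσ
  obtain ⟨u, huP⟩ := pnbr_exists hτ.1 hpτ
  obtain ⟨v, hvP⟩ := pnbr_exists hρ.1 hpρ
  obtain ⟨sA, hsA, hA⟩ := perp' hε0 hεπ hreg hex hσ hτ hστ haP huP
  obtain ⟨sB, hsB, hB⟩ := perp' hε0 hεπ hreg hex hσ hρ hσρ haP hvP
  obtain ⟨sC, hsC, hC⟩ := perp' hε0 hεπ hreg hex hτ hρ hτρ huP hvP
  refine triple_angles hε0 hεπ hsA hsB hsC hA hB hC ?_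
  simp only [A2]
  abel

/-- The main planar configuration is impossible. -/
lemma main_geom {γ γ₁ γ₂ : List Pt}
    (hγ : IsMaximalStraight ε G γ) (hγ₁ : IsMaximalStraight ε G γ₁)
    (hγ₂ : IsMaximalStraight ε G γ₂)
    (h01 : ¬(γ = γ₁ ∨ γ = γ₁.reverse)) (h02 : ¬(γ = γ₂ ∨ γ = γ₂.reverse))
    (h12 : ¬(γ₁ = γ₂ ∨ γ₁ = γ₂.reverse))
    {p₁ p₂ x : Pt} (hp12 : p₁ ≠ p₂) (hxp₁ : x ≠ p₁) (hxp₂ : x ≠ p₂)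
    (hp₁γ : p₁ ∈ γ) (hp₂γ : p₂ ∈ γ) (hp₁1 : p₁ ∈ γ₁) (hx1 : x ∈ γ₁)
    (hp₂2 : p₂ ∈ γ₂) (hx2 : x ∈ γ₂) : False := by
  have hπ := Real.pi_pos
  have hnd₁ := nodup' hε0 hεπ hreg hex hγ₁.1
  obtain ⟨q₁, hq₁, e₁⟩ := mem_nth hp₁γ
  obtain ⟨q₂, hq₂, e₂⟩ := mem_nth hp₂γ
  obtain ⟨i₁, hi₁, ei₁⟩ := mem_nth hp₁1
  obtain ⟨j₁, hj₁, ej₁⟩ := mem_nth hx1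
  obtain ⟨i₂, hi₂, ei₂⟩ := mem_nth hp₂2
  obtain ⟨j₂, hj₂, ej₂⟩ := mem_nth hx2
  have hq12 : q₁ ≠ q₂ := fun h => hp12 (by rw [← e₁, ← e₂, h])
  have hij₁ : i₁ ≠ j₁ := fun h => hxp₁ (by rw [← ei₁, ← ej₁, h])
  have hij₂ : i₂ ≠ j₂ := fun h => hxp₂ (by rw [← ei₂, ← ej₂, h])
  obtain ⟨a₁, a₂, hPa₁, hPa₂, hvne, hG1, _, hG3⟩ :=
    two_pt_data hεπ hreg hγ.1 (ex_half hε0 hεπ hreg hex hγ.1) hq₁ hq₂ hq12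
  obtain ⟨u₁, m₁, hPu₁, hPm₁, hw₁ne, hH1, hH2, hH3⟩ :=
    two_pt_data hεπ hreg hγ₁.1 (ex_half hε0 hεπ hreg hex hγ₁.1) hi₁ hj₁ hij₁
  obtain ⟨u₂, m₂, hPu₂, hPm₂, hw₂ne, hK1, hK2, hK3⟩ :=
    two_pt_data hεπ hreg hγ₂.1 (ex_half hε0 hεπ hreg hex hγ₂.1) hi₂ hj₂ hij₂
  rw [e₁] at hPa₁
  rw [e₂] at hPa₂
  rw [e₁, e₂] at hvne hG1 hG3
  rw [ei₁] at hPu₁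
  rw [ej₁] at hPm₁
  rw [ei₁, ej₁] at hw₁ne hH1 hH3
  rw [ei₂] at hPu₂
  rw [ej₂] at hPm₂
  rw [ei₂, ej₂] at hw₂ne hK1 hK3
  -- perpendicular data
  obtain ⟨s₁, hs₁, hφ₁⟩ := perp' hε0 hεπ hreg hex hγ hγ₁ h01 hPa₁ hPu₁
  obtain ⟨s₂, hs₂, hφ₂⟩ := perp' hε0 hεπ hreg hex hγ hγ₂ h02 hPa₂ hPu₂
  -- the two paths meet at x with a good angle
  have hm12 : m₁ ≠ m₂ := by
    intro h
    exact not_shared hε0 hεπ hreg hex hγ₁ hγ₂ h12 (pnbr_ne hnd₁ hPm₁) hx1 hx2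
      (pnbr_mem hPm₁).1 (by rw [h]; exact (pnbr_mem hPm₂).1)
  have hEm₁ : s(m₁, x) ∈ G.E := by rw [Sym2.eq_swap]; exact pnbr_edge hγ₁.1 hPm₁
  have hEm₂ : s(m₂, x) ∈ G.E := by rw [Sym2.eq_swap]; exact pnbr_edge hγ₂.1 hPm₂
  have hga := hreg.2 m₁ x m₂ hEm₁ hEm₂ hm12
  have hh₁ne : toC (m₁ - x) ≠ 0 := pnbr_vec_ne hεπ hreg hγ₁.1 hPm₁
  have hh₂ne : toC (m₂ - x) ≠ 0 := pnbr_vec_ne hεπ hreg hγ₂.1 hPm₂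
  have hGAL : π/2 - ε ≤ |(A2 (toC (m₁ - x)) (toC (m₂ - x))).toReal| := by
    have h := ga_lower hε0 hεπ hga
    rwa [cw_coe' hh₁ne hh₂ne] at h
  -- feed the endgame
  refine endgame hε0 hεπ (thetaEx_nonneg γ) (thetaEx_nonneg γ₁) (thetaEx_nonneg γ₂)
    (hex γ hγ.1) (hex γ₁ hγ₁.1) (hex γ₂ hγ₂.1)
    (pnbr_vec_ne hεπ hreg hγ₁.1 hPu₁) (pnbr_vec_ne hεπ hreg hγ.1 hPa₂)
    hh₁ne hh₂ne hw₁ne hw₂ne ?_ hs₁ hs₂ hφ₁ hφ₂ hG1 hG3 hH1 hH3 hK1 hK3 hGAL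
  rw [toC_sub, toC_sub, toC_sub]
  ring

end Kills

end OSD

namespace OSD

/-! ### Strata plumbing -/

lemma quot_eq_iff {γ τ : List Pt} :
    (Quotient.mk revSetoid γ : Stratum) = Quotient.mk revSetoid τ ↔ (γ = τ ∨ γ = τ.reverse) :=
  ⟨fun h => Quotient.exact h, fun h => Quotient.sound h⟩

lemma verts_mem {γ : List Pt} {x : Pt} :
    x ∈ Stratum.verts (Quotient.mk revSetoid γ) ↔ x ∈ γ := Iff.rfl

lemma strata_classify {ε : ℝ} {G : BondGraph} {t : Stratum × Fin 2}
    (ht : t ∈ strataSet ε G) :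
    (∃ γ, IsMaximalStraight ε G γ ∧ t = (Quotient.mk revSetoid γ, 0)) ∨
    (∃ y, t.1 = Quotient.mk revSetoid [y] ∧
      (deg G y = 0 ∨ ((deg G y = 1 ∨ V2pi ε G y) ∧ t.2 = 0))) := by
  rcases ht with (h | h) | h
  · obtain ⟨γ, hγ, ht⟩ := h
    exact Or.inl ⟨γ, hγ, ht⟩
  · obtain ⟨y, _, hd, ht | ht⟩ := h <;>
      exact Or.inr ⟨y, by rw [ht], Or.inl hd⟩
  · obtain ⟨y, _, hd, ht⟩ := h
    exact Or.inr ⟨y, by rw [ht], Or.inr ⟨hd, by rw [ht]⟩⟩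

section Main

variable {ε : ℝ} {G : BondGraph}
  (hε0 : 0 < ε) (hεπ : ε < π / 6) (hreg : EpsRegular ε G)
  (hex : ∀ γ : List Pt, IsStraightPath ε G γ → thetaEx γ < π / 6 - ε)

include hε0 hεπ hreg hex

/-- Degenerate-stratum case of the main theorem. -/
lemma deg_case {s t t' : Stratum × Fin 2}
    (hs : s ∈ strataSet ε G) (ht' : t' ∈ strataSet ε G)
    (hts : t ≠ s) (ht's : t' ≠ s) (htt' : t ≠ t')
    {y : Pt} (hty : t.1 = Quotient.mk revSetoid [y])
    (hdeg : deg G y = 0 ∨ ((deg G y = 1 ∨ V2pi ε G y) ∧ t.2 = 0))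
    (hys : y ∈ Stratum.verts s.1) (hyt' : y ∈ Stratum.verts t'.1) : False := by
  have hclass : ∀ r : Stratum × Fin 2, r ∈ strataSet ε G → y ∈ Stratum.verts r.1 →
      (∃ γ, IsMaximalStraight ε G γ ∧ r = (Quotient.mk revSetoid γ, 0) ∧ y ∈ γ) ∨
      (r.1 = Quotient.mk revSetoid [y] ∧
        (deg G y = 0 ∨ ((deg G y = 1 ∨ V2pi ε G y) ∧ r.2 = 0))) := by
    intro r hr hyr
    rcases strata_classify hr with ⟨γ, hγ, hrq⟩ | ⟨y', h1, h2⟩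
    · left
      refine ⟨γ, hγ, hrq, ?_⟩
      rw [hrq] at hyr
      exact verts_mem.1 hyr
    · right
      rw [h1] at hyr
      have he : y = y' := by simpa using verts_mem.1 hyr
      rw [← he] at h1 h2
      exact ⟨h1, h2⟩
  rcases hdeg with h0 | ⟨h1, htag⟩
  · -- deg 0 : every stratum through y is degenerate; three distinct ones impossible
    have hforce : ∀ r : Stratum × Fin 2, r ∈ strataSet ε G → y ∈ Stratum.verts r.1 →
        r.1 = Quotient.mk revSetoid [y] := by
      intro r hr hyr
      rcases hclass r hr hyr with ⟨γ, hγ, _, hyγ⟩ | ⟨h2, _⟩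
      · exact absurd (deg0_no_path hε0 hεπ hreg hex h0 hγ.1 hyγ) not_false
      · exact h2
    have e1 := hforce s hs hys
    have e2 := hforce t' ht' hyt'
    have g1 : t.2 ≠ s.2 := fun h => hts (Prod.ext_iff.2 ⟨hty.trans e1.symm, h⟩)
    have g2 : t.2 ≠ t'.2 := fun h => htt' (Prod.ext_iff.2 ⟨hty.trans e2.symm, h⟩)
    have g3 : t'.2 ≠ s.2 := fun h => ht's (Prod.ext_iff.2 ⟨e2.trans e1.symm, h⟩)
    have v1 := Fin.val_ne_of_ne g1
    have v2 := Fin.val_ne_of_ne g2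
    have v3 := Fin.val_ne_of_ne g3
    have w1 := s.2.isLt
    have w2 := t.2.isLt
    have w3 := t'.2.isLt
    omega
  · -- deg 1 or V2pi : `t` is the unique degenerate stratum, `s`, `t'` are paths
    have hforce : ∀ r : Stratum × Fin 2, r ∈ strataSet ε G → y ∈ Stratum.verts r.1 → r ≠ t →
        ∃ γ, IsMaximalStraight ε G γ ∧ r = (Quotient.mk revSetoid γ, 0) ∧ y ∈ γ := by
      intro r hr hyr hrt
      rcases hclass r hr hyr with h | ⟨h2, h3⟩
      · exact h
      · exfalso
        rcases h3 with h0' | ⟨_, htag'⟩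
        · rcases h1 with h1 | h1
          · omega
          · obtain ⟨_, x₁, x₂, hx12, hnb, _⟩ := h1
            have : deg G y = 2 := by
              unfold deg
              rw [hnb]
              exact Set.ncard_pair hx12
            omega
        · exact hrt (Prod.ext_iff.2 ⟨h2.trans hty.symm, htag'.trans htag.symm⟩)
    obtain ⟨γs, hγs, hseq, hyγs⟩ := hforce s hs hys (Ne.symm hts)
    obtain ⟨γ', hγ', ht'eq, hyγ'⟩ := hforce t' ht' hyt' (Ne.symm htt')
    have hne : ¬(γs = γ' ∨ γs = γ'.reverse) := by
      intro h
      apply ht's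
      rw [ht'eq, hseq]
      exact Prod.ext_iff.2 ⟨(quot_eq_iff.2 h).symm, rfl⟩
    rcases h1 with h1 | h1
    · exact deg1_kill hε0 hεπ hreg hex h1 hγs hγ' hne hyγs hyγ'
    · exact v2pi_kill hε0 hεπ hreg hex h1 hγs hγ' hne hyγs hyγ'

/-- The main theorem, in terms of the toolkit. -/
lemma main_thm :
    ∀ s ∈ strataSet ε G, ∀ s₁ ∈ orthStrata ε G s, ∀ s₂ ∈ orthStrata ε G s,
      s₁ ≠ s₂ → Stratum.verts s₁.1 ∩ Stratum.verts s₂.1 = ∅ := by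
  intro s hs s₁ hs₁ s₂ hs₂ hne12
  by_contra hcon
  obtain ⟨x, hx1, hx2⟩ := Set.nonempty_iff_ne_empty.2 hcon
  obtain ⟨hs₁m, hs₁ne, p₁, hp₁s, hp₁1⟩ := hs₁
  obtain ⟨hs₂m, hs₂ne, p₂, hp₂s, hp₂2⟩ := hs₂
  -- if s₁ is degenerate
  rcases strata_classify hs₁m with ⟨γ₁, hγ₁, hq₁⟩ | ⟨y, hy, hdeg⟩
  swap
  · -- x = y = p₁
    have hxy : x = y := by
      rw [hy] at hx1
      simpa using verts_mem.1 hx1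
    have hp₁y : p₁ = y := by
      rw [hy] at hp₁1
      simpa using verts_mem.1 hp₁1
    exact deg_case hε0 hεπ hreg hex hs hs₂m hs₁ne hs₂ne hne12 hy hdeg
      (hp₁y ▸ hp₁s) (hxy ▸ hx2)
  rcases strata_classify hs₂m with ⟨γ₂, hγ₂, hq₂⟩ | ⟨y, hy, hdeg⟩
  swap
  · have hxy : x = y := by
      rw [hy] at hx2
      simpa using verts_mem.1 hx2
    have hp₂y : p₂ = y := by
      rw [hy] at hp₂2
      simpa using verts_mem.1 hp₂2
    exact deg_case hε0 hεπ hreg hex hs hs₁m hs₂ne hs₁ne (Ne.symm hne12) hy hdeg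
      (hp₂y ▸ hp₂s) (hxy ▸ hx1)
  -- both s₁, s₂ are maximal paths
  rw [hq₁] at hx1 hp₁1
  rw [hq₂] at hx2 hp₂2
  have hxγ₁ : x ∈ γ₁ := verts_mem.1 hx1
  have hxγ₂ : x ∈ γ₂ := verts_mem.1 hx2
  have hp₁γ₁ : p₁ ∈ γ₁ := verts_mem.1 hp₁1
  have hp₂γ₂ : p₂ ∈ γ₂ := verts_mem.1 hp₂2
  have h12 : ¬(γ₁ = γ₂ ∨ γ₁ = γ₂.reverse) := by
    intro h
    apply hne12
    rw [hq₁, hq₂]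
    exact Prod.ext_iff.2 ⟨quot_eq_iff.2 h, rfl⟩
  -- classify s
  rcases strata_classify hs with ⟨γ, hγ, hq⟩ | ⟨y, hy, hdeg⟩
  swap
  · -- s degenerate : p₁ = p₂ = y ∈ γ₁ ∩ γ₂
    have hp₁y : p₁ = y := by
      rw [hy] at hp₁s
      simpa using verts_mem.1 hp₁s
    have hp₂y : p₂ = y := by
      rw [hy] at hp₂s
      simpa using verts_mem.1 hp₂s
    have hyγ₁ : y ∈ γ₁ := hp₁y ▸ hp₁γ₁
    have hyγ₂ : y ∈ γ₂ := hp₂y ▸ hp₂γ₂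
    rcases hdeg with h0 | ⟨h1, _⟩
    · exact deg0_no_path hε0 hεπ hreg hex h0 hγ₁.1 hyγ₁
    rcases h1 with h1 | h1
    · exact deg1_kill hε0 hεπ hreg hex h1 hγ₁ hγ₂ h12 hyγ₁ hyγ₂
    · exact v2pi_kill hε0 hεπ hreg hex h1 hγ₁ hγ₂ h12 hyγ₁ hyγ₂
  -- s maximal
  rw [hq] at hp₁s hp₂s
  have hp₁γ : p₁ ∈ γ := verts_mem.1 hp₁s
  have hp₂γ : p₂ ∈ γ := verts_mem.1 hp₂s
  have h01 : ¬(γ = γ₁ ∨ γ = γ₁.reverse) := by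
    intro h
    apply hs₁ne
    rw [hq₁, hq]
    exact Prod.ext_iff.2 ⟨(quot_eq_iff.2 h).symm, rfl⟩
  have h02 : ¬(γ = γ₂ ∨ γ = γ₂.reverse) := by
    intro h
    apply hs₂ne
    rw [hq₂, hq]
    exact Prod.ext_iff.2 ⟨(quot_eq_iff.2 h).symm, rfl⟩
  by_cases hpp : p₁ = p₂
  · by_cases hxp : x = p₁
    · exact triple_kill hε0 hεπ hreg hex hγ hγ₁ hγ₂ h01 h02 h12
        hp₁γ (show p₁ ∈ γ₁ by rw [← hxp]; exact hxγ₁)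
        (show p₁ ∈ γ₂ by rw [← hxp]; exact hxγ₂)
    · exact not_shared hε0 hεπ hreg hex hγ₁ hγ₂ h12 hxp hp₁γ₁ (hpp ▸ hp₂γ₂) hxγ₁ hxγ₂
  · by_cases hxp₁ : x = p₁
    · exact not_shared hε0 hεπ hreg hex hγ hγ₂ h02 hpp
        hp₂γ hp₂γ₂ hp₁γ (show p₁ ∈ γ₂ by rw [← hxp₁]; exact hxγ₂)
    by_cases hxp₂ : x = p₂
    · exact not_shared hε0 hεπ hreg hex hγ hγ₁ h01 (fun h => hpp h.symm)
        hp₁γ hp₁γ₁ hp₂γ (show p₂ ∈ γ₁ by rw [← hxp₂]; exact hxγ₁)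
    · exact main_geom hε0 hεπ hreg hex hγ hγ₁ hγ₂ h01 h02 h12 hpp hxp₁ hxp₂
        hp₁γ hp₂γ hp₁γ₁ hxγ₁ hp₂γ₂ hxγ₂

end Main

end OSD

/-- **Lemma (small angle excess, (iii)).** If every straight path has angle excess less than
`π/6 − ε`, then any two distinct orthogonal strata of a stratum are disjoint. -/
theorem orth_strata_disjoint (ε : ℝ) (hε0 : 0 < ε) (hε : ε < π / 6)
    (G : BondGraph) (hreg : EpsRegular ε G)
    (hex : ∀ γ : List Pt, IsStraightPath ε G γ → thetaEx γ < π / 6 - ε) :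
    ∀ s ∈ strataSet ε G, ∀ s₁ ∈ orthStrata ε G s, ∀ s₂ ∈ orthStrata ε G s,
      s₁ ≠ s₂ → Stratum.verts s₁.1 ∩ Stratum.verts s₂.1 = ∅ := by
  exact OSD.main_thm hε0 hε hreg hex

end
end
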